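/- arXiv:2403.03189 — 3 statements merged into one kernel-verified Lean document; each statement's English description precedes it below -/
import Mathlib

section
/- Let D be a 2-((sk-s+1)k, k, 1) design with 1 < k and s ≥ 2, and let S = {R₁,…,Rₘ} be a set of pairwise compatible resolutions of D. Then m ≤ (sk-k+1)·s. -/
/-- A Steiner 2-((sk-s+1)k, k, 1) design: point set of size (s·k-s+1)·k,
blocks of size k, every pair of distinct points in exactly one block. -/
structure ArcDesign (α : Type*) [DecidableEq α] where
  s : ℕ
  k : ℕ
  X : Finset α
  B : Finset (Finset α)
  card_X : X.card = (s * k - s + 1) * k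
  blocks_sub : ∀ b ∈ B, b ⊆ X
  blocks_card : ∀ b ∈ B, b.card = k
  pair_balance : ∀ x ∈ X, ∀ y ∈ X, x ≠ y → ∃! b, b ∈ B ∧ x ∈ b ∧ y ∈ b

/-- A parallel class: blocks of the design partitioning the point set. -/
def IsParallelClass {α : Type*} [DecidableEq α] (D : ArcDesign α)
    (C : Finset (Finset α)) : Prop :=
  C ⊆ D.B ∧ (∀ x ∈ D.X, ∃! b, b ∈ C ∧ x ∈ b)

/-- A resolution: a partition of the block collection into parallel classes. -/
def IsResolution {α : Type*} [DecidableEq α] (D : ArcDesign α)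
    (R : Finset (Finset (Finset α))) : Prop :=
  (∀ C ∈ R, IsParallelClass D C) ∧ (∀ b ∈ D.B, ∃! C, C ∈ R ∧ b ∈ C)

/-- Two resolutions are compatible if they share a parallel class `C`, and any
other pair of classes, one from each resolution, has at most one common
block. -/
def Compatible {α : Type*} [DecidableEq α] (D : ArcDesign α)
    (R₁ R₂ : Finset (Finset (Finset α))) : Prop :=
  ∃ C, C ∈ R₁ ∧ C ∈ R₂ ∧
    ∀ C₁ ∈ R₁, ∀ C₂ ∈ R₂, ¬(C₁ = C ∧ C₂ = C) → (C₁ ∩ C₂).card ≤ 1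

set_option linter.unusedVariables false

section Aux
variable {α : Type*} [DecidableEq α] (D : ArcDesign α)

/-- generic: a unique element satisfying p in s means filter has card 1 -/
lemma filter_card_one {γ : Type*} [DecidableEq γ] {s : Finset γ} {p : γ → Prop}
    [DecidablePred p] (h : ∃! x, x ∈ s ∧ p x) : (s.filter p).card = 1 := by
  obtain ⟨x, ⟨hx, hpx⟩, hu⟩ := h
  rw [Finset.card_eq_one]
  refine ⟨x, ?_⟩
  ext y
  simp only [Finset.mem_filter, Finset.mem_singleton]
  constructor
  · rintro ⟨h1, h2⟩; exact hu y ⟨h1, h2⟩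
  · rintro rfl; exact ⟨hx, hpx⟩

/-- two distinct blocks meet in at most one point -/
lemma blocks_inter {e f : Finset α} (he : e ∈ D.B) (hf : f ∈ D.B) (hne : e ≠ f) :
    (e ∩ f).card ≤ 1 := by
  by_contra h
  push_neg at h
  obtain ⟨x, hx, y, hy, hxy⟩ := Finset.one_lt_card.mp h
  simp only [Finset.mem_inter] at hx hy
  have hxX : x ∈ D.X := D.blocks_sub e he hx.1
  have hyX : y ∈ D.X := D.blocks_sub e he hy.1
  obtain ⟨b, _, hu⟩ := D.pair_balance x hxX y hyX hxy
  exact hne ((hu e ⟨he, hx.1, hy.1⟩).trans (hu f ⟨hf, hx.2, hy.2⟩).symm)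

lemma pair_filter_card {x y : α} (hx : x ∈ D.X) (hy : y ∈ D.X) (hxy : x ≠ y) :
    (D.B.filter (fun e => x ∈ e ∧ y ∈ e)).card = 1 :=
  filter_card_one (D.pair_balance x hx y hy hxy)

/-- number of blocks through a point, times (k-1), equals v-1 (in ℕ) -/
lemma point_degree_nat (x : α) (hx : x ∈ D.X) :
    (D.B.filter (fun e => x ∈ e)).card * (D.k - 1) = D.X.card - 1 := by
  classical
  have hdisj : ∀ e ∈ D.B.filter (fun e => x ∈ e), ∀ f ∈ D.B.filter (fun e => x ∈ e),
      e ≠ f → Disjoint (e.erase x) (f.erase x) := by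
    intro e he f hf hne
    simp only [Finset.mem_filter] at he hf
    rw [Finset.disjoint_left]
    intro z hz1 hz2
    have hz1' := Finset.mem_of_mem_erase hz1
    have hz2' := Finset.mem_of_mem_erase hz2
    have hzx : z ≠ x := Finset.ne_of_mem_erase hz1
    have : 1 < (e ∩ f).card := by
      apply Finset.one_lt_card.mpr
      exact ⟨x, Finset.mem_inter.mpr ⟨he.2, hf.2⟩, z, Finset.mem_inter.mpr ⟨hz1', hz2'⟩, hzx.symm⟩
    have := blocks_inter D he.1 hf.1 hne
    omega
  have hunion : (D.B.filter (fun e => x ∈ e)).biUnion (fun e => e.erase x) = D.X.erase x := by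
    ext y
    simp only [Finset.mem_biUnion, Finset.mem_filter, Finset.mem_erase]
    constructor
    · rintro ⟨e, ⟨heB, hxe⟩, hy⟩
      exact ⟨hy.1, D.blocks_sub e heB hy.2⟩
    · rintro ⟨hyx, hyX⟩
      obtain ⟨e, ⟨heB, hxe, hye⟩, _⟩ := D.pair_balance x hx y hyX (Ne.symm hyx)
      exact ⟨e, ⟨heB, hxe⟩, hyx, hye⟩
  have h2 := Finset.card_biUnion hdisj
  rw [hunion, Finset.card_erase_of_mem hx] at h2
  have h3 : ∀ e ∈ D.B.filter (fun e => x ∈ e), (e.erase x).card = D.k - 1 := by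
    intro e he
    simp only [Finset.mem_filter] at he
    rw [Finset.card_erase_of_mem he.2, D.blocks_card e he.1]
  rw [Finset.sum_congr rfl h3, Finset.sum_const, smul_eq_mul] at h2
  omega

end Aux

section Real
variable {α : Type*} [DecidableEq α] (D : ArcDesign α)

noncomputable def n0R (D : ArcDesign α) : ℝ := D.s*D.k - D.s + 1
noncomputable def rR (D : ArcDesign α) : ℝ := D.s*D.k + 1
noncomputable def bR (D : ArcDesign α) : ℝ := rR D * n0R D

lemma kR_two (hk : 1 < D.k) : (2:ℝ) ≤ D.k := by exact_mod_cast hk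
lemma sR_two (hs : 2 ≤ D.s) : (2:ℝ) ≤ D.s := by exact_mod_cast hs

lemma n0R_pos (hk : 1 < D.k) (hs : 2 ≤ D.s) : 0 < n0R D := by
  have h1 := kR_two D hk; have h2 := sR_two D hs
  unfold n0R; nlinarith

lemma rR_pos (hk : 1 < D.k) (hs : 2 ≤ D.s) : 0 < rR D := by
  have h1 := kR_two D hk; have h2 := sR_two D hs
  unfold rR; nlinarith

lemma bR_pos (hk : 1 < D.k) (hs : 2 ≤ D.s) : 0 < bR D :=
  mul_pos (rR_pos D hk hs) (n0R_pos D hk hs)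

lemma vR_eq (hk : 1 < D.k) : (D.X.card : ℝ) = n0R D * D.k := by
  have h : D.s ≤ D.s * D.k := Nat.le_mul_of_pos_right _ (by omega : 0 < D.k)
  rw [D.card_X]
  unfold n0R
  push_cast [Nat.cast_sub h]
  ring

lemma X_card_pos (hk : 1 < D.k) (hs : 2 ≤ D.s) : 0 < D.X.card := by
  have h1 := vR_eq D hk
  have h2 := n0R_pos D hk hs
  have h3 := kR_two D hk
  by_contra h
  push_neg at h
  rw [Nat.le_zero] at h
  rw [h] at h1
  push_cast at h1
  nlinarith

lemma point_degree_real (hk : 1 < D.k) (hs : 2 ≤ D.s) (x : α) (hx : x ∈ D.X) :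
    ((D.B.filter (fun e => x ∈ e)).card : ℝ) = rR D := by
  have h := point_degree_nat D x hx
  have hv1 : 1 ≤ D.X.card := Finset.card_pos.mpr ⟨x, hx⟩
  have hk1 : 1 ≤ D.k := le_of_lt hk
  have hcast : ((D.B.filter (fun e => x ∈ e)).card : ℝ) * ((D.k:ℝ) - 1) = (D.X.card : ℝ) - 1 := by
    have h2 : (((D.B.filter (fun e => x ∈ e)).card * (D.k - 1) : ℕ) : ℝ)
        = ((D.X.card - 1 : ℕ) : ℝ) := by rw [h]
    push_cast [Nat.cast_sub hk1, Nat.cast_sub hv1] at h2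
    linarith [h2]
  have hkne : (D.k:ℝ) - 1 ≠ 0 := by have := kR_two D hk; linarith
  have hgoal : rR D * ((D.k:ℝ) - 1) = (D.X.card : ℝ) - 1 := by
    rw [vR_eq D hk]
    unfold rR n0R
    ring
  exact mul_right_cancel₀ hkne (hcast.trans hgoal.symm)

end Real

section Classes
variable {α : Type*} [DecidableEq α] (D : ArcDesign α)

lemma class_filter_card {C : Finset (Finset α)} (hC : IsParallelClass D C)
    {x : α} (hx : x ∈ D.X) : (C.filter (fun e => x ∈ e)).card = 1 :=
  filter_card_one (hC.2 x hx)

lemma class_card_nat {C : Finset (Finset α)} (hC : IsParallelClass D C) :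
    C.card * D.k = D.X.card := by
  classical
  have hdisj : ∀ e ∈ C, ∀ f ∈ C, e ≠ f → Disjoint (id e) (id f) := by
    intro e he f hf hne
    rw [Finset.disjoint_left]
    intro z hz1 hz2
    have hzX : z ∈ D.X := D.blocks_sub e (hC.1 he) hz1
    obtain ⟨b, _, hu⟩ := hC.2 z hzX
    exact hne ((hu e ⟨he, hz1⟩).trans (hu f ⟨hf, hz2⟩).symm)
  have hunion : C.biUnion id = D.X := by
    ext y
    simp only [Finset.mem_biUnion, id]
    constructor
    · rintro ⟨e, he, hy⟩
      exact D.blocks_sub e (hC.1 he) hy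
    · intro hy
      obtain ⟨e, ⟨he, hye⟩, _⟩ := hC.2 y hy
      exact ⟨e, he, hye⟩
  have h2 := Finset.card_biUnion hdisj
  rw [hunion] at h2
  have h3 : ∀ e ∈ C, (id e : Finset α).card = D.k := fun e he => D.blocks_card e (hC.1 he)
  rw [Finset.sum_congr rfl h3, Finset.sum_const, smul_eq_mul] at h2
  omega

lemma class_card_real (hk : 1 < D.k) {C : Finset (Finset α)} (hC : IsParallelClass D C) :
    (C.card : ℝ) = n0R D := by
  have h := class_card_nat D hC
  have h2 : ((C.card * D.k : ℕ) : ℝ) = (D.X.card : ℝ) := by rw [h]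
  push_cast at h2
  rw [vR_eq D hk] at h2
  have hkne : (D.k : ℝ) ≠ 0 := by have := kR_two D hk; linarith
  exact mul_right_cancel₀ hkne h2

lemma res_class_unique {R : Finset (Finset (Finset α))} (hR : IsResolution D R)
    {e : Finset α} (he : e ∈ D.B) {C₁ C₂ : Finset (Finset α)}
    (h1 : C₁ ∈ R) (h2 : C₂ ∈ R) (he1 : e ∈ C₁) (he2 : e ∈ C₂) : C₁ = C₂ := by
  obtain ⟨C, _, hu⟩ := hR.2 e he
  exact (hu C₁ ⟨h1, he1⟩).trans (hu C₂ ⟨h2, he2⟩).symm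

lemma res_card_real (hk : 1 < D.k) (hs : 2 ≤ D.s) {R : Finset (Finset (Finset α))}
    (hR : IsResolution D R) : (R.card : ℝ) = rR D := by
  obtain ⟨x₀, hx₀⟩ := Finset.card_pos.mp (X_card_pos D hk hs)
  have key : R.card = (D.B.filter (fun e => x₀ ∈ e)).card := by
    apply Finset.card_bij (fun C hC => ((hR.1 C hC).2 x₀ hx₀).exists.choose)
    · intro C hC
      have hspec := ((hR.1 C hC).2 x₀ hx₀).exists.choose_spec
      exact Finset.mem_filter.mpr ⟨(hR.1 C hC).1 hspec.1, hspec.2⟩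
    · intro C₁ h₁ C₂ h₂ heq
      have hs1 := ((hR.1 C₁ h₁).2 x₀ hx₀).exists.choose_spec
      have hs2 := ((hR.1 C₂ h₂).2 x₀ hx₀).exists.choose_spec
      rw [heq] at hs1
      exact res_class_unique D hR ((hR.1 C₂ h₂).1 hs2.1) h₁ h₂ hs1.1 hs2.1
    · intro e he
      rw [Finset.mem_filter] at he
      obtain ⟨C, ⟨hCR, heC⟩, _⟩ := hR.2 e he.1
      refine ⟨C, hCR, ?_⟩
      have hspec := ((hR.1 C hCR).2 x₀ hx₀).exists.choose_spec
      exact ((hR.1 C hCR).2 x₀ hx₀).unique hspec ⟨heC, he.2⟩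
  rw [key]
  exact point_degree_real D hk hs x₀ hx₀

lemma B_card_real (hk : 1 < D.k) (hs : 2 ≤ D.s) {R : Finset (Finset (Finset α))}
    (hR : IsResolution D R) : (D.B.card : ℝ) = bR D := by
  classical
  have hdisj : ∀ C₁ ∈ R, ∀ C₂ ∈ R, C₁ ≠ C₂ → Disjoint (id C₁) (id C₂) := by
    intro C₁ h₁ C₂ h₂ hne
    rw [Finset.disjoint_left]
    intro e he1 he2
    exact hne (res_class_unique D hR ((hR.1 C₁ h₁).1 he1) h₁ h₂ he1 he2)
  have hunion : R.biUnion id = D.B := by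
    ext e
    simp only [Finset.mem_biUnion, id]
    constructor
    · rintro ⟨C, hC, he⟩
      exact (hR.1 C hC).1 he
    · intro he
      obtain ⟨C, ⟨hC, heC⟩, _⟩ := hR.2 e he
      exact ⟨C, hC, heC⟩
  have h2 := Finset.card_biUnion hdisj
  rw [hunion] at h2
  have h3 : ((D.B.card : ℕ) : ℝ) = ∑ C ∈ R, ((C : Finset (Finset α)).card : ℝ) := by
    rw [h2]; push_cast; rfl
  rw [Finset.sum_congr rfl (fun C hC => class_card_real D hk (hR.1 C hC))] at h3
  rw [Finset.sum_const, nsmul_eq_mul, res_card_real D hk hs hR] at h3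
  exact h3

end Classes

section Sums
variable {α : Type*} [DecidableEq α] (D : ArcDesign α)

lemma ind_mul (P Q : Prop) [Decidable P] [Decidable Q] :
    (if P then (1:ℝ) else 0) * (if Q then (1:ℝ) else 0) = if P ∧ Q then (1:ℝ) else 0 := by
  split_ifs with h1 h2 h3 <;> simp_all

lemma sum_filter_unique {γ : Type*} {s : Finset γ} {p : γ → Prop}
    [DecidablePred p] (h : ∃! x, x ∈ s ∧ p x) (g : γ → ℝ) {c : ℝ}
    (hc : ∀ x ∈ s, p x → g x = c) :
    ∑ x ∈ s, (if p x then g x else 0) = c := by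
  obtain ⟨x₀, ⟨hx₀s, hx₀p⟩, hu⟩ := h
  rw [← Finset.sum_filter]
  have hfil : s.filter p = {x₀} := by
    ext y; simp only [Finset.mem_filter, Finset.mem_singleton]
    constructor
    · rintro ⟨h1, h2⟩; exact hu y ⟨h1, h2⟩
    · rintro rfl; exact ⟨hx₀s, hx₀p⟩
  rw [hfil, Finset.sum_singleton]
  exact hc x₀ hx₀s hx₀p

/-- number of classes of R containing both e and f, as a real -/
noncomputable def cRv (R : Finset (Finset (Finset α))) (e f : Finset α) : ℝ :=
  ((R.filter fun C => e ∈ C ∧ f ∈ C).card : ℝ)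

lemma cRv_eq_sum (R : Finset (Finset (Finset α))) (e f : Finset α) :
    cRv R e f = ∑ C ∈ R, (if e ∈ C ∧ f ∈ C then (1:ℝ) else 0) := by
  rw [cRv, Finset.card_filter]
  push_cast
  rfl

lemma cRv_diag {R : Finset (Finset (Finset α))} (hR : IsResolution D R)
    {f : Finset α} (hf : f ∈ D.B) : cRv R f f = 1 := by
  unfold cRv
  norm_cast
  simp only [and_self]
  exact filter_card_one (hR.2 f hf)

lemma cRv_ind {R : Finset (Finset (Finset α))} (hR : IsResolution D R)
    {e : Finset α} (he : e ∈ D.B) :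
    ∃ Ce, Ce ∈ R ∧ e ∈ Ce ∧ ∀ f, cRv R e f = (if f ∈ Ce then (1:ℝ) else 0) := by
  obtain ⟨Ce, ⟨hCR, heC⟩, hu⟩ := hR.2 e he
  refine ⟨Ce, hCR, heC, fun f => ?_⟩
  unfold cRv
  by_cases hf : f ∈ Ce
  · simp only [hf, if_true]
    norm_cast
    rw [Finset.card_eq_one]
    refine ⟨Ce, ?_⟩
    ext C
    simp only [Finset.mem_filter, Finset.mem_singleton]
    constructor
    · rintro ⟨h1, h2, _⟩; exact hu C ⟨h1, h2⟩
    · rintro rfl; exact ⟨hCR, heC, hf⟩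
  · simp only [hf, if_false]
    norm_cast
    rw [Finset.card_eq_zero]
    rw [Finset.filter_eq_empty_iff]
    rintro C hCR' ⟨heC', hfC'⟩
    exact hf ((hu C ⟨hCR', heC'⟩) ▸ hfC')

lemma sum_ind_point (hk : 1 < D.k) (hs : 2 ≤ D.s) {x : α} (hx : x ∈ D.X) :
    ∑ e ∈ D.B, (if x ∈ e then (1:ℝ) else 0) = rR D := by
  rw [Finset.sum_boole]
  exact point_degree_real D hk hs x hx

lemma sum_ind_block {e : Finset α} (he : e ∈ D.B) :
    ∑ x ∈ D.X, (if x ∈ e then (1:ℝ) else 0) = (D.k : ℝ) := by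
  rw [Finset.sum_boole]
  have : D.X.filter (fun x => x ∈ e) = e := by
    ext y
    simp only [Finset.mem_filter]
    exact ⟨fun h => h.2, fun h => ⟨D.blocks_sub e he h, h⟩⟩
  rw [this, D.blocks_card e he]

lemma sum_ind_pair {x y : α} (hx : x ∈ D.X) (hy : y ∈ D.X) (hxy : x ≠ y) :
    ∑ e ∈ D.B, (if x ∈ e then (1:ℝ) else 0) * (if y ∈ e then (1:ℝ) else 0) = 1 := by
  simp only [ind_mul]
  rw [Finset.sum_boole, pair_filter_card D hx hy hxy]
  norm_num

/-- key: the class of f covers x exactly once -/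
lemma sum_point_cRv (hk : 1 < D.k) {R : Finset (Finset (Finset α))}
    (hR : IsResolution D R) {x : α} (hx : x ∈ D.X) {f : Finset α} (hf : f ∈ D.B) :
    ∑ e ∈ D.B, (if x ∈ e then (1:ℝ) else 0) * cRv R e f = 1 := by
  have step1 : ∀ e ∈ D.B, (if x ∈ e then (1:ℝ) else 0) * cRv R e f
      = ∑ C ∈ R, (if e ∈ C ∧ f ∈ C ∧ x ∈ e then (1:ℝ) else 0) := by
    intro e _
    rw [cRv_eq_sum, Finset.mul_sum]
    apply Finset.sum_congr rfl
    intro C _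
    rw [ind_mul]
    congr 1
    · simp only [eq_iff_iff]; tauto
  rw [Finset.sum_congr rfl step1, Finset.sum_comm]
  have step2 : ∀ C ∈ R, ∑ e ∈ D.B, (if e ∈ C ∧ f ∈ C ∧ x ∈ e then (1:ℝ) else 0)
      = (if f ∈ C then ((C.filter (fun e => x ∈ e)).card : ℝ) else 0) := by
    intro C hC
    rw [Finset.sum_boole]
    by_cases hfC : f ∈ C
    · simp only [hfC, if_true]
      congr 2
      ext e
      simp only [Finset.mem_filter]
      constructor
      · rintro ⟨_, h1, _, h3⟩; exact ⟨h1, h3⟩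
      · rintro ⟨h1, h2⟩; exact ⟨(hR.1 C hC).1 h1, h1, trivial, h2⟩
    · simp only [hfC, if_false]
      norm_num
  rw [Finset.sum_congr rfl step2]
  apply sum_filter_unique (hR.2 f hf)
  intro C hC hfC
  rw [class_filter_card D (hR.1 C hC) hx]
  norm_num

/-- sum of cRv over first argument: the class of f has n₀ blocks -/
lemma sum_cRv (hk : 1 < D.k) {R : Finset (Finset (Finset α))}
    (hR : IsResolution D R) {f : Finset α} (hf : f ∈ D.B) :
    ∑ e ∈ D.B, cRv R e f = n0R D := by
  obtain ⟨Cf, hCfR, hfCf, hcf⟩ := cRv_ind D hR hf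
  have hsymm : ∀ e ∈ D.B, cRv R e f = cRv R f e := by
    intro e _
    unfold cRv
    congr 1
    exact congrArg Finset.card (Finset.filter_congr (fun C _ => and_comm))
  rw [Finset.sum_congr rfl hsymm]
  have h2 : ∀ e ∈ D.B, cRv R f e = (if e ∈ Cf then (1:ℝ) else 0) := fun e _ => hcf e
  rw [Finset.sum_congr rfl h2, Finset.sum_boole]
  have : D.B.filter (fun e => e ∈ Cf) = Cf := by
    ext e
    simp only [Finset.mem_filter]
    exact ⟨fun h => h.2, fun h => ⟨(hR.1 Cf hCfR).1 h, h⟩⟩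
  rw [this]
  exact class_card_real D hk (hR.1 Cf hCfR)

end Sums

section Pairs
variable {α : Type*} [DecidableEq α] (D : ArcDesign α)

lemma inner_pair_sum {R R' : Finset (Finset (Finset α))} (hR : IsResolution D R)
    (hR' : IsResolution D R') {e : Finset α} (he : e ∈ D.B)
    {Ce Ce' : Finset (Finset α)}
    (hce : ∀ f, cRv R e f = (if f ∈ Ce then (1:ℝ) else 0))
    (hce' : ∀ f, cRv R' e f = (if f ∈ Ce' then (1:ℝ) else 0))
    (hCeR : Ce ∈ R) :
    ∑ f ∈ D.B, cRv R e f * cRv R' e f = ((Ce ∩ Ce').card : ℝ) := by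
  have : ∀ f ∈ D.B, cRv R e f * cRv R' e f = (if f ∈ Ce ∧ f ∈ Ce' then (1:ℝ) else 0) := by
    intro f _
    rw [hce, hce', ind_mul]
  rw [Finset.sum_congr rfl this, Finset.sum_boole]
  congr 1
  apply congrArg
  ext f
  simp only [Finset.mem_filter, Finset.mem_inter]
  constructor
  · rintro ⟨_, h⟩; exact h
  · rintro ⟨h1, h2⟩; exact ⟨(hR.1 Ce hCeR).1 h1, h1, h2⟩

lemma same_pair_sum (hk : 1 < D.k) (hs : 2 ≤ D.s) {R : Finset (Finset (Finset α))}
    (hR : IsResolution D R) :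
    ∑ e ∈ D.B, ∑ f ∈ D.B, cRv R e f * cRv R e f = bR D * n0R D := by
  have key : ∀ e ∈ D.B, ∑ f ∈ D.B, cRv R e f * cRv R e f = n0R D := by
    intro e he
    obtain ⟨Ce, hCeR, heCe, hce⟩ := cRv_ind D hR he
    rw [inner_pair_sum D hR hR he hce hce hCeR]
    rw [Finset.inter_self]
    exact class_card_real D hk (hR.1 Ce hCeR)
  rw [Finset.sum_congr rfl key, Finset.sum_const, nsmul_eq_mul, B_card_real D hk hs hR]

lemma cross_pair_sum (hk : 1 < D.k) (hs : 2 ≤ D.s) {R R' : Finset (Finset (Finset α))}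
    (hR : IsResolution D R) (hR' : IsResolution D R') (hcpt : Compatible D R R') :
    ∑ e ∈ D.B, ∑ f ∈ D.B, cRv R e f * cRv R' e f ≤ n0R D * n0R D + (bR D - n0R D) := by
  obtain ⟨Cs, hCsR, hCsR', hprop⟩ := hcpt
  have hbound : ∀ e ∈ D.B, ∑ f ∈ D.B, cRv R e f * cRv R' e f
      ≤ (if e ∈ Cs then n0R D else 1) := by
    intro e he
    obtain ⟨Ce, hCeR, heCe, hce⟩ := cRv_ind D hR he
    obtain ⟨Ce', hCeR', heCe', hce'⟩ := cRv_ind D hR' he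
    rw [inner_pair_sum D hR hR' he hce hce' hCeR]
    by_cases hes : e ∈ Cs
    · have h1 : Ce = Cs := res_class_unique D hR he hCeR hCsR heCe hes
      have h2 : Ce' = Cs := res_class_unique D hR' he hCeR' hCsR' heCe' hes
      rw [h1, h2, Finset.inter_self, if_pos hes]
      exact le_of_eq (class_card_real D hk (hR.1 Cs hCsR))
    · have h1 : Ce ≠ Cs := fun h => hes (h ▸ heCe)
      have h2 : (Ce ∩ Ce').card ≤ 1 := hprop Ce hCeR Ce' hCeR' (fun h => h1 h.1)
      rw [if_neg hes]
      exact_mod_cast h2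
  calc ∑ e ∈ D.B, ∑ f ∈ D.B, cRv R e f * cRv R' e f
      ≤ ∑ e ∈ D.B, (if e ∈ Cs then n0R D else 1) := Finset.sum_le_sum hbound
    _ = n0R D * n0R D + (bR D - n0R D) := by
        rw [← Finset.sum_filter_add_sum_filter_not D.B (fun e => e ∈ Cs)]
        have hfil : D.B.filter (fun e => e ∈ Cs) = Cs := by
          rw [Finset.filter_mem_eq_inter]
          exact Finset.inter_eq_right.mpr (hR.1 Cs hCsR).1
        have s1 : ∑ e ∈ D.B.filter (fun e => e ∈ Cs), (if e ∈ Cs then n0R D else 1)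
            = (Cs.card : ℝ) * n0R D := by
          rw [hfil, Finset.sum_congr rfl (fun e he => if_pos he), Finset.sum_const,
            nsmul_eq_mul]
        have s2 : ∑ e ∈ D.B.filter (fun e => ¬ e ∈ Cs), (if e ∈ Cs then n0R D else 1)
            = ((D.B.filter (fun e => ¬ e ∈ Cs)).card : ℝ) := by
          rw [Finset.sum_congr rfl (fun e he => if_neg (Finset.mem_filter.mp he).2),
            Finset.sum_const, nsmul_eq_mul, mul_one]
        rw [s1, s2, class_card_real D hk (hR.1 Cs hCsR)]
        have hsd : D.B.filter (fun e => ¬ e ∈ Cs) = D.B \ Cs := by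
          ext e; simp [Finset.mem_sdiff, Finset.mem_filter]
        rw [hsd, Finset.card_sdiff_of_subset (hR.1 Cs hCsR).1,
          Nat.cast_sub (Finset.card_le_card (hR.1 Cs hCsR).1),
          B_card_real D hk hs hR, class_card_real D hk (hR.1 Cs hCsR)]
end Pairs

section MatrixPart
open Matrix
variable {α : Type*} [DecidableEq α] (D : ArcDesign α)

/-- point-block incidence matrix -/
noncomputable def NM (D : ArcDesign α) : Matrix ↥D.X ↥D.B ℝ :=
  Matrix.of fun x e => if (x : α) ∈ (e : Finset α) then 1 else 0

noncomputable def cD (D : ArcDesign α) : ℝ := (D.s : ℝ) * D.k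
noncomputable def vv (D : ArcDesign α) : ℝ := (D.X.card : ℝ)

/-- explicit inverse of N*Nᵀ -/
noncomputable def MM (D : ArcDesign α) : Matrix ↥D.X ↥D.X ℝ :=
  Matrix.of fun x y => (if x = y then (cD D)⁻¹ else 0) - (cD D * (cD D + vv D))⁻¹

lemma NNT_apply (hk : 1 < D.k) (hs : 2 ≤ D.s) (x y : ↥D.X) :
    (NM D * (NM D)ᵀ) x y = if x = y then cD D + 1 else 1 := by
  rw [Matrix.mul_apply]
  simp only [NM, Matrix.transpose_apply, Matrix.of_apply]
  rw [Finset.sum_coe_sort D.B (fun e => (if (x:α) ∈ e then (1:ℝ) else 0) * (if (y:α) ∈ e then (1:ℝ) else 0))]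
  by_cases hxy : x = y
  · subst hxy
    simp only [if_pos rfl]
    have : ∀ e ∈ D.B, (if (x:α) ∈ e then (1:ℝ) else 0) * (if (x:α) ∈ e then (1:ℝ) else 0)
        = (if (x:α) ∈ e then (1:ℝ) else 0) := by
      intro e _; split_ifs <;> norm_num
    rw [Finset.sum_congr rfl this, sum_ind_point D hk hs x.2]
    unfold rR cD; push_cast; ring
  · rw [if_neg hxy]
    exact sum_ind_pair D x.2 y.2 (fun h => hxy (Subtype.ext h))

lemma cD_pos (hk : 1 < D.k) (hs : 2 ≤ D.s) : 0 < cD D := by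
  have h1 := kR_two D hk; have h2 := sR_two D hs
  unfold cD; nlinarith

lemma cDvv_pos (hk : 1 < D.k) (hs : 2 ≤ D.s) : 0 < cD D + vv D := by
  have h1 := cD_pos D hk hs
  have h2 : (0:ℝ) ≤ vv D := Nat.cast_nonneg _
  unfold vv at *; linarith

lemma M_NNT (hk : 1 < D.k) (hs : 2 ≤ D.s) : MM D * (NM D * (NM D)ᵀ) = 1 := by
  have hc := cD_pos D hk hs
  have hcv := cDvv_pos D hk hs
  ext x y
  rw [Matrix.mul_apply]
  have h1 : ∀ z, (NM D * (NM D)ᵀ) z y = if z = y then cD D + 1 else 1 :=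
    fun z => NNT_apply D hk hs z y
  simp only [MM, Matrix.of_apply, h1]
  have expand : ∀ z : ↥D.X, ((if x = z then (cD D)⁻¹ else 0) - (cD D * (cD D + vv D))⁻¹)
      * (if z = y then cD D + 1 else 1)
      = (if x = z then (cD D)⁻¹ * (if z = y then cD D + 1 else 1) else 0)
        - ((cD D * (cD D + vv D))⁻¹ * (if z = y then cD D else 0)
           + (cD D * (cD D + vv D))⁻¹) := by
    intro z
    split_ifs <;> ring
  rw [Finset.sum_congr rfl (fun z _ => expand z)]
  rw [Finset.sum_sub_distrib, Finset.sum_add_distrib]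
  rw [Finset.sum_ite_eq Finset.univ x
    (fun z => (cD D)⁻¹ * (if z = y then cD D + 1 else 1))]
  rw [← Finset.mul_sum, Finset.sum_ite_eq' Finset.univ y (fun _ => cD D)]
  simp only [Finset.mem_univ, if_true, Finset.sum_const, Finset.card_univ, nsmul_eq_mul]
  have hcard : (Fintype.card ↥D.X : ℝ) = vv D := by
    rw [Fintype.card_coe]; rfl
  rw [hcard]
  rw [Matrix.one_apply]
  by_cases hxy : x = y
  · subst hxy
    rw [if_pos rfl, if_pos rfl]
    field_simp
    ring
  · rw [if_neg hxy, if_neg hxy]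
    field_simp
    ring

end MatrixPart

section MatrixPart2
open Matrix
variable {α : Type*} [DecidableEq α] (D : ArcDesign α)

noncomputable def EM (D : ArcDesign α) : Matrix ↥D.B ↥D.B ℝ :=
  1 - (NM D)ᵀ * MM D * NM D

lemma MM_symm : (MM D)ᵀ = MM D := by
  ext x y
  simp only [MM, Matrix.transpose_apply, Matrix.of_apply]
  congr 1
  by_cases h : x = y
  · subst h; rfl
  · rw [if_neg h, if_neg (fun hh => h hh.symm)]

lemma EM_symm : (EM D)ᵀ = EM D := by
  unfold EM
  rw [Matrix.transpose_sub, Matrix.transpose_one, Matrix.transpose_mul,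
    Matrix.transpose_mul, Matrix.transpose_transpose, MM_symm]
  rw [Matrix.mul_assoc]

lemma EM_idem (hk : 1 < D.k) (hs : 2 ≤ D.s) : EM D * EM D = EM D := by
  have h := M_NNT D hk hs
  unfold EM
  have key : ((NM D)ᵀ * MM D * NM D) * ((NM D)ᵀ * MM D * NM D)
      = (NM D)ᵀ * MM D * NM D := by
    calc ((NM D)ᵀ * MM D * NM D) * ((NM D)ᵀ * MM D * NM D)
        = (NM D)ᵀ * ((MM D * (NM D * (NM D)ᵀ)) * (MM D * NM D)) := by
          simp only [Matrix.mul_assoc]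
      _ = (NM D)ᵀ * MM D * NM D := by rw [h, Matrix.one_mul, Matrix.mul_assoc]
  rw [Matrix.sub_mul, Matrix.mul_sub, Matrix.mul_sub, key]
  simp only [Matrix.one_mul, Matrix.mul_one]
  abel

lemma EM_trace (hk : 1 < D.k) (hs : 2 ≤ D.s) :
    Matrix.trace (EM D) = (D.B.card : ℝ) - (D.X.card : ℝ) := by
  unfold EM
  rw [Matrix.trace_sub, Matrix.trace_one]
  have h1 : Matrix.trace ((NM D)ᵀ * MM D * NM D)
      = Matrix.trace (MM D * (NM D * (NM D)ᵀ)) := by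
    rw [Matrix.mul_assoc, Matrix.trace_mul_comm, Matrix.mul_assoc]
  rw [h1, M_NNT D hk hs, Matrix.trace_one]
  simp [Fintype.card_coe]

/-- the Q matrix of a resolution -/
noncomputable def QM (D : ArcDesign α) (R : Finset (Finset (Finset α))) :
    Matrix ↥D.B ↥D.B ℝ :=
  Matrix.of fun e f => cRv R (e : Finset α) (f : Finset α) / n0R D - 1 / bR D

lemma NM_QM (hk : 1 < D.k) (hs : 2 ≤ D.s) {R : Finset (Finset (Finset α))}
    (hR : IsResolution D R) : NM D * QM D R = 0 := by
  ext x f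
  rw [Matrix.mul_apply]
  simp only [NM, QM, Matrix.of_apply, Matrix.zero_apply]
  rw [Finset.sum_coe_sort D.B (fun e => (if (x:α) ∈ e then (1:ℝ) else 0)
    * (cRv R e (f:Finset α) / n0R D - 1 / bR D))]
  have expand : ∀ e ∈ D.B, (if (x:α) ∈ e then (1:ℝ) else 0)
      * (cRv R e (f:Finset α) / n0R D - 1 / bR D)
      = (if (x:α) ∈ e then (1:ℝ) else 0) * cRv R e (f:Finset α) / n0R D
        - (if (x:α) ∈ e then (1:ℝ) else 0) / bR D := by
    intro e _; ring
  rw [Finset.sum_congr rfl expand, Finset.sum_sub_distrib]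
  rw [← Finset.sum_div, ← Finset.sum_div]
  rw [sum_point_cRv D hk hR x.2 f.2, sum_ind_point D hk hs x.2]
  have hn := n0R_pos D hk hs
  have hr := rR_pos D hk hs
  unfold bR
  field_simp
  ring

lemma QM_trace (hk : 1 < D.k) (hs : 2 ≤ D.s) {R : Finset (Finset (Finset α))}
    (hR : IsResolution D R) : Matrix.trace (QM D R) = rR D - 1 := by
  unfold Matrix.trace QM
  simp only [Matrix.diag_apply, Matrix.of_apply]
  rw [Finset.sum_coe_sort D.B (fun e => cRv R e e / n0R D - 1 / bR D)]
  have h2 : ∀ e ∈ D.B, cRv R e e / n0R D - 1 / bR D = 1 / n0R D - 1 / bR D := by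
    intro e he; rw [cRv_diag D hR he]
  rw [Finset.sum_congr rfl h2, Finset.sum_const, nsmul_eq_mul, B_card_real D hk hs hR]
  have hn := n0R_pos D hk hs
  have hr := rR_pos D hk hs
  unfold bR
  field_simp

lemma cRv_comm (R : Finset (Finset (Finset α))) (e f : Finset α) :
    cRv R e f = cRv R f e := by
  unfold cRv
  exact congrArg _ (congrArg Finset.card (Finset.filter_congr (fun C _ => and_comm)))

lemma double_coe (g : Finset α → Finset α → ℝ) :
    ∑ e : ↥D.B, ∑ f : ↥D.B, g (e : Finset α) (f : Finset α)
      = ∑ e ∈ D.B, ∑ f ∈ D.B, g e f := by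
  calc ∑ e : ↥D.B, ∑ f : ↥D.B, g (e : Finset α) (f : Finset α)
      = ∑ e : ↥D.B, ∑ f ∈ D.B, g (e : Finset α) f :=
        Finset.sum_congr rfl (fun e _ => Finset.sum_coe_sort D.B (g (e : Finset α)))
    _ = ∑ e ∈ D.B, ∑ f ∈ D.B, g e f := Finset.sum_coe_sort D.B (fun e => ∑ f ∈ D.B, g e f)

/-- Frobenius inner products of the Q matrices -/
lemma QM_frob (hk : 1 < D.k) (hs : 2 ≤ D.s) {R R' : Finset (Finset (Finset α))}
    (hR : IsResolution D R) (hR' : IsResolution D R') :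
    ∑ e : ↥D.B, ∑ f : ↥D.B, QM D R e f * QM D R' e f
      = (∑ e ∈ D.B, ∑ f ∈ D.B, cRv R e f * cRv R' e f) / (n0R D)^2 - 1 := by
  have hn := n0R_pos D hk hs
  have hb := bR_pos D hk hs
  have hcard : (D.B.card : ℝ) = bR D := B_card_real D hk hs hR
  have hdouble : ∑ e : ↥D.B, ∑ f : ↥D.B, QM D R e f * QM D R' e f
      = ∑ e ∈ D.B, ∑ f ∈ D.B,
        (cRv R e f / n0R D - 1 / bR D) * (cRv R' e f / n0R D - 1 / bR D) :=
    double_coe D (fun a b => (cRv R a b / n0R D - 1 / bR D) * (cRv R' a b / n0R D - 1 / bR D))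
  rw [hdouble]
  have hinner : ∀ e ∈ D.B, ∑ f ∈ D.B,
      (cRv R e f / n0R D - 1 / bR D) * (cRv R' e f / n0R D - 1 / bR D)
      = (∑ f ∈ D.B, cRv R e f * cRv R' e f) / (n0R D)^2 - 1 / bR D := by
    intro e he
    have hc : ∑ f ∈ D.B, cRv R e f = n0R D := by
      rw [Finset.sum_congr rfl (fun f _ => cRv_comm R e f)]
      exact sum_cRv D hk hR he
    have hc' : ∑ f ∈ D.B, cRv R' e f = n0R D := by
      rw [Finset.sum_congr rfl (fun f _ => cRv_comm R' e f)]
      exact sum_cRv D hk hR' he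
    have expand : ∀ f ∈ D.B,
        (cRv R e f / n0R D - 1 / bR D) * (cRv R' e f / n0R D - 1 / bR D)
        = cRv R e f * cRv R' e f / (n0R D)^2
          - cRv R e f / (n0R D * bR D) - cRv R' e f / (n0R D * bR D) + 1 / (bR D)^2 := by
      intro f _
      field_simp
      ring
    rw [Finset.sum_congr rfl expand]
    rw [Finset.sum_add_distrib, Finset.sum_sub_distrib, Finset.sum_sub_distrib,
      ← Finset.sum_div, ← Finset.sum_div, ← Finset.sum_div, hc, hc',
      Finset.sum_const, nsmul_eq_mul, hcard]
    field_simp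
    ring
  rw [Finset.sum_congr rfl hinner, Finset.sum_sub_distrib, ← Finset.sum_div,
    Finset.sum_const, nsmul_eq_mul, hcard]
  field_simp

end MatrixPart2

section Final
open Matrix
variable {α : Type*} [DecidableEq α] (D : ArcDesign α)

noncomputable def TM (D : ArcDesign α) (S : Finset (Finset (Finset (Finset α)))) :
    Matrix ↥D.B ↥D.B ℝ := ∑ R ∈ S, QM D R

lemma frob_eq (A B : Matrix ↥D.B ↥D.B ℝ) :
    ∑ e : ↥D.B, ∑ f : ↥D.B, A e f * B e f = Matrix.trace (A * Bᵀ) := by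
  simp [Matrix.trace, Matrix.mul_apply, Matrix.diag, Matrix.transpose_apply]

lemma TM_trace (hk : 1 < D.k) (hs : 2 ≤ D.s)
    (S : Finset (Finset (Finset (Finset α)))) (hres : ∀ R ∈ S, IsResolution D R) :
    Matrix.trace (TM D S) = (S.card : ℝ) * (rR D - 1) := by
  unfold TM
  rw [Matrix.trace_sum]
  rw [Finset.sum_congr rfl (fun R hR => QM_trace D hk hs (hres R hR))]
  rw [Finset.sum_const, nsmul_eq_mul]

lemma NM_TM (hk : 1 < D.k) (hs : 2 ≤ D.s)
    (S : Finset (Finset (Finset (Finset α)))) (hres : ∀ R ∈ S, IsResolution D R) :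
    NM D * TM D S = 0 := by
  unfold TM
  rw [Matrix.mul_sum]
  rw [Finset.sum_congr rfl (fun R hR => NM_QM D hk hs (hres R hR))]
  simp

lemma TM_E_trace (hk : 1 < D.k) (hs : 2 ≤ D.s)
    (S : Finset (Finset (Finset (Finset α)))) (hres : ∀ R ∈ S, IsResolution D R) :
    Matrix.trace (TM D S * EM D) = Matrix.trace (TM D S) := by
  unfold EM
  rw [Matrix.mul_sub, Matrix.mul_one, Matrix.trace_sub]
  have h0 : TM D S * ((NM D)ᵀ * MM D * NM D) = (TM D S * ((NM D)ᵀ * MM D)) * NM D := by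
    simp only [Matrix.mul_assoc]
  rw [h0, Matrix.trace_mul_comm]
  have h1 : NM D * (TM D S * ((NM D)ᵀ * MM D)) = (NM D * TM D S) * ((NM D)ᵀ * MM D) := by
    rw [Matrix.mul_assoc]
  rw [h1, NM_TM D hk hs S hres, Matrix.zero_mul, Matrix.trace_zero, sub_zero]

lemma E_frob (hk : 1 < D.k) (hs : 2 ≤ D.s) :
    ∑ e : ↥D.B, ∑ f : ↥D.B, (EM D e f)^2 = (D.B.card : ℝ) - (D.X.card : ℝ) := by
  calc ∑ e : ↥D.B, ∑ f : ↥D.B, (EM D e f)^2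
      = ∑ e : ↥D.B, ∑ f : ↥D.B, EM D e f * EM D e f :=
        Finset.sum_congr rfl (fun e _ => Finset.sum_congr rfl (fun f _ => sq (EM D e f)))
    _ = Matrix.trace (EM D * (EM D)ᵀ) := frob_eq D (EM D) (EM D)
    _ = Matrix.trace (EM D) := by rw [EM_symm, EM_idem D hk hs]
    _ = (D.B.card : ℝ) - (D.X.card : ℝ) := EM_trace D hk hs

lemma T_frob_bound (hk : 1 < D.k) (hs : 2 ≤ D.s)
    (S : Finset (Finset (Finset (Finset α)))) (hres : ∀ R ∈ S, IsResolution D R)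
    (hcomp : ∀ R₁ ∈ S, ∀ R₂ ∈ S, R₁ ≠ R₂ → Compatible D R₁ R₂) :
    ∑ e : ↥D.B, ∑ f : ↥D.B, (TM D S e f)^2
      ≤ (S.card : ℝ) * ((S.card : ℝ) * ((bR D - n0R D)/(n0R D)^2)
          + ((rR D - 1) - (bR D - n0R D)/(n0R D)^2)) := by
  have hn := n0R_pos D hk hs
  have hb := bR_pos D hk hs
  have hr := rR_pos D hk hs
  set c' : ℝ := (bR D - n0R D)/(n0R D)^2 with hc'
  have step1 : ∀ e f : ↥D.B, (TM D S e f)^2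
      = ∑ R ∈ S, ∑ R' ∈ S, QM D R e f * QM D R' e f := by
    intro e f
    have happ : TM D S e f = ∑ R ∈ S, QM D R e f := by
      unfold TM; rw [Matrix.sum_apply]
    rw [sq, happ, Finset.sum_mul_sum]
  have step2 : ∑ e : ↥D.B, ∑ f : ↥D.B, (TM D S e f)^2
      = ∑ R ∈ S, ∑ R' ∈ S, ∑ e : ↥D.B, ∑ f : ↥D.B, QM D R e f * QM D R' e f := by
    rw [Finset.sum_congr rfl (fun e _ => Finset.sum_congr rfl (fun f _ => step1 e f))]
    rw [Finset.sum_congr rfl (fun e _ => Finset.sum_comm)]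
    rw [Finset.sum_comm]
    refine Finset.sum_congr rfl (fun R _ => ?_)
    rw [Finset.sum_congr rfl (fun e _ => Finset.sum_comm)]
    exact Finset.sum_comm
  rw [step2]
  have step3 : ∀ R ∈ S, ∀ R' ∈ S,
      ∑ e : ↥D.B, ∑ f : ↥D.B, QM D R e f * QM D R' e f
        ≤ (if R' = R then rR D - 1 else c') := by
    intro R hR R' hR'
    rw [QM_frob D hk hs (hres R hR) (hres R' hR')]
    by_cases heq : R' = R
    · subst heq
      rw [if_pos rfl, same_pair_sum D hk hs (hres R' hR')]
      have heq : bR D * n0R D / n0R D ^ 2 - 1 = rR D - 1 := by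
        have hh : bR D = rR D * n0R D := rfl
        rw [hh]
        field_simp
      rw [heq]
    · rw [if_neg heq]
      have hle := cross_pair_sum D hk hs (hres R hR) (hres R' hR')
        (hcomp R hR R' hR' (fun h => heq h.symm))
      have h2 : (∑ e ∈ D.B, ∑ f ∈ D.B, cRv R e f * cRv R' e f) / (n0R D)^2
          ≤ (n0R D * n0R D + (bR D - n0R D)) / (n0R D)^2 := by gcongr
      have h3 : (n0R D * n0R D + (bR D - n0R D)) / (n0R D)^2 - 1 = c' := by
        rw [hc']
        field_simp
        ring
      linarith
  calc ∑ R ∈ S, ∑ R' ∈ S, ∑ e : ↥D.B, ∑ f : ↥D.B, QM D R e f * QM D R' e f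
      ≤ ∑ R ∈ S, ∑ R' ∈ S, (if R' = R then rR D - 1 else c') := by
        refine Finset.sum_le_sum (fun R hR => Finset.sum_le_sum (fun R' hR' => ?_))
        exact step3 R hR R' hR'
    _ = (S.card : ℝ) * ((S.card : ℝ) * c' + ((rR D - 1) - c')) := by
        have hinner : ∀ R ∈ S, ∑ R' ∈ S, (if R' = R then rR D - 1 else c')
            = (S.card : ℝ) * c' + ((rR D - 1) - c') := by
          intro R hR
          have hsplit : ∀ R' ∈ S, (if R' = R then rR D - 1 else c')
              = c' + (if R' = R then (rR D - 1 - c') else 0) := by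
            intro R' _
            split_ifs <;> ring
          rw [Finset.sum_congr rfl hsplit, Finset.sum_add_distrib, Finset.sum_const,
            nsmul_eq_mul, Finset.sum_ite_eq' S R (fun _ => rR D - 1 - c'), if_pos hR]
        rw [Finset.sum_congr rfl hinner, Finset.sum_const, nsmul_eq_mul]

lemma final_arith (σ κ mR : ℝ) (hσ : 2 ≤ σ) (hκ : 2 ≤ κ) (hm : 1 ≤ mR)
    (h : (mR*(σ*κ))^2 ≤ (mR*(σ*κ) + mR*(mR-1)*((σ*κ)/(σ*κ-σ+1)))
        * ((σ*κ-σ+1)*(σ*κ-κ+1))) :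
    mR ≤ (σ*κ - κ + 1)*σ := by
  have hn : (0:ℝ) < σ*κ-σ+1 := by nlinarith
  have hsk : (0:ℝ) < σ*κ := by nlinarith
  have hq : (0:ℝ) < σ*κ-κ+1 := by nlinarith
  have hre : (mR*(σ*κ) + mR*(mR-1)*((σ*κ)/(σ*κ-σ+1))) * ((σ*κ-σ+1)*(σ*κ-κ+1))
      = mR*(σ*κ)*((σ*κ-σ+1)*(σ*κ-κ+1)) + mR*(mR-1)*(σ*κ)*(σ*κ-κ+1) := by
    have hd : (σ*κ)/(σ*κ-σ+1) * (σ*κ-σ+1) = σ*κ := div_mul_cancel₀ _ hn.ne'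
    linear_combination (mR*(mR-1)*(σ*κ-κ+1)) * hd
  rw [hre] at h
  have hmsk : (0:ℝ) < mR*(σ*κ) := by nlinarith
  have h3 : mR*(σ*κ) ≤ ((σ*κ-σ+1) + mR - 1)*(σ*κ-κ+1) := by
    nlinarith [sq_nonneg (mR*(σ*κ))]
  have h4 : mR*(κ-1) ≤ (σ*(σ*κ-κ+1))*(κ-1) := by nlinarith
  have hκ1 : (0:ℝ) < κ-1 := by linarith
  have := le_of_mul_le_mul_right h4 hκ1
  linarith
end Final

/-- A set of pairwise compatible resolutions of a 2-((sk-s+1)k, k, 1) design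
(1 < k, s ≥ 2) has at most (sk-k+1)·s elements. -/
theorem compatible_resolutions_bound {α : Type*} [DecidableEq α]
    (D : ArcDesign α) (hk : 1 < D.k) (hs : 2 ≤ D.s)
    (S : Finset (Finset (Finset (Finset α))))
    (hres : ∀ R ∈ S, IsResolution D R)
    (hcomp : ∀ R₁ ∈ S, ∀ R₂ ∈ S, R₁ ≠ R₂ → Compatible D R₁ R₂) :
    S.card ≤ (D.s * D.k - D.k + 1) * D.s := by
  rcases Finset.eq_empty_or_nonempty S with hSe | hSe
  · simp [hSe]
  obtain ⟨R₀, hR₀⟩ := hSe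
  have hm1 : 1 ≤ S.card := Finset.card_pos.mpr ⟨R₀, hR₀⟩
  have hn := n0R_pos D hk hs
  have hBcard : (D.B.card : ℝ) = bR D := B_card_real D hk hs (hres R₀ hR₀)
  set σ : ℝ := (D.s : ℝ) with hσdef
  set κ : ℝ := (D.k : ℝ) with hκdef
  set mR : ℝ := (S.card : ℝ) with hmdef
  have hσ2 : (2:ℝ) ≤ σ := sR_two D hs
  have hκ2 : (2:ℝ) ≤ κ := kR_two D hk
  have hmR1 : (1:ℝ) ≤ mR := by rw [hmdef]; exact_mod_cast hm1
  -- Cauchy-Schwarz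
  have hcs := Finset.sum_mul_sq_le_sq_mul_sq (Finset.univ : Finset (↥D.B × ↥D.B))
      (fun p => TM D S p.1 p.2) (fun p => EM D p.1 p.2)
  have hprod : ∀ (g : ↥D.B → ↥D.B → ℝ),
      ∑ p : ↥D.B × ↥D.B, g p.1 p.2 = ∑ e : ↥D.B, ∑ f : ↥D.B, g e f := by
    intro g
    rw [← Finset.univ_product_univ, Finset.sum_product]
  rw [hprod (fun e f => TM D S e f * EM D e f),
    hprod (fun e f => TM D S e f ^ 2),
    hprod (fun e f => EM D e f ^ 2)] at hcs
  -- identify the three sums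
  have hTE : ∑ e : ↥D.B, ∑ f : ↥D.B, TM D S e f * EM D e f = mR * (rR D - 1) := by
    rw [frob_eq, EM_symm, TM_E_trace D hk hs S hres, TM_trace D hk hs S hres]
  have hE2 : ∑ e : ↥D.B, ∑ f : ↥D.B, (EM D e f)^2 = bR D - n0R D * κ := by
    rw [E_frob D hk hs, hBcard, vR_eq D hk]
  have hE2nonneg : (0:ℝ) ≤ bR D - n0R D * κ := by
    rw [← hE2]
    refine Finset.sum_nonneg (fun e _ => Finset.sum_nonneg (fun f _ => sq_nonneg _))
  have hT2 := T_frob_bound D hk hs S hres hcomp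
  rw [hTE, hE2] at hcs
  -- assemble the inequality in the shape of final_arith
  have hrm1 : rR D - 1 = σ * κ := by unfold rR; ring
  have hc'eq : (bR D - n0R D)/(n0R D)^2 = (σ*κ)/(σ*κ-σ+1) := by
    have hb' : bR D = (σ*κ+1)*(σ*κ-σ+1) := rfl
    have hn' : n0R D = σ*κ-σ+1 := rfl
    rw [hb', hn']
    rw [div_eq_div_iff (by positivity) (by nlinarith)]
    ring
  have hEval : bR D - n0R D * κ = (σ*κ-σ+1)*(σ*κ-κ+1) := by
    have hb' : bR D = (σ*κ+1)*(σ*κ-σ+1) := rfl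
    have hn' : n0R D = σ*κ-σ+1 := rfl
    rw [hb', hn']
    ring
  have hkey : (mR*(σ*κ))^2 ≤ (mR*(σ*κ) + mR*(mR-1)*((σ*κ)/(σ*κ-σ+1)))
      * ((σ*κ-σ+1)*(σ*κ-κ+1)) := by
    have hle1 : (mR*(σ*κ))^2 ≤ (∑ e : ↥D.B, ∑ f : ↥D.B, (TM D S e f)^2)
        * (bR D - n0R D * κ) := by
      rw [← hrm1]; exact hcs
    have hle2 : (∑ e : ↥D.B, ∑ f : ↥D.B, (TM D S e f)^2) * (bR D - n0R D * κ)
        ≤ (mR * (mR * ((bR D - n0R D)/(n0R D)^2) + ((rR D - 1) - (bR D - n0R D)/(n0R D)^2)))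
          * (bR D - n0R D * κ) := by
      exact mul_le_mul_of_nonneg_right hT2 hE2nonneg
    have heq3 : (mR * (mR * ((bR D - n0R D)/(n0R D)^2) + ((rR D - 1) - (bR D - n0R D)/(n0R D)^2)))
          * (bR D - n0R D * κ)
        = (mR*(σ*κ) + mR*(mR-1)*((σ*κ)/(σ*κ-σ+1))) * ((σ*κ-σ+1)*(σ*κ-κ+1)) := by
      rw [hc'eq, hEval, hrm1]
      ring
    linarith
  have hfinal := final_arith σ κ mR hσ2 hκ2 hmR1 hkey
  -- back to ℕ
  have hcast : (((D.s * D.k - D.k + 1) * D.s : ℕ) : ℝ) = (σ*κ - κ + 1)*σ := by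
    have h : D.k ≤ D.s*D.k := Nat.le_mul_of_pos_left _ (by omega)
    push_cast [Nat.cast_sub h]
    ring
  have : (S.card : ℝ) ≤ (((D.s * D.k - D.k + 1) * D.s : ℕ) : ℝ) := by
    rw [hcast]; exact hfinal
  exact_mod_cast this
end

section
/- A 2-((sk-s+1)k, k, 1) design D admits a set of (sk-k+1)·s pairwise compatible resolutions if and only if there exists a projective plane of order q = sk in which D is embeddable as a maximal arc of degree k (i.e., the point set of D maps to a set of (sk-s+1)k points of the plane meeting every line in k or 0 points, with blocks being the nonempty line intersections). -/
/-- A finite projective plane of order `q`. -/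
structure ProjPlane (P L : Type) where
  finP : Finite P
  finL : Finite L
  incid : P → L → Prop
  q : ℕ
  join : ∀ p₁ p₂ : P, p₁ ≠ p₂ → ∃! l : L, incid p₁ l ∧ incid p₂ l
  meet : ∀ l₁ l₂ : L, l₁ ≠ l₂ → ∃! p : P, incid p l₁ ∧ incid p l₂
  point_deg : ∀ p : P, {l : L | incid p l}.ncard = q + 1
  line_deg : ∀ l : L, {p : P | incid p l}.ncard = q + 1

/-- The point set of a line. -/
def ProjPlane.lineSet {P L : Type} (Pl : ProjPlane P L) (l : L) : Set P :=
  {p : P | Pl.incid p l}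

/-- `D` is embeddable in the plane `Pl` as a maximal arc of degree `k` via an
injection of its points whose image meets every line in `k` or `0` points,
the blocks of `D` being exactly the nonempty line intersections. -/
def EmbeddableAsMaxArc {α : Type} [DecidableEq α] (D : ArcDesign α)
    {P L : Type} (Pl : ProjPlane P L) : Prop :=
  ∃ f : α → P, Set.InjOn f ↑D.X ∧
    (∀ l : L, (Pl.lineSet l ∩ f '' ↑D.X).ncard = D.k ∨
      (Pl.lineSet l ∩ f '' ↑D.X).ncard = 0) ∧
    (∀ b : Finset α, b ∈ D.B ↔ b ⊆ D.X ∧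
      (f '' ↑b).Nonempty ∧ ∃ l : L, f '' ↑b = Pl.lineSet l ∩ f '' ↑D.X)


section Base
variable {α : Type} [DecidableEq α] (D : ArcDesign α)

/-- blocks through a point -/
def pb (x : α) : Finset (Finset α) := D.B.filter (fun b => x ∈ b)

variable (hs : 2 ≤ D.s) (hk : 2 ≤ D.k)

include hk in
lemma hsk : D.s ≤ D.s * D.k := Nat.le_mul_of_pos_right _ (by omega)
include hs in
lemma hks : D.k ≤ D.s * D.k := Nat.le_mul_of_pos_left _ (by omega)

include hk in
lemma block_nonempty {b : Finset α} (hb : b ∈ D.B) : b.Nonempty := by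
  rw [← Finset.card_pos, D.blocks_card b hb]; omega

lemma block_inter_le {b₁ b₂ : Finset α} (h1 : b₁ ∈ D.B) (h2 : b₂ ∈ D.B)
    (hne : b₁ ≠ b₂) : (b₁ ∩ b₂).card ≤ 1 := by
  by_contra h
  push_neg at h
  obtain ⟨x, hx, y, hy, hxy⟩ := Finset.one_lt_card.mp h
  simp only [Finset.mem_inter] at hx hy
  have hxX := D.blocks_sub b₁ h1 hx.1
  have hyX := D.blocks_sub b₁ h1 hy.1
  obtain ⟨b, _, hu⟩ := D.pair_balance x hxX y hyX hxy
  exact hne ((hu b₁ ⟨h1, hx.1, hy.1⟩).trans (hu b₂ ⟨h2, hx.2, hy.2⟩).symm)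

lemma pb_card (hk : 2 ≤ D.k) {x : α} (hx : x ∈ D.X) : (pb D x).card = D.s * D.k + 1 := by
  classical
  have hdisj : ∀ b₁ ∈ pb D x, ∀ b₂ ∈ pb D x, b₁ ≠ b₂ →
      Disjoint (b₁.erase x) (b₂.erase x) := by
    intro b₁ h1 b₂ h2 hne
    simp only [pb, Finset.mem_filter] at h1 h2
    rw [Finset.disjoint_left]
    intro y hy1 hy2
    have := block_inter_le D h1.1 h2.1 hne
    have h2le : ({x, y} : Finset α) ⊆ b₁ ∩ b₂ := by
      intro z hz
      simp only [Finset.mem_insert, Finset.mem_singleton] at hz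
      rcases hz with rfl | rfl
      · exact Finset.mem_inter.mpr ⟨h1.2, h2.2⟩
      · exact Finset.mem_inter.mpr ⟨Finset.mem_of_mem_erase hy1, Finset.mem_of_mem_erase hy2⟩
    have hcard : ({x, y} : Finset α).card = 2 := by
      rw [Finset.card_insert_of_notMem (by simp [Ne.symm (Finset.ne_of_mem_erase hy1)]),
        Finset.card_singleton]
    have := Finset.card_le_card h2le
    omega
  have hcover : D.X.erase x = (pb D x).biUnion (fun b => b.erase x) := by
    ext y
    simp only [Finset.mem_biUnion, Finset.mem_erase, pb, Finset.mem_filter]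
    constructor
    · rintro ⟨hyx, hyX⟩
      obtain ⟨b, ⟨hb, hxb, hyb⟩, _⟩ := D.pair_balance x hx y hyX (Ne.symm hyx)
      exact ⟨b, ⟨hb, hxb⟩, hyx, hyb⟩
    · rintro ⟨b, ⟨hb, _⟩, hyx, hyb⟩
      exact ⟨hyx, D.blocks_sub b hb hyb⟩
  have hcards : (D.X.erase x).card = (pb D x).card * (D.k - 1) := by
    rw [hcover, Finset.card_biUnion hdisj]
    rw [Finset.sum_congr rfl (fun b hb => ?_), Finset.sum_const, smul_eq_mul]
    simp only [pb, Finset.mem_filter] at hb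
    rw [Finset.card_erase_of_mem hb.2, D.blocks_card b hb.1]
  rw [Finset.card_erase_of_mem hx, D.card_X] at hcards
  have h1 : (D.s * D.k - D.s + 1) * D.k - 1 = (D.s * D.k + 1) * (D.k - 1) := by
    have h2 := hsk D hk
    have h3 : 1 ≤ D.k := by omega
    have h4 : 1 ≤ (D.s * D.k - D.s + 1) * D.k := Nat.mul_pos (by omega) (by omega)
    zify [h2, h3, h4]
    ring
  rw [h1] at hcards
  have : 0 < D.k - 1 := by omega
  exact Nat.eq_of_mul_eq_mul_right this hcards.symm

end Base
section Base2
variable {α : Type} [DecidableEq α] (D : ArcDesign α)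

lemma class_disjoint {C : Finset (Finset α)} (hC : IsParallelClass D C)
    {b₁ b₂ : Finset α} (h1 : b₁ ∈ C) (h2 : b₂ ∈ C) (hne : b₁ ≠ b₂) :
    Disjoint b₁ b₂ := by
  rw [Finset.disjoint_left]
  intro x hx1 hx2
  obtain ⟨b, _, hu⟩ := hC.2 x (D.blocks_sub b₁ (hC.1 h1) hx1)
  exact hne ((hu b₁ ⟨h1, hx1⟩).trans (hu b₂ ⟨h2, hx2⟩).symm)

lemma class_cover {C : Finset (Finset α)} (hC : IsParallelClass D C) :
    D.X = C.biUnion (fun b => b) := by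
  ext x
  simp only [Finset.mem_biUnion]
  constructor
  · intro hx
    obtain ⟨b, ⟨hb, hxb⟩, _⟩ := hC.2 x hx
    exact ⟨b, hb, hxb⟩
  · rintro ⟨b, hb, hxb⟩
    exact D.blocks_sub b (hC.1 hb) hxb

lemma class_card (hk : 2 ≤ D.k) {C : Finset (Finset α)} (hC : IsParallelClass D C) :
    C.card = D.s * D.k - D.s + 1 := by
  have hcov := class_cover D hC
  have : D.X.card = C.card * D.k := by
    rw [hcov, Finset.card_biUnion (fun b h1 b' h2 hne => class_disjoint D hC h1 h2 hne)]
    rw [Finset.sum_congr rfl (fun b hb => D.blocks_card b (hC.1 hb)), Finset.sum_const,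
      smul_eq_mul]
  rw [D.card_X] at this
  exact (Nat.eq_of_mul_eq_mul_right (by omega : 0 < D.k) this.symm)

lemma block_count (hk : 2 ≤ D.k) :
    D.B.card = (D.s * D.k - D.s + 1) * (D.s * D.k + 1) := by
  classical
  have key : D.B.card * D.k = D.X.card * (D.s * D.k + 1) := by
    calc D.B.card * D.k = ∑ b ∈ D.B, b.card := by
          rw [Finset.sum_congr rfl (fun b hb => D.blocks_card b hb), Finset.sum_const,
            smul_eq_mul, mul_comm]
    _ = ∑ b ∈ D.B, ∑ x ∈ D.X, (if x ∈ b then 1 else 0) := by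
          refine Finset.sum_congr rfl (fun b hb => ?_)
          have hfb : D.X.filter (fun x => x ∈ b) = b := by
            ext x
            simp only [Finset.mem_filter]
            exact ⟨fun h => h.2, fun h => ⟨D.blocks_sub b hb h, h⟩⟩
          rw [← Finset.card_filter, hfb]
    _ = ∑ x ∈ D.X, ∑ b ∈ D.B, (if x ∈ b then 1 else 0) := Finset.sum_comm
    _ = ∑ x ∈ D.X, (pb D x).card := by
          refine Finset.sum_congr rfl (fun x hx => ?_)
          rw [pb, Finset.card_filter]
    _ = D.X.card * (D.s * D.k + 1) := by
          rw [Finset.sum_congr rfl (fun x hx => pb_card D hk hx), Finset.sum_const,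
            smul_eq_mul]
  rw [D.card_X] at key
  have : (D.s * D.k - D.s + 1) * D.k * (D.s * D.k + 1)
      = ((D.s * D.k - D.s + 1) * (D.s * D.k + 1)) * D.k := by ring
  rw [this] at key
  exact Nat.eq_of_mul_eq_mul_right (by omega : 0 < D.k) key

lemma resolution_card (hk : 2 ≤ D.k) {R : Finset (Finset (Finset α))}
    (hR : IsResolution D R) : R.card = D.s * D.k + 1 := by
  have hdisj : ∀ C₁ ∈ R, ∀ C₂ ∈ R, C₁ ≠ C₂ → Disjoint C₁ C₂ := by
    intro C₁ h1 C₂ h2 hne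
    rw [Finset.disjoint_left]
    intro b hb1 hb2
    obtain ⟨C, _, hu⟩ := hR.2 b ((hR.1 C₁ h1).1 hb1)
    exact hne ((hu C₁ ⟨h1, hb1⟩).trans (hu C₂ ⟨h2, hb2⟩).symm)
  have hcov : D.B = R.biUnion (fun C => C) := by
    ext b
    simp only [Finset.mem_biUnion]
    constructor
    · intro hb
      obtain ⟨C, ⟨hC, hbC⟩, _⟩ := hR.2 b hb
      exact ⟨C, hC, hbC⟩
    · rintro ⟨C, hC, hbC⟩
      exact (hR.1 C hC).1 hbC
  have : D.B.card = R.card * (D.s * D.k - D.s + 1) := by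
    rw [hcov, Finset.card_biUnion hdisj,
      Finset.sum_congr rfl (fun C hC => class_card D hk (hR.1 C hC)), Finset.sum_const,
      smul_eq_mul]
  rw [block_count D hk] at this
  have hpos : 0 < D.s * D.k - D.s + 1 := by omega
  rw [mul_comm (D.s * D.k - D.s + 1) (D.s * D.k + 1)] at this
  exact (Nat.eq_of_mul_eq_mul_right hpos this.symm)

end Base2
section Forward
variable {α : Type} [DecidableEq α]

/-- all parallel classes occurring in `S` -/
def allC (S : Finset (Finset (Finset (Finset α)))) : Finset (Finset (Finset α)) :=
  S.biUnion (fun R => R)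

/-- number of resolutions of `S` containing a given class -/
def dS (S : Finset (Finset (Finset (Finset α)))) (C : Finset (Finset α)) : ℕ :=
  (S.filter (fun R => C ∈ R)).card

variable {D : ArcDesign α} {S : Finset (Finset (Finset (Finset α)))}

lemma m_ge3 (hs : 2 ≤ D.s) (hk : 2 ≤ D.k) : 3 ≤ D.s * D.k - D.s + 1 := by
  have : D.s * 2 ≤ D.s * D.k := Nat.mul_le_mul_left _ hk
  omega

lemma res_class_disjoint {R : Finset (Finset (Finset α))} (hR : IsResolution D R)
    {C₁ C₂ : Finset (Finset α)} (h1 : C₁ ∈ R) (h2 : C₂ ∈ R) (hne : C₁ ≠ C₂) :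
    Disjoint C₁ C₂ := by
  rw [Finset.disjoint_left]
  intro b hb1 hb2
  obtain ⟨C, _, hu⟩ := hR.2 b ((hR.1 C₁ h1).1 hb1)
  exact hne ((hu C₁ ⟨h1, hb1⟩).trans (hu C₂ ⟨h2, hb2⟩).symm)

lemma shared_unique (hs : 2 ≤ D.s) (hk : 2 ≤ D.k)
    (hSres : ∀ R ∈ S, IsResolution D R)
    (hScomp : ∀ R₁ ∈ S, ∀ R₂ ∈ S, R₁ ≠ R₂ → Compatible D R₁ R₂)
    {R₁ R₂ : Finset (Finset (Finset α))} (h1 : R₁ ∈ S) (h2 : R₂ ∈ S) (hne : R₁ ≠ R₂) :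
    ∃! C, C ∈ R₁ ∧ C ∈ R₂ := by
  obtain ⟨C, hC1, hC2, hcond⟩ := hScomp R₁ h1 R₂ h2 hne
  refine ⟨C, ⟨hC1, hC2⟩, ?_⟩
  rintro C' ⟨h1', h2'⟩
  by_contra hne'
  have hle := hcond C' h1' C' h2' (by tauto)
  rw [Finset.inter_self] at hle
  have hm := class_card D hk ((hSres R₁ h1).1 C' h1')
  have := m_ge3 hs hk (D := D)
  omega

/-- any two distinct classes of `S` share at most one block -/
lemma class_inter_le (hs : 2 ≤ D.s) (hk : 2 ≤ D.k)
    (hSres : ∀ R ∈ S, IsResolution D R)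
    (hScomp : ∀ R₁ ∈ S, ∀ R₂ ∈ S, R₁ ≠ R₂ → Compatible D R₁ R₂)
    {C₁ C₂ : Finset (Finset α)} (h1 : C₁ ∈ allC S) (h2 : C₂ ∈ allC S)
    (hne : C₁ ≠ C₂) : (C₁ ∩ C₂).card ≤ 1 := by
  simp only [allC, Finset.mem_biUnion] at h1 h2
  obtain ⟨R₁, hR1, hC1⟩ := h1
  obtain ⟨R₂, hR2, hC2⟩ := h2
  by_cases hcase : ∃ R ∈ S, C₁ ∈ R ∧ C₂ ∈ R
  · obtain ⟨R, hR, hC1', hC2'⟩ := hcase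
    rw [Finset.disjoint_iff_inter_eq_empty.mp
      (res_class_disjoint (hSres R hR) hC1' hC2' hne)]
    simp
  · have hRne : R₁ ≠ R₂ := by
      rintro rfl
      exact hcase ⟨R₁, hR1, hC1, hC2⟩
    obtain ⟨C, _, _, hcond⟩ := hScomp R₁ hR1 R₂ hR2 hRne
    exact hcond C₁ hC1 C₂ hC2 (by rintro ⟨rfl, rfl⟩; exact hne rfl)

/-- each resolution of `S` contributes exactly one class containing a given block -/
lemma res_unique_class (hSres : ∀ R ∈ S, IsResolution D R)
    {R : Finset (Finset (Finset α))} (hR : R ∈ S) {b : Finset α} (hb : b ∈ D.B) :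
    ∃! C, C ∈ R ∧ b ∈ C := (hSres R hR).2 b hb

end Forward
section Forward2
variable {α : Type} [DecidableEq α]

/-- classes of `S` containing a block -/
def Cb (S : Finset (Finset (Finset (Finset α)))) (b : Finset α) :
    Finset (Finset (Finset α)) := (allC S).filter (fun C => b ∈ C)

variable {D : ArcDesign α} {S : Finset (Finset (Finset (Finset α)))}

lemma allC_isParallel (hSres : ∀ R ∈ S, IsResolution D R)
    {C : Finset (Finset α)} (hC : C ∈ allC S) : IsParallelClass D C := by
  simp only [allC, Finset.mem_biUnion] at hC
  obtain ⟨R, hR, hCR⟩ := hC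
  exact (hSres R hR).1 C hCR

lemma mem_allC {C : Finset (Finset α)} {R : Finset (Finset (Finset α))}
    (hR : R ∈ S) (hC : C ∈ R) : C ∈ allC S :=
  Finset.mem_biUnion.mpr ⟨R, hR, hC⟩

/-- F3 : for each block, the multiplicities of the classes through it sum to |S| -/
lemma sum_d_block (hSres : ∀ R ∈ S, IsResolution D R) {b : Finset α} (hb : b ∈ D.B) :
    ∑ C ∈ Cb S b, dS S C = S.card := by
  classical
  have h1 : ∀ C ∈ Cb S b, dS S C = ∑ R ∈ S, (if C ∈ R then 1 else 0) := by
    intro C _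
    rw [dS, Finset.card_filter]
  rw [Finset.sum_congr rfl h1, Finset.sum_comm]
  have h2 : ∀ R ∈ S, (∑ C ∈ Cb S b, (if C ∈ R then 1 else 0)) = 1 := by
    intro R hR
    obtain ⟨C₀, ⟨hC₀R, hbC₀⟩, hu⟩ := (hSres R hR).2 b hb
    rw [← Finset.card_filter]
    rw [Finset.card_eq_one]
    refine ⟨C₀, ?_⟩
    ext C
    simp only [Cb, Finset.mem_filter, Finset.mem_singleton]
    constructor
    · rintro ⟨⟨_, hbC⟩, hCR⟩
      exact hu C ⟨hCR, hbC⟩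
    · rintro rfl
      exact ⟨⟨mem_allC hR hC₀R, hbC₀⟩, hC₀R⟩
  rw [Finset.sum_congr rfl h2, Finset.sum_const, smul_eq_mul, mul_one]

/-- blocks disjoint from a block `b` -/
def Db (D : ArcDesign α) (b : Finset α) : Finset (Finset α) :=
  D.B.filter (fun b' => b' ∩ b = ∅)

lemma Db_card (hs : 2 ≤ D.s) (hk : 2 ≤ D.k) {b : Finset α} (hb : b ∈ D.B) :
    (Db D b).card = (D.s * D.k - D.s) * (D.s * D.k - D.k + 1) := by
  classical
  have hMeq : D.B.filter (fun b' => (b' ∩ b).Nonempty)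
      = insert b (b.biUnion (fun x => (pb D x).erase b)) := by
    ext b'
    simp only [Finset.mem_filter, Finset.mem_insert, Finset.mem_biUnion, Finset.mem_erase,
      pb]
    
    constructor
    · rintro ⟨hb', x, hx⟩
      rw [Finset.mem_inter] at hx
      by_cases h : b' = b
      · exact Or.inl h
      · exact Or.inr ⟨x, hx.2, h, hb', hx.1⟩
    · rintro (rfl | ⟨x, hxb, hne, hmem⟩)
      · obtain ⟨x, hx⟩ := block_nonempty D hk hb
        exact ⟨hb, x, Finset.mem_inter.mpr ⟨hx, hx⟩⟩
      · exact ⟨hmem.1, x, Finset.mem_inter.mpr ⟨hmem.2, hxb⟩⟩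
  have hdisj : ∀ x ∈ b, ∀ y ∈ b, x ≠ y →
      Disjoint ((pb D x).erase b) ((pb D y).erase b) := by
    intro x hx y hy hxy
    rw [Finset.disjoint_left]
    intro b' h1 h2
    rw [Finset.mem_erase, pb, Finset.mem_filter] at h1 h2
    have hint : ({x, y} : Finset α) ⊆ b' ∩ b := by
      intro z hz
      simp only [Finset.mem_insert, Finset.mem_singleton] at hz
      rcases hz with rfl | rfl
      · exact Finset.mem_inter.mpr ⟨h1.2.2, hx⟩
      · exact Finset.mem_inter.mpr ⟨h2.2.2, hy⟩
    have hc2 : ({x, y} : Finset α).card = 2 := by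
      rw [Finset.card_insert_of_notMem (by simp [hxy]), Finset.card_singleton]
    have := Finset.card_le_card hint
    have := block_inter_le D h1.2.1 hb h1.1
    omega
  have hbnotin : b ∉ b.biUnion (fun x => (pb D x).erase b) := by
    simp only [Finset.mem_biUnion, Finset.mem_erase]
    rintro ⟨x, _, hne, _⟩
    exact hne rfl
  have hMcard : (D.B.filter (fun b' => (b' ∩ b).Nonempty)).card
      = 1 + D.k * (D.s * D.k) := by
    rw [hMeq, Finset.card_insert_of_notMem hbnotin, Finset.card_biUnion hdisj]
    have : ∀ x ∈ b, ((pb D x).erase b).card = D.s * D.k := by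
      intro x hx
      have hbm : b ∈ pb D x := by
        rw [pb, Finset.mem_filter]; exact ⟨hb, hx⟩
      rw [Finset.card_erase_of_mem hbm, pb_card D hk (D.blocks_sub b hb hx)]
      omega
    rw [Finset.sum_congr rfl this, Finset.sum_const, smul_eq_mul, D.blocks_card b hb]
    omega
  classical
  have hsplit := Finset.card_filter_add_card_filter_not
    (s := D.B) (p := fun b' => (b' ∩ b).Nonempty)
  have hDbe : D.B.filter (fun b' => ¬ (b' ∩ b).Nonempty) = Db D b := by
    apply Finset.filter_congr
    intro b' _
    simp [Finset.not_nonempty_iff_eq_empty]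
  rw [hDbe, hMcard, block_count D hk] at hsplit
  have h2 : D.s * 2 ≤ D.s * D.k := Nat.mul_le_mul_left _ hk
  have h3 : 2 * D.k ≤ D.s * D.k := Nat.mul_le_mul_right _ hs
  have expand : (D.s * D.k - D.s + 1) * (D.s * D.k + 1)
      = 1 + D.k * (D.s * D.k) + (D.s * D.k - D.s) * (D.s * D.k - D.k + 1) := by
    have e2 := hsk D hk
    have e3 := hks D hs
    zify [e2, e3]
    ring
  omega

end Forward2
section Forward3
variable {α : Type} [DecidableEq α] {D : ArcDesign α} {S : Finset (Finset (Finset (Finset α)))}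

/-- distinct classes both containing `b` intersect exactly in `{b}` -/
lemma classes_through_inter (hs : 2 ≤ D.s) (hk : 2 ≤ D.k)
    (hSres : ∀ R ∈ S, IsResolution D R)
    (hScomp : ∀ R₁ ∈ S, ∀ R₂ ∈ S, R₁ ≠ R₂ → Compatible D R₁ R₂)
    {b : Finset α} {C₁ C₂ : Finset (Finset α)} (h1 : C₁ ∈ Cb S b) (h2 : C₂ ∈ Cb S b)
    (hne : C₁ ≠ C₂) : C₁ ∩ C₂ = {b} := by
  rw [Cb, Finset.mem_filter] at h1 h2
  have hle := class_inter_le hs hk hSres hScomp h1.1 h2.1 hne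
  have hbm : b ∈ C₁ ∩ C₂ := Finset.mem_inter.mpr ⟨h1.2, h2.2⟩
  have : 1 ≤ (C₁ ∩ C₂).card := Finset.card_pos.mpr ⟨b, hbm⟩
  have hcard : (C₁ ∩ C₂).card = 1 := le_antisymm hle this
  rw [Finset.card_eq_one] at hcard
  obtain ⟨a, ha⟩ := hcard
  rw [ha] at hbm ⊢
  rw [Finset.mem_singleton] at hbm
  rw [hbm]

/-- the erased classes through `b` sit disjointly inside `Db D b` -/
lemma pack_sub (hSres : ∀ R ∈ S, IsResolution D R) {b : Finset α} :
    (Cb S b).biUnion (fun C => C.erase b) ⊆ Db D b := by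
  intro b' hb'
  simp only [Finset.mem_biUnion, Finset.mem_erase] at hb'
  obtain ⟨C, hC, hne, hb'C⟩ := hb'
  rw [Cb, Finset.mem_filter] at hC
  have hP := allC_isParallel hSres hC.1
  rw [Db, Finset.mem_filter]
  refine ⟨hP.1 hb'C, ?_⟩
  rw [← Finset.disjoint_iff_inter_eq_empty]
  exact class_disjoint D hP hb'C hC.2 hne

lemma pack_card (hs : 2 ≤ D.s) (hk : 2 ≤ D.k)
    (hSres : ∀ R ∈ S, IsResolution D R)
    (hScomp : ∀ R₁ ∈ S, ∀ R₂ ∈ S, R₁ ≠ R₂ → Compatible D R₁ R₂) {b : Finset α} :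
    ((Cb S b).biUnion (fun C => C.erase b)).card = (Cb S b).card * (D.s * D.k - D.s) := by
  rw [Finset.card_biUnion]
  · rw [Finset.sum_congr rfl (fun C hC => ?_), Finset.sum_const, smul_eq_mul]
    have hCb := hC
    rw [Cb, Finset.mem_filter] at hCb
    rw [Finset.card_erase_of_mem hCb.2, class_card D hk (allC_isParallel hSres hCb.1)]
    omega
  · intro C₁ h1 C₂ h2 hne
    have := classes_through_inter hs hk hSres hScomp h1 h2 hne
    rw [Function.onFun, Finset.disjoint_left]
    intro b' hb1 hb2
    rw [Finset.mem_erase] at hb1 hb2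
    have : b' ∈ C₁ ∩ C₂ := Finset.mem_inter.mpr ⟨hb1.2, hb2.2⟩
    rw [classes_through_inter hs hk hSres hScomp h1 h2 hne, Finset.mem_singleton] at this
    exact hb1.1 this

/-- F4 : the number of classes through a block is at most `T` -/
lemma t_le (hs : 2 ≤ D.s) (hk : 2 ≤ D.k)
    (hSres : ∀ R ∈ S, IsResolution D R)
    (hScomp : ∀ R₁ ∈ S, ∀ R₂ ∈ S, R₁ ≠ R₂ → Compatible D R₁ R₂)
    {b : Finset α} (hb : b ∈ D.B) : (Cb S b).card ≤ D.s * D.k - D.k + 1 := by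
  have h1 := Finset.card_le_card (pack_sub hSres (b := b) (S := S))
  rw [pack_card hs hk hSres hScomp, Db_card hs hk hb] at h1
  have hpos : 0 < D.s * D.k - D.s := by
    have : D.s * 2 ≤ D.s * D.k := Nat.mul_le_mul_left _ hk
    omega
  rw [mul_comm (D.s * D.k - D.s) (D.s * D.k - D.k + 1)] at h1
  exact Nat.le_of_mul_le_mul_right h1 hpos

/-- F5a : total class multiplicity -/
lemma sum_d_total (hk : 2 ≤ D.k) (hSres : ∀ R ∈ S, IsResolution D R) :
    ∑ C ∈ allC S, dS S C = S.card * (D.s * D.k + 1) := by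
  classical
  have h1 : ∀ C ∈ allC S, dS S C = ∑ R ∈ S, (if C ∈ R then 1 else 0) := by
    intro C _
    rw [dS, Finset.card_filter]
  rw [Finset.sum_congr rfl h1, Finset.sum_comm]
  have h2 : ∀ R ∈ S, (∑ C ∈ allC S, (if C ∈ R then 1 else 0)) = D.s * D.k + 1 := by
    intro R hR
    rw [← Finset.card_filter]
    have : (allC S).filter (fun C => C ∈ R) = R := by
      ext C
      simp only [Finset.mem_filter]
      exact ⟨fun h => h.2, fun h => ⟨mem_allC hR h, h⟩⟩
    rw [this, resolution_card D hk (hSres R hR)]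
  rw [Finset.sum_congr rfl h2, Finset.sum_const, smul_eq_mul]

/-- F5b : sum of squared multiplicities -/
lemma sum_d_sq (hs : 2 ≤ D.s) (hk : 2 ≤ D.k)
    (hSres : ∀ R ∈ S, IsResolution D R)
    (hScomp : ∀ R₁ ∈ S, ∀ R₂ ∈ S, R₁ ≠ R₂ → Compatible D R₁ R₂) :
    ∑ C ∈ allC S, dS S C * dS S C
      = S.card * (D.s * D.k + 1) + S.card * (S.card - 1) := by
  classical
  have h1 : ∀ C ∈ allC S, dS S C * dS S C
      = ∑ R ∈ S, ∑ R' ∈ S, (if C ∈ R then 1 else 0) * (if C ∈ R' then 1 else 0) := by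
    intro C _
    rw [dS, Finset.card_filter, Finset.sum_mul_sum]
  rw [Finset.sum_congr rfl h1, Finset.sum_comm]
  have h2 : ∀ R ∈ S, (∑ C ∈ allC S, ∑ R' ∈ S,
      (if C ∈ R then 1 else 0) * (if C ∈ R' then 1 else 0))
      = (D.s * D.k + 1) + (S.card - 1) := by
    intro R hR
    rw [Finset.sum_comm]
    have h3 : ∀ R' ∈ S, (∑ C ∈ allC S, (if C ∈ R then 1 else 0) * (if C ∈ R' then 1 else 0))
        = if R' = R then D.s * D.k + 1 else 1 := by
      intro R' hR'
      have hterm : ∀ C ∈ allC S, (if C ∈ R then 1 else 0) * (if C ∈ R' then 1 else 0)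
          = if C ∈ R ∧ C ∈ R' then 1 else 0 := by
        intro C _
        by_cases hA : C ∈ R <;> by_cases hB : C ∈ R' <;> simp [hA, hB]
      rw [Finset.sum_congr rfl hterm, ← Finset.card_filter]
      by_cases hRR : R' = R
      · subst hRR
        have : (allC S).filter (fun C => C ∈ R' ∧ C ∈ R') = R' := by
          ext C
          simp only [Finset.mem_filter, and_self]
          exact ⟨fun h => h.2, fun h => ⟨mem_allC hR h, h⟩⟩
        rw [if_pos rfl, this, resolution_card D hk (hSres R' hR)]
      · rw [if_neg hRR]
        obtain ⟨C₀, hC₀, hu⟩ := shared_unique hs hk hSres hScomp hR hR'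
          (fun h => hRR h.symm)
        rw [Finset.card_eq_one]
        refine ⟨C₀, ?_⟩
        ext C
        simp only [Finset.mem_filter, Finset.mem_singleton]
        constructor
        · rintro ⟨_, hCR, hCR'⟩
          exact hu C ⟨hCR, hCR'⟩
        · rintro rfl
          exact ⟨mem_allC hR hC₀.1, hC₀.1, hC₀.2⟩
    rw [Finset.sum_congr rfl h3, ← Finset.add_sum_erase _ _ hR, if_pos rfl]
    have : ∑ x ∈ S.erase R, (if x = R then D.s * D.k + 1 else 1) = S.card - 1 := by
      rw [Finset.sum_congr rfl (fun x hx => if_neg (Finset.ne_of_mem_erase hx)),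
        Finset.sum_const, smul_eq_mul, mul_one, Finset.card_erase_of_mem hR]
    rw [this]
  rw [Finset.sum_congr rfl h2, Finset.sum_const, smul_eq_mul, Nat.mul_add]

end Forward3
section Forward4
variable {α : Type} [DecidableEq α] {D : ArcDesign α} {S : Finset (Finset (Finset (Finset α)))}

lemma sum_t_eq (hk : 2 ≤ D.k) (hSres : ∀ R ∈ S, IsResolution D R) :
    ∑ b ∈ D.B, (Cb S b).card = (allC S).card * (D.s * D.k - D.s + 1) := by
  classical
  have h1 : ∀ b ∈ D.B, (Cb S b).card = ∑ C ∈ allC S, (if b ∈ C then 1 else 0) := by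
    intro b _
    rw [Cb, Finset.card_filter]
  rw [Finset.sum_congr rfl h1, Finset.sum_comm]
  have h2 : ∀ C ∈ allC S, (∑ b ∈ D.B, (if b ∈ C then 1 else 0))
      = D.s * D.k - D.s + 1 := by
    intro C hC
    rw [← Finset.card_filter]
    have hP := allC_isParallel hSres hC
    have : D.B.filter (fun b => b ∈ C) = C := by
      ext b
      simp only [Finset.mem_filter]
      exact ⟨fun h => h.2, fun h => ⟨hP.1 h, h⟩⟩
    rw [this, class_card D hk hP]
  rw [Finset.sum_congr rfl h2, Finset.sum_const, smul_eq_mul]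

lemma n_le (hs : 2 ≤ D.s) (hk : 2 ≤ D.k)
    (hSres : ∀ R ∈ S, IsResolution D R)
    (hScomp : ∀ R₁ ∈ S, ∀ R₂ ∈ S, R₁ ≠ R₂ → Compatible D R₁ R₂) :
    (allC S).card ≤ (D.s * D.k + 1) * (D.s * D.k - D.k + 1) := by
  have h1 : ∑ b ∈ D.B, (Cb S b).card ≤ D.B.card * (D.s * D.k - D.k + 1) := by
    have := Finset.sum_le_sum (fun b hb => t_le hs hk hSres hScomp hb)
    rwa [Finset.sum_const, smul_eq_mul] at this
  rw [sum_t_eq hk hSres, block_count D hk] at h1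
  have hm : 0 < D.s * D.k - D.s + 1 := by omega
  have hre : (D.s * D.k - D.s + 1) * (D.s * D.k + 1) * (D.s * D.k - D.k + 1)
      = (D.s * D.k - D.s + 1) * ((D.s * D.k + 1) * (D.s * D.k - D.k + 1)) := by ring
  rw [hre, mul_comm ((allC S).card) (D.s * D.k - D.s + 1)] at h1
  exact Nat.le_of_mul_le_mul_left h1 hm

/-- the central regularity: every class lies in exactly `s` resolutions of `S`. -/
lemma d_eq_s (hs : 2 ≤ D.s) (hk : 2 ≤ D.k)
    (hScard : S.card = (D.s * D.k - D.k + 1) * D.s)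
    (hSres : ∀ R ∈ S, IsResolution D R)
    (hScomp : ∀ R₁ ∈ S, ∀ R₂ ∈ S, R₁ ≠ R₂ → Compatible D R₁ R₂) :
    ∀ C ∈ allC S, dS S C = D.s := by
  classical
  have hks' := hks D hs
  have hsk' := hsk D hk
  set σ := (D.s : ℤ) with hσ
  set κ := (D.k : ℤ)
  have hT : ((D.s * D.k - D.k + 1 : ℕ) : ℤ) = σ * κ - κ + 1 := by push_cast [hks']; ring
  have he : ((S.card : ℕ) : ℤ) = (σ * κ - κ + 1) * σ := by
    rw [hScard]; push_cast [hks']; ring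
  have hA : ((∑ C ∈ allC S, dS S C : ℕ) : ℤ) = ((σ * κ - κ + 1) * σ) * (σ * κ + 1) := by
    rw [sum_d_total hk hSres]; push_cast; rw [he]
  have he1 : 1 ≤ S.card := by
    rw [hScard]
    have : 1 ≤ D.s * D.k - D.k + 1 := by omega
    nlinarith
  have hQ : ((∑ C ∈ allC S, dS S C * dS S C : ℕ) : ℤ)
      = ((σ * κ - κ + 1) * σ) * (σ * κ + 1)
        + ((σ * κ - κ + 1) * σ) * ((σ * κ - κ + 1) * σ - 1) := by
    rw [sum_d_sq hs hk hSres hScomp]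
    push_cast [he1]
    rw [he]
  have hn : ((allC S).card : ℤ) ≤ (σ * κ + 1) * (σ * κ - κ + 1) := by
    have := n_le hs hk hSres hScomp
    calc ((allC S).card : ℤ) ≤ (((D.s * D.k + 1) * (D.s * D.k - D.k + 1) : ℕ) : ℤ) := by
          exact_mod_cast this
    _ = (σ * κ + 1) * (σ * κ - κ + 1) := by push_cast [hks']; ring
  -- variance sum
  have hexp : ∑ C ∈ allC S, ((dS S C : ℤ) - σ) ^ 2
      = ((∑ C ∈ allC S, dS S C * dS S C : ℕ) : ℤ)
        - 2 * σ * ((∑ C ∈ allC S, dS S C : ℕ) : ℤ) + ((allC S).card : ℤ) * σ ^ 2 := by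
    push_cast
    rw [Finset.sum_congr rfl (fun C _ => (by ring :
      ((dS S C : ℤ) - σ) ^ 2 = (dS S C : ℤ) * (dS S C : ℤ) - 2 * σ * (dS S C : ℤ) + σ ^ 2))]
    rw [Finset.sum_add_distrib, Finset.sum_sub_distrib, Finset.sum_const, ← Finset.mul_sum,
      nsmul_eq_mul]
  have hle0 : ∑ C ∈ allC S, ((dS S C : ℤ) - σ) ^ 2 ≤ 0 := by
    rw [hexp, hQ, hA]
    have hσ2 : (0 : ℤ) ≤ σ ^ 2 := sq_nonneg σ
    have := mul_le_mul_of_nonneg_right hn hσ2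
    nlinarith [this]
  have hzero : ∀ C ∈ allC S, ((dS S C : ℤ) - σ) ^ 2 = 0 := by
    have hge : (0:ℤ) ≤ ∑ C ∈ allC S, ((dS S C : ℤ) - σ) ^ 2 :=
      Finset.sum_nonneg (fun C _ => sq_nonneg _)
    have heq0 : ∑ C ∈ allC S, ((dS S C : ℤ) - σ) ^ 2 = 0 := le_antisymm hle0 hge
    exact (Finset.sum_eq_zero_iff_of_nonneg (fun C _ => sq_nonneg _)).mp heq0
  intro C hC
  have := hzero C hC
  have h2 : (dS S C : ℤ) = σ := by
    have h := pow_eq_zero_iff (n := 2) (by norm_num) |>.mp this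
    linarith [h]
  rw [hσ] at h2
  exact_mod_cast h2

lemma t_eq (hs : 2 ≤ D.s) (hk : 2 ≤ D.k)
    (hScard : S.card = (D.s * D.k - D.k + 1) * D.s)
    (hSres : ∀ R ∈ S, IsResolution D R)
    (hScomp : ∀ R₁ ∈ S, ∀ R₂ ∈ S, R₁ ≠ R₂ → Compatible D R₁ R₂)
    {b : Finset α} (hb : b ∈ D.B) : (Cb S b).card = D.s * D.k - D.k + 1 := by
  have h1 := sum_d_block hSres hb (S := S)
  have h2 : ∀ C ∈ Cb S b, dS S C = D.s := by
    intro C hC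
    rw [Cb, Finset.mem_filter] at hC
    exact d_eq_s hs hk hScard hSres hScomp C hC.1
  rw [Finset.sum_congr rfl h2, Finset.sum_const, smul_eq_mul, hScard] at h1
  exact Nat.eq_of_mul_eq_mul_right (by omega : 0 < D.s) h1

lemma n_eq (hs : 2 ≤ D.s) (hk : 2 ≤ D.k)
    (hScard : S.card = (D.s * D.k - D.k + 1) * D.s)
    (hSres : ∀ R ∈ S, IsResolution D R)
    (hScomp : ∀ R₁ ∈ S, ∀ R₂ ∈ S, R₁ ≠ R₂ → Compatible D R₁ R₂) :
    (allC S).card = (D.s * D.k - D.k + 1) * (D.s * D.k + 1) := by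
  have h1 := sum_d_total hk hSres (S := S)
  rw [Finset.sum_congr rfl (d_eq_s hs hk hScard hSres hScomp), Finset.sum_const,
    smul_eq_mul, hScard] at h1
  have : (D.s * D.k - D.k + 1) * D.s * (D.s * D.k + 1)
      = ((D.s * D.k - D.k + 1) * (D.s * D.k + 1)) * D.s := by ring
  rw [this] at h1
  exact Nat.eq_of_mul_eq_mul_right (by omega : 0 < D.s) h1

end Forward4
section Forward5
variable {α : Type} [DecidableEq α] {D : ArcDesign α} {S : Finset (Finset (Finset (Finset α)))}

/-- disjoint blocks lie in a unique common class -/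
lemma disjoint_blocks_class (hs : 2 ≤ D.s) (hk : 2 ≤ D.k)
    (hScard : S.card = (D.s * D.k - D.k + 1) * D.s)
    (hSres : ∀ R ∈ S, IsResolution D R)
    (hScomp : ∀ R₁ ∈ S, ∀ R₂ ∈ S, R₁ ≠ R₂ → Compatible D R₁ R₂)
    {b b' : Finset α} (hb : b ∈ D.B) (hb' : b' ∈ D.B) (hbb : b ∩ b' = ∅) (hne : b ≠ b') :
    ∃! C, C ∈ allC S ∧ b ∈ C ∧ b' ∈ C := by
  have hsub := pack_sub hSres (b := b) (S := S)
  have hcard : ((Cb S b).biUnion (fun C => C.erase b)).card = (Db D b).card := by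
    rw [pack_card hs hk hSres hScomp, t_eq hs hk hScard hSres hScomp hb, Db_card hs hk hb,
      mul_comm]
  have hequal : (Cb S b).biUnion (fun C => C.erase b) = Db D b :=
    Finset.eq_of_subset_of_card_le hsub (le_of_eq hcard.symm)
  have hbDb : b' ∈ Db D b := by
    rw [Db, Finset.mem_filter]
    rw [Finset.inter_comm] at hbb
    exact ⟨hb', hbb⟩
  rw [← hequal, Finset.mem_biUnion] at hbDb
  obtain ⟨C, hC, hb'C⟩ := hbDb
  rw [Finset.mem_erase] at hb'C
  rw [Cb, Finset.mem_filter] at hC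
  refine ⟨C, ⟨hC.1, hC.2, hb'C.2⟩, ?_⟩
  rintro C' ⟨hC', hbC', hb'C'⟩
  by_contra hCC
  have := classes_through_inter hs hk hSres hScomp
    (Finset.mem_filter.mpr ⟨hC', hbC'⟩ : C' ∈ Cb S b)
    (Finset.mem_filter.mpr ⟨hC.1, hC.2⟩) hCC
  have hmem : b' ∈ C' ∩ C := Finset.mem_inter.mpr ⟨hb'C', hb'C.2⟩
  rw [this, Finset.mem_singleton] at hmem
  exact hb'C.1 hmem

/-- disjoint classes lie in a unique common resolution -/
lemma disjoint_classes_res (hs : 2 ≤ D.s) (hk : 2 ≤ D.k)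
    (hScard : S.card = (D.s * D.k - D.k + 1) * D.s)
    (hSres : ∀ R ∈ S, IsResolution D R)
    (hScomp : ∀ R₁ ∈ S, ∀ R₂ ∈ S, R₁ ≠ R₂ → Compatible D R₁ R₂)
    {C C' : Finset (Finset α)} (hC : C ∈ allC S) (hC' : C' ∈ allC S)
    (hne : C ≠ C') (hdisj : C ∩ C' = ∅) :
    ∃! R, R ∈ S ∧ C ∈ R ∧ C' ∈ R := by
  classical
  have hP := allC_isParallel hSres hC
  -- uniqueness is easy
  have huniq : ∀ R₁, (R₁ ∈ S ∧ C ∈ R₁ ∧ C' ∈ R₁) → ∀ R₂, (R₂ ∈ S ∧ C ∈ R₂ ∧ C' ∈ R₂)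
      → R₁ = R₂ := by
    rintro R₁ ⟨hR₁, h1, h1'⟩ R₂ ⟨hR₂, h2, h2'⟩
    by_contra hRR
    obtain ⟨C₀, _, hu⟩ := shared_unique hs hk hSres hScomp hR₁ hR₂ hRR
    exact hne ((hu C ⟨h1, h2⟩).trans (hu C' ⟨h1', h2'⟩).symm)
  -- existence via counting
  set Mset := (allC S).filter (fun C'' => C'' ≠ C ∧ (C ∩ C'').Nonempty) with hMdef
  set Rset := (allC S).filter
    (fun C'' => C'' ≠ C ∧ ∃ R ∈ S, C ∈ R ∧ C'' ∈ R) with hRdef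
  have hMeq : Mset = C.biUnion (fun b => (Cb S b).erase C) := by
    ext C''
    simp only [hMdef, Finset.mem_filter, Finset.mem_biUnion, Finset.mem_erase, Cb]
    constructor
    · rintro ⟨hC'', hne'', b, hbm⟩
      rw [Finset.mem_inter] at hbm
      exact ⟨b, hbm.1, hne'', hC'', hbm.2⟩
    · rintro ⟨b, hbC, hne'', hmem⟩
      exact ⟨hmem.1, hne'', ⟨b, Finset.mem_inter.mpr ⟨hbC, hmem.2⟩⟩⟩
  have hMcard : Mset.card = (D.s * D.k - D.s + 1) * (D.s * D.k - D.k) := by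
    rw [hMeq, Finset.card_biUnion]
    · have : ∀ b ∈ C, ((Cb S b).erase C).card = D.s * D.k - D.k := by
        intro b hbC
        have hbB : b ∈ D.B := hP.1 hbC
        have hmemCb : C ∈ Cb S b := by
          rw [Cb, Finset.mem_filter]; exact ⟨hC, hbC⟩
        rw [Finset.card_erase_of_mem hmemCb, t_eq hs hk hScard hSres hScomp hbB]
        omega
      rw [Finset.sum_congr rfl this, Finset.sum_const, smul_eq_mul,
        class_card D hk hP]
    · intro b₁ h1 b₂ h2 hne12
      rw [Function.onFun, Finset.disjoint_left]
      intro C'' hm1 hm2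
      rw [Finset.mem_erase] at hm1 hm2
      rw [Cb, Finset.mem_filter] at hm1 hm2
      have hint := class_inter_le hs hk hSres hScomp hC hm1.2.1 (fun h => hm1.1 h.symm)
      have hsub2 : ({b₁, b₂} : Finset (Finset α)) ⊆ C ∩ C'' := by
        intro z hz
        simp only [Finset.mem_insert, Finset.mem_singleton] at hz
        rcases hz with rfl | rfl
        · exact Finset.mem_inter.mpr ⟨h1, hm1.2.2⟩
        · exact Finset.mem_inter.mpr ⟨h2, hm2.2.2⟩
      have hc2 : ({b₁, b₂} : Finset (Finset α)).card = 2 := by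
        rw [Finset.card_insert_of_notMem (by simp [hne12]), Finset.card_singleton]
      have := Finset.card_le_card hsub2
      omega
  have hReq : Rset = (S.filter (fun R => C ∈ R)).biUnion (fun R => R.erase C) := by
    ext C''
    simp only [hRdef, Finset.mem_filter, Finset.mem_biUnion, Finset.mem_erase]
    constructor
    · rintro ⟨_, hne'', R, hRS, hCR, hC''R⟩
      exact ⟨R, ⟨hRS, hCR⟩, hne'', hC''R⟩
    · rintro ⟨R, ⟨hRS, hCR⟩, hne'', hC''R⟩
      exact ⟨mem_allC hRS hC''R, hne'', R, hRS, hCR, hC''R⟩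
  have hRcard : Rset.card = D.s * (D.s * D.k) := by
    rw [hReq, Finset.card_biUnion]
    · have : ∀ R ∈ S.filter (fun R => C ∈ R), (R.erase C).card = D.s * D.k := by
        intro R hR
        rw [Finset.mem_filter] at hR
        rw [Finset.card_erase_of_mem hR.2, resolution_card D hk (hSres R hR.1)]
        omega
      rw [Finset.sum_congr rfl this, Finset.sum_const, smul_eq_mul]
      have : (S.filter (fun R => C ∈ R)).card = dS S C := rfl
      rw [this, d_eq_s hs hk hScard hSres hScomp C hC]
    · intro R₁ h1 R₂ h2 hne12
      rw [Finset.mem_coe, Finset.mem_filter] at h1 h2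
      rw [Function.onFun, Finset.disjoint_left]
      intro C'' hm1 hm2
      rw [Finset.mem_erase] at hm1 hm2
      obtain ⟨C₀, _, hu⟩ := shared_unique hs hk hSres hScomp h1.1 h2.1 hne12
      exact hm1.1 ((hu C'' ⟨hm1.2, hm2.2⟩).trans (hu C ⟨h1.2, h2.2⟩).symm)
  have hMR : Disjoint Mset Rset := by
    rw [Finset.disjoint_left]
    intro C'' hm hr
    rw [hMdef, Finset.mem_filter] at hm
    rw [hRdef, Finset.mem_filter] at hr
    obtain ⟨R, hRS, hCR, hC''R⟩ := hr.2.2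
    have := res_class_disjoint (hSres R hRS) hCR hC''R (fun h => hm.2.1 h.symm)
    obtain ⟨z, hz⟩ := hm.2.2
    rw [Finset.mem_inter] at hz
    exact Finset.disjoint_left.mp this hz.1 hz.2
  have hCnotin : C ∉ Mset ∪ Rset := by
    rw [Finset.mem_union, hMdef, hRdef]
    simp only [Finset.mem_filter]
    rintro (⟨_, h, _⟩ | ⟨_, h, _⟩) <;> exact h rfl
  have hsubset : insert C (Mset ∪ Rset) ⊆ allC S := by
    intro z hz
    rw [Finset.mem_insert, Finset.mem_union] at hz
    rcases hz with rfl | hz | hz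
    · exact hC
    · exact (Finset.mem_filter.mp hz).1
    · exact (Finset.mem_filter.mp hz).1
  have hcards : (insert C (Mset ∪ Rset)).card = (allC S).card := by
    rw [Finset.card_insert_of_notMem hCnotin, Finset.card_union_of_disjoint hMR,
      hMcard, hRcard, n_eq hs hk hScard hSres hScomp]
    have e2 := hsk D hk
    have e3 := hks D hs
    zify [e2, e3]
    ring
  have hall : insert C (Mset ∪ Rset) = allC S :=
    Finset.eq_of_subset_of_card_le hsubset (le_of_eq hcards.symm)
  -- now locate C'
  have hC'mem : C' ∈ insert C (Mset ∪ Rset) := hall ▸ hC'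
  rw [Finset.mem_insert, Finset.mem_union] at hC'mem
  rcases hC'mem with rfl | hm | hr
  · exact absurd rfl hne
  · rw [hMdef, Finset.mem_filter] at hm
    obtain ⟨z, hz⟩ := hm.2.2
    rw [hdisj] at hz
    exact absurd hz (Finset.notMem_empty z)
  · rw [hRdef, Finset.mem_filter] at hr
    obtain ⟨R, hRS, hCR, hC'R⟩ := hr.2.2
    exact ⟨R, ⟨hRS, hCR, hC'R⟩, fun R' hR' => huniq R' hR' R ⟨hRS, hCR, hC'R⟩⟩

end Forward5
section NcardHelpers

lemma ncard_sum_split {A B : Type} [Finite A] [Finite B] (p : A ⊕ B → Prop) :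
    {x : A ⊕ B | p x}.ncard
      = {a : A | p (Sum.inl a)}.ncard + {b : B | p (Sum.inr b)}.ncard := by
  have hset : {x : A ⊕ B | p x}
      = Sum.inl '' {a : A | p (Sum.inl a)} ∪ Sum.inr '' {b : B | p (Sum.inr b)} := by
    ext x
    cases x with
    | inl a => simp
    | inr b => simp
  rw [hset, Set.ncard_union_eq, Set.ncard_image_of_injective _ Sum.inl_injective,
    Set.ncard_image_of_injective _ Sum.inr_injective]
  · rw [Set.disjoint_left]
    rintro x ⟨a, _, rfl⟩ ⟨b, _, h⟩
    exact Sum.inl_ne_inr h.symm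


lemma ncard_subtype {β : Type} [DecidableEq β] (F : Finset β) (Q : β → Prop) [DecidablePred Q] :
    {y : {x : β // x ∈ F} | Q ↑y}.ncard = (F.filter Q).card := by
  haveI : DecidablePred (fun y : {x : β // x ∈ F} => Q ↑y) := fun y => ‹DecidablePred Q› _
  have hset : {y : {x : β // x ∈ F} | Q ↑y}
      = ((F.attach.filter (fun y => Q ↑y) : Finset {x : β // x ∈ F}) :
          Set {x : β // x ∈ F}) := by
    ext y
    simp
  rw [hset, Set.ncard_coe_finset]
  refine Finset.card_bij (fun y _ => (y : β)) ?_ ?_ ?_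
  · intro y hy
    rw [Finset.mem_filter] at hy
    exact Finset.mem_filter.mpr ⟨y.2, hy.2⟩
  · intro y₁ _ y₂ _ h
    exact Subtype.ext h
  · intro x hx
    rw [Finset.mem_filter] at hx
    exact ⟨⟨x, hx.1⟩, Finset.mem_filter.mpr ⟨Finset.mem_attach _ _, hx.2⟩, rfl⟩

end NcardHelpers
section Forward6
variable {α : Type} [DecidableEq α]

abbrev FwdP (D : ArcDesign α) (S : Finset (Finset (Finset (Finset α)))) : Type :=
  {x : α // x ∈ D.X} ⊕ {C : Finset (Finset α) // C ∈ allC S}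

abbrev FwdL (D : ArcDesign α) (S : Finset (Finset (Finset (Finset α)))) : Type :=
  {b : Finset α // b ∈ D.B} ⊕ {R : Finset (Finset (Finset α)) // R ∈ S}

def fwdIncid (D : ArcDesign α) (S : Finset (Finset (Finset (Finset α)))) :
    FwdP D S → FwdL D S → Prop
  | Sum.inl x, Sum.inl b => x.1 ∈ b.1
  | Sum.inl _, Sum.inr _ => False
  | Sum.inr C, Sum.inl b => b.1 ∈ C.1
  | Sum.inr C, Sum.inr R => C.1 ∈ R.1

instance (D : ArcDesign α) (S : Finset (Finset (Finset (Finset α)))) :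
    Finite (FwdP D S) := by unfold FwdP; infer_instance

instance (D : ArcDesign α) (S : Finset (Finset (Finset (Finset α)))) :
    Finite (FwdL D S) := by unfold FwdL; infer_instance

variable {D : ArcDesign α} {S : Finset (Finset (Finset (Finset α)))}

lemma fwd_join (hs : 2 ≤ D.s) (hk : 2 ≤ D.k)
    (hScard : S.card = (D.s * D.k - D.k + 1) * D.s)
    (hSres : ∀ R ∈ S, IsResolution D R)
    (hScomp : ∀ R₁ ∈ S, ∀ R₂ ∈ S, R₁ ≠ R₂ → Compatible D R₁ R₂) :
    ∀ p₁ p₂ : FwdP D S, p₁ ≠ p₂ →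
      ∃! l : FwdL D S, fwdIncid D S p₁ l ∧ fwdIncid D S p₂ l := by
  rintro (x | C) (y | C') hne
  · -- two design points
    have hxy : (x : α) ≠ (y : α) := fun h => hne (congrArg Sum.inl (Subtype.ext h))
    obtain ⟨b, ⟨hbB, hxb, hyb⟩, hu⟩ := D.pair_balance x.1 x.2 y.1 y.2 hxy
    refine ⟨Sum.inl ⟨b, hbB⟩, ⟨hxb, hyb⟩, ?_⟩
    rintro (b' | R') ⟨h1, h2⟩
    · exact congrArg Sum.inl (Subtype.ext (hu b'.1 ⟨b'.2, h1, h2⟩))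
    · exact h1.elim
  · -- point and class
    have hP := allC_isParallel hSres C'.2
    obtain ⟨b, ⟨hbC, hxb⟩, hu⟩ := hP.2 x.1 x.2
    refine ⟨Sum.inl ⟨b, hP.1 hbC⟩, ⟨hxb, hbC⟩, ?_⟩
    rintro (b' | R') ⟨h1, h2⟩
    · exact congrArg Sum.inl (Subtype.ext (hu b'.1 ⟨h2, h1⟩))
    · exact h1.elim
  · -- class and point
    have hP := allC_isParallel hSres C.2
    obtain ⟨b, ⟨hbC, hxb⟩, hu⟩ := hP.2 y.1 y.2
    refine ⟨Sum.inl ⟨b, hP.1 hbC⟩, ⟨hbC, hxb⟩, ?_⟩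
    rintro (b' | R') ⟨h1, h2⟩
    · exact congrArg Sum.inl (Subtype.ext (hu b'.1 ⟨h1, h2⟩))
    · exact h2.elim
  · -- two classes
    have hne12 : C.1 ≠ C'.1 := fun h => hne (congrArg Sum.inr (Subtype.ext h))
    by_cases hd : C.1 ∩ C'.1 = ∅
    · obtain ⟨R, ⟨hRS, hCR, hC'R⟩, hu⟩ :=
        disjoint_classes_res hs hk hScard hSres hScomp C.2 C'.2 hne12 hd
      refine ⟨Sum.inr ⟨R, hRS⟩, ⟨hCR, hC'R⟩, ?_⟩
      rintro (b | R') ⟨h1, h2⟩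
      · exfalso
        have : b.1 ∈ C.1 ∩ C'.1 := Finset.mem_inter.mpr ⟨h1, h2⟩
        rw [hd] at this
        exact Finset.notMem_empty _ this
      · exact congrArg Sum.inr (Subtype.ext (hu R'.1 ⟨R'.2, h1, h2⟩))
    · obtain ⟨b, hbmem⟩ := Finset.nonempty_iff_ne_empty.mpr hd
      have hle := class_inter_le hs hk hSres hScomp C.2 C'.2 hne12
      have hint : C.1 ∩ C'.1 = {b} := by
        have h1 : 1 ≤ (C.1 ∩ C'.1).card := Finset.card_pos.mpr ⟨b, hbmem⟩
        obtain ⟨a, ha⟩ := Finset.card_eq_one.mp (le_antisymm hle h1)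
        rw [ha] at hbmem ⊢
        rw [Finset.mem_singleton] at hbmem
        rw [hbmem]
      rw [Finset.mem_inter] at hbmem
      have hbB : b ∈ D.B := (allC_isParallel hSres C.2).1 hbmem.1
      refine ⟨Sum.inl ⟨b, hbB⟩, ⟨hbmem.1, hbmem.2⟩, ?_⟩
      rintro (b' | R') ⟨h1, h2⟩
      · have : b'.1 ∈ C.1 ∩ C'.1 := Finset.mem_inter.mpr ⟨h1, h2⟩
        rw [hint, Finset.mem_singleton] at this
        exact congrArg Sum.inl (Subtype.ext this)
      · exfalso
        have hdisj := res_class_disjoint (hSres R'.1 R'.2) h1 h2 hne12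
        exact Finset.disjoint_left.mp hdisj hbmem.1 hbmem.2

lemma fwd_meet (hs : 2 ≤ D.s) (hk : 2 ≤ D.k)
    (hScard : S.card = (D.s * D.k - D.k + 1) * D.s)
    (hSres : ∀ R ∈ S, IsResolution D R)
    (hScomp : ∀ R₁ ∈ S, ∀ R₂ ∈ S, R₁ ≠ R₂ → Compatible D R₁ R₂) :
    ∀ l₁ l₂ : FwdL D S, l₁ ≠ l₂ →
      ∃! p : FwdP D S, fwdIncid D S p l₁ ∧ fwdIncid D S p l₂ := by
  rintro (b | R) (b' | R') hne
  · -- two blocks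
    have hne12 : b.1 ≠ b'.1 := fun h => hne (congrArg Sum.inl (Subtype.ext h))
    by_cases hd : b.1 ∩ b'.1 = ∅
    · obtain ⟨C, ⟨hCall, hbC, hb'C⟩, hu⟩ :=
        disjoint_blocks_class hs hk hScard hSres hScomp b.2 b'.2 hd hne12
      refine ⟨Sum.inr ⟨C, hCall⟩, ⟨hbC, hb'C⟩, ?_⟩
      rintro (x | C') ⟨h1, h2⟩
      · exfalso
        have : x.1 ∈ b.1 ∩ b'.1 := Finset.mem_inter.mpr ⟨h1, h2⟩
        rw [hd] at this
        exact Finset.notMem_empty _ this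
      · exact congrArg Sum.inr (Subtype.ext (hu C'.1 ⟨C'.2, h1, h2⟩))
    · obtain ⟨x, hxmem⟩ := Finset.nonempty_iff_ne_empty.mpr hd
      have hle := block_inter_le D b.2 b'.2 hne12
      have hint : b.1 ∩ b'.1 = {x} := by
        have h1 : 1 ≤ (b.1 ∩ b'.1).card := Finset.card_pos.mpr ⟨x, hxmem⟩
        obtain ⟨a, ha⟩ := Finset.card_eq_one.mp (le_antisymm hle h1)
        rw [ha] at hxmem ⊢
        rw [Finset.mem_singleton] at hxmem
        rw [hxmem]
      rw [Finset.mem_inter] at hxmem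
      have hxX : x ∈ D.X := D.blocks_sub b.1 b.2 hxmem.1
      refine ⟨Sum.inl ⟨x, hxX⟩, ⟨hxmem.1, hxmem.2⟩, ?_⟩
      rintro (y | C') ⟨h1, h2⟩
      · have : y.1 ∈ b.1 ∩ b'.1 := Finset.mem_inter.mpr ⟨h1, h2⟩
        rw [hint, Finset.mem_singleton] at this
        exact congrArg Sum.inl (Subtype.ext this)
      · exfalso
        have hP := allC_isParallel hSres C'.2
        have hdisj := class_disjoint D hP h1 h2 hne12
        exact Finset.disjoint_left.mp hdisj hxmem.1 hxmem.2
  · -- block and resolution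
    obtain ⟨C, ⟨hCR, hbC⟩, hu⟩ := (hSres R'.1 R'.2).2 b.1 b.2
    refine ⟨Sum.inr ⟨C, mem_allC R'.2 hCR⟩, ⟨hbC, hCR⟩, ?_⟩
    rintro (x | C') ⟨h1, h2⟩
    · exact h2.elim
    · exact congrArg Sum.inr (Subtype.ext (hu C'.1 ⟨h2, h1⟩))
  · -- resolution and block
    obtain ⟨C, ⟨hCR, hbC⟩, hu⟩ := (hSres R.1 R.2).2 b'.1 b'.2
    refine ⟨Sum.inr ⟨C, mem_allC R.2 hCR⟩, ⟨hCR, hbC⟩, ?_⟩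
    rintro (x | C') ⟨h1, h2⟩
    · exact h1.elim
    · exact congrArg Sum.inr (Subtype.ext (hu C'.1 ⟨h1, h2⟩))
  · -- two resolutions
    have hne12 : R.1 ≠ R'.1 := fun h => hne (congrArg Sum.inr (Subtype.ext h))
    obtain ⟨C, ⟨hCR, hCR'⟩, hu⟩ := shared_unique hs hk hSres hScomp R.2 R'.2 hne12
    refine ⟨Sum.inr ⟨C, mem_allC R.2 hCR⟩, ⟨hCR, hCR'⟩, ?_⟩
    rintro (x | C') ⟨h1, h2⟩
    · exact h1.elim
    · exact congrArg Sum.inr (Subtype.ext (hu C'.1 ⟨h1, h2⟩))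

lemma fwd_point_deg (hs : 2 ≤ D.s) (hk : 2 ≤ D.k)
    (hScard : S.card = (D.s * D.k - D.k + 1) * D.s)
    (hSres : ∀ R ∈ S, IsResolution D R)
    (hScomp : ∀ R₁ ∈ S, ∀ R₂ ∈ S, R₁ ≠ R₂ → Compatible D R₁ R₂) :
    ∀ p : FwdP D S, {l : FwdL D S | fwdIncid D S p l}.ncard = D.s * D.k + 1 := by
  rintro (x | C)
  · rw [ncard_sum_split (fun l => fwdIncid D S (Sum.inl x) l)]
    have h1 : {b : {b : Finset α // b ∈ D.B} | fwdIncid D S (Sum.inl x) (Sum.inl b)}.ncard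
        = (D.B.filter (fun b => x.1 ∈ b)).card :=
      ncard_subtype D.B (fun b => x.1 ∈ b)
    have h2 : {R : {R : Finset (Finset (Finset α)) // R ∈ S} |
        fwdIncid D S (Sum.inl x) (Sum.inr R)}.ncard = 0 := by
      have : {R : {R : Finset (Finset (Finset α)) // R ∈ S} |
          fwdIncid D S (Sum.inl x) (Sum.inr R)} = ∅ :=
        Set.eq_empty_iff_forall_notMem.mpr (fun R h => h)
      rw [this, Set.ncard_empty]
    rw [h1, h2]
    have : D.B.filter (fun b => x.1 ∈ b) = pb D x.1 := rfl
    rw [this, pb_card D hk x.2]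
  · rw [ncard_sum_split (fun l => fwdIncid D S (Sum.inr C) l)]
    have h1 : {b : {b : Finset α // b ∈ D.B} | fwdIncid D S (Sum.inr C) (Sum.inl b)}.ncard
        = (D.B.filter (fun b => b ∈ C.1)).card :=
      ncard_subtype D.B (fun b => b ∈ C.1)
    have h2 : {R : {R : Finset (Finset (Finset α)) // R ∈ S} |
        fwdIncid D S (Sum.inr C) (Sum.inr R)}.ncard
        = (S.filter (fun R => C.1 ∈ R)).card :=
      ncard_subtype S (fun R => C.1 ∈ R)
    rw [h1, h2]
    have hP := allC_isParallel hSres C.2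
    have hfil : D.B.filter (fun b => b ∈ C.1) = C.1 := by
      ext b
      simp only [Finset.mem_filter]
      exact ⟨fun h => h.2, fun h => ⟨hP.1 h, h⟩⟩
    rw [hfil, class_card D hk hP]
    have : (S.filter (fun R => C.1 ∈ R)).card = dS S C.1 := rfl
    rw [this, d_eq_s hs hk hScard hSres hScomp C.1 C.2]
    have := hsk D hk
    omega

lemma fwd_line_deg (hs : 2 ≤ D.s) (hk : 2 ≤ D.k)
    (hScard : S.card = (D.s * D.k - D.k + 1) * D.s)
    (hSres : ∀ R ∈ S, IsResolution D R)
    (hScomp : ∀ R₁ ∈ S, ∀ R₂ ∈ S, R₁ ≠ R₂ → Compatible D R₁ R₂) :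
    ∀ l : FwdL D S, {p : FwdP D S | fwdIncid D S p l}.ncard = D.s * D.k + 1 := by
  rintro (b | R)
  · rw [ncard_sum_split (fun p => fwdIncid D S p (Sum.inl b))]
    have h1 : {x : {x : α // x ∈ D.X} | fwdIncid D S (Sum.inl x) (Sum.inl b)}.ncard
        = (D.X.filter (fun x => x ∈ b.1)).card :=
      ncard_subtype D.X (fun x => x ∈ b.1)
    have h2 : {C : {C : Finset (Finset α) // C ∈ allC S} |
        fwdIncid D S (Sum.inr C) (Sum.inl b)}.ncard
        = ((allC S).filter (fun C => b.1 ∈ C)).card :=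
      ncard_subtype (allC S) (fun C => b.1 ∈ C)
    rw [h1, h2]
    have hfil : D.X.filter (fun x => x ∈ b.1) = b.1 := by
      ext x
      simp only [Finset.mem_filter]
      exact ⟨fun h => h.2, fun h => ⟨D.blocks_sub b.1 b.2 h, h⟩⟩
    rw [hfil, D.blocks_card b.1 b.2]
    have : (allC S).filter (fun C => b.1 ∈ C) = Cb S b.1 := rfl
    rw [this, t_eq hs hk hScard hSres hScomp b.2]
    have := hks D hs
    omega
  · rw [ncard_sum_split (fun p => fwdIncid D S p (Sum.inr R))]
    have h1 : {x : {x : α // x ∈ D.X} | fwdIncid D S (Sum.inl x) (Sum.inr R)}.ncard = 0 := by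
      have : {x : {x : α // x ∈ D.X} | fwdIncid D S (Sum.inl x) (Sum.inr R)} = ∅ :=
        Set.eq_empty_iff_forall_notMem.mpr (fun x h => h)
      rw [this, Set.ncard_empty]
    have h2 : {C : {C : Finset (Finset α) // C ∈ allC S} |
        fwdIncid D S (Sum.inr C) (Sum.inr R)}.ncard
        = ((allC S).filter (fun C => C ∈ R.1)).card :=
      ncard_subtype (allC S) (fun C => C ∈ R.1)
    rw [h1, h2]
    have hfil : (allC S).filter (fun C => C ∈ R.1) = R.1 := by
      ext C
      simp only [Finset.mem_filter]
      exact ⟨fun h => h.2, fun h => ⟨mem_allC R.2 h, h⟩⟩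
    rw [hfil, resolution_card D hk (hSres R.1 R.2)]
    omega

end Forward6
section Forward7
variable {α : Type} [DecidableEq α] {D : ArcDesign α} {S : Finset (Finset (Finset (Finset α)))}

lemma forward_dir (hs : 2 ≤ D.s) (hk : 2 ≤ D.k)
    (hScard : S.card = (D.s * D.k - D.k + 1) * D.s)
    (hSres : ∀ R ∈ S, IsResolution D R)
    (hScomp : ∀ R₁ ∈ S, ∀ R₂ ∈ S, R₁ ≠ R₂ → Compatible D R₁ R₂) :
    ∃ (P L : Type) (Pl : ProjPlane P L), Pl.q = D.s * D.k ∧ EmbeddableAsMaxArc D Pl := by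
  have hXpos : 0 < D.X.card := by
    rw [D.card_X]
    exact Nat.mul_pos (by omega) (by omega)
  obtain ⟨x₀, hx₀⟩ : D.X.Nonempty := Finset.card_pos.mp hXpos
  refine ⟨FwdP D S, FwdL D S,
    { finP := inferInstance
      finL := inferInstance
      incid := fwdIncid D S
      q := D.s * D.k
      join := fwd_join hs hk hScard hSres hScomp
      meet := fwd_meet hs hk hScard hSres hScomp
      point_deg := fwd_point_deg hs hk hScard hSres hScomp
      line_deg := fwd_line_deg hs hk hScard hSres hScomp }, rfl, ?_⟩
  set Pl : ProjPlane (FwdP D S) (FwdL D S) :=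
    { finP := inferInstance
      finL := inferInstance
      incid := fwdIncid D S
      q := D.s * D.k
      join := fwd_join hs hk hScard hSres hScomp
      meet := fwd_meet hs hk hScard hSres hScomp
      point_deg := fwd_point_deg hs hk hScard hSres hScomp
      line_deg := fwd_line_deg hs hk hScard hSres hScomp } with hPl
  show EmbeddableAsMaxArc D Pl
  classical
  refine ⟨fun a => if h : a ∈ D.X then Sum.inl ⟨a, h⟩ else Sum.inl ⟨x₀, hx₀⟩, ?_, ?_, ?_⟩
  case _ =>
    intro a ha b hb h
    rw [Finset.mem_coe] at ha hb
    simp only [dif_pos ha, dif_pos hb] at h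
    exact congrArg Subtype.val (Sum.inl_injective h)
  all_goals {
    set f : α → FwdP D S :=
      fun a => if h : a ∈ D.X then Sum.inl ⟨a, h⟩ else Sum.inl ⟨x₀, hx₀⟩ with hf
    have hfa : ∀ a (ha : a ∈ D.X), f a = Sum.inl ⟨a, ha⟩ := by
      intro a ha
      rw [hf]
      exact dif_pos ha
    have hinj : Set.InjOn f ↑D.X := by
      intro a ha b hb h
      rw [Finset.mem_coe] at ha hb
      rw [hfa a ha, hfa b hb] at h
      exact congrArg Subtype.val (Sum.inl_injective h)
    have hline : ∀ b : {b : Finset α // b ∈ D.B},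
        Pl.lineSet (Sum.inl b) ∩ f '' ↑D.X = f '' ↑b.1 := by
      intro b
      ext p
      constructor
      · rintro ⟨hpl, a, ha, rfl⟩
        rw [Finset.mem_coe] at ha
        refine ⟨a, ?_, rfl⟩
        rw [ProjPlane.lineSet, Set.mem_setOf_eq, hfa a ha] at hpl
        exact hpl
      · rintro ⟨a, ha, rfl⟩
        rw [Finset.mem_coe] at ha
        have haX : a ∈ D.X := D.blocks_sub b.1 b.2 ha
        refine ⟨?_, ⟨a, haX, rfl⟩⟩
        rw [ProjPlane.lineSet, Set.mem_setOf_eq, hfa a haX]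
        exact ha
    have hext : ∀ (R : {R : Finset (Finset (Finset α)) // R ∈ S}),
        Pl.lineSet (Sum.inr R) ∩ f '' ↑D.X = ∅ := by
      intro R
      rw [Set.eq_empty_iff_forall_notMem]
      rintro p ⟨hpl, a, ha, rfl⟩
      rw [Finset.mem_coe] at ha
      rw [ProjPlane.lineSet, Set.mem_setOf_eq, hfa a ha] at hpl
      exact hpl
    first
    | -- line intersection sizes
      (rintro (b | R)
       · left
         rw [hline b, Set.ncard_image_of_injOn
           (Set.InjOn.mono (by exact_mod_cast D.blocks_sub b.1 b.2) hinj),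
           Set.ncard_coe_finset, D.blocks_card b.1 b.2]
       · right
         rw [hext R, Set.ncard_empty])
    | -- block characterisation
      (intro b
       constructor
       · intro hb
         refine ⟨D.blocks_sub b hb, ?_, Sum.inl ⟨b, hb⟩, (hline ⟨b, hb⟩).symm⟩
         obtain ⟨a, ha⟩ := block_nonempty D hk hb
         exact ⟨f a, a, ha, rfl⟩
       · rintro ⟨hsub, hne, l, heq⟩
         rcases l with b₀ | R
         · have hbb : f '' ↑b = f '' ↑b₀.1 := by rw [heq, hline b₀]
           have : (b : Set α) = ↑b₀.1 :=
             (Set.InjOn.image_eq_image_iff hinj (by exact_mod_cast hsub)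
               (by exact_mod_cast D.blocks_sub b₀.1 b₀.2)).mp hbb
           have : b = b₀.1 := Finset.coe_injective this
           rw [this]
           exact b₀.2
         · rw [hext R] at heq
           obtain ⟨p, hp⟩ := hne
           rw [heq] at hp
           exact hp.elim)
  }
end Forward7
section Backward
variable {α : Type} [DecidableEq α] {P L : Type}

open Classical in
/-- the block carved out by a line -/
noncomputable def blockOf (D : ArcDesign α) (Pl : ProjPlane P L) (f : α → P) (l : L) :
    Finset α :=
  D.X.filter (fun a => Pl.incid (f a) l)

open Classical in
/-- the parallel class of an exterior point -/
noncomputable def classOf (D : ArcDesign α) (Pl : ProjPlane P L) (f : α → P)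
    (lineOf : Finset α → L) (p : P) : Finset (Finset α) :=
  D.B.filter (fun b => Pl.incid p (lineOf b))

variable {D : ArcDesign α} {Pl : ProjPlane P L} {f : α → P} {lineOf : Finset α → L}

lemma blockOf_subset (l : L) : blockOf D Pl f l ⊆ D.X := by
  classical
  intro a ha
  rw [blockOf, Finset.mem_filter] at ha
  exact ha.1

/-- a line containing the image of a block is `lineOf b` -/
lemma line_unique (hk : 2 ≤ D.k) (hinj : Set.InjOn f ↑D.X)
    (hlineOf : ∀ b ∈ D.B, f '' ↑b = Pl.lineSet (lineOf b) ∩ f '' ↑D.X)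
    {b : Finset α} (hb : b ∈ D.B) {l : L} (hl : f '' ↑b ⊆ Pl.lineSet l) :
    l = lineOf b := by
  have hcard : b.card = D.k := D.blocks_card b hb
  obtain ⟨x, hx, y, hy, hxy⟩ := Finset.one_lt_card.mp (by omega : 1 < b.card)
  have hxX : x ∈ D.X := D.blocks_sub b hb hx
  have hyX : y ∈ D.X := D.blocks_sub b hb hy
  have hfxy : f x ≠ f y := fun h => hxy (hinj (by exact_mod_cast hxX) (by exact_mod_cast hyX) h)
  obtain ⟨l₀, _, hu⟩ := Pl.join (f x) (f y) hfxy
  have hxb : f x ∈ f '' ↑b := ⟨x, by exact_mod_cast hx, rfl⟩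
  have hyb : f y ∈ f '' ↑b := ⟨y, by exact_mod_cast hy, rfl⟩
  have h1 : l = l₀ := hu l ⟨hl hxb, hl hyb⟩
  have hsub : f '' ↑b ⊆ Pl.lineSet (lineOf b) := by
    rw [hlineOf b hb]
    exact Set.inter_subset_left
  have h2 : lineOf b = l₀ := hu (lineOf b) ⟨hsub hxb, hsub hyb⟩
  rw [h1, h2]

lemma blockOf_image (l : L) : f '' ↑(blockOf D Pl f l) = Pl.lineSet l ∩ f '' ↑D.X := by
  classical
  ext p
  constructor
  · rintro ⟨a, ha, rfl⟩
    rw [Finset.mem_coe, blockOf, Finset.mem_filter] at ha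
    exact ⟨ha.2, a, by exact_mod_cast ha.1, rfl⟩
  · rintro ⟨hpl, a, ha, rfl⟩
    refine ⟨a, ?_, rfl⟩
    rw [Finset.mem_coe, blockOf, Finset.mem_filter]
    exact ⟨by exact_mod_cast ha, hpl⟩

/-- a secant line gives a block -/
lemma blockOf_mem (hinj : Set.InjOn f ↑D.X)
    (hblocks : ∀ b : Finset α, b ∈ D.B ↔ b ⊆ D.X ∧
      (f '' ↑b).Nonempty ∧ ∃ l : L, f '' ↑b = Pl.lineSet l ∩ f '' ↑D.X)
    {l : L} (hsec : (Pl.lineSet l ∩ f '' ↑D.X).ncard = D.k) (hk : 2 ≤ D.k) :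
    blockOf D Pl f l ∈ D.B := by
  classical
  haveI := Pl.finP
  rw [hblocks]
  refine ⟨blockOf_subset l, ?_, l, blockOf_image l⟩
  rw [blockOf_image l, ← Set.ncard_pos (Set.toFinite _)]
  omega

lemma lineOf_blockOf (hk : 2 ≤ D.k) (hinj : Set.InjOn f ↑D.X)
    (hlineOf : ∀ b ∈ D.B, f '' ↑b = Pl.lineSet (lineOf b) ∩ f '' ↑D.X)
    (hblocks : ∀ b : Finset α, b ∈ D.B ↔ b ⊆ D.X ∧
      (f '' ↑b).Nonempty ∧ ∃ l : L, f '' ↑b = Pl.lineSet l ∩ f '' ↑D.X)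
    {l : L} (hsec : (Pl.lineSet l ∩ f '' ↑D.X).ncard = D.k) :
    lineOf (blockOf D Pl f l) = l := by
  have hmem := blockOf_mem hinj hblocks hsec hk
  refine (line_unique hk hinj hlineOf hmem ?_).symm
  rw [blockOf_image l]
  exact Set.inter_subset_left

/-- `blockOf (lineOf b) = b` for blocks -/
lemma blockOf_lineOf (hinj : Set.InjOn f ↑D.X)
    (hlineOf : ∀ b ∈ D.B, f '' ↑b = Pl.lineSet (lineOf b) ∩ f '' ↑D.X)
    {b : Finset α} (hb : b ∈ D.B) : blockOf D Pl f (lineOf b) = b := by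
  have h1 : f '' ↑(blockOf D Pl f (lineOf b)) = f '' ↑b := by
    rw [blockOf_image, hlineOf b hb]
  have h2 : (↑(blockOf D Pl f (lineOf b)) : Set α) = ↑b := by
    refine (Set.InjOn.image_eq_image_iff hinj ?_ ?_).mp h1
    · exact_mod_cast blockOf_subset (lineOf b)
    · exact_mod_cast D.blocks_sub b hb
  exact Finset.coe_injective h2

/-- image of a block has `ncard = k` -/
lemma image_block_ncard (hinj : Set.InjOn f ↑D.X) {b : Finset α} (hb : b ∈ D.B) :
    (f '' ↑b).ncard = D.k := by
  rw [Set.ncard_image_of_injOn (Set.InjOn.mono (by exact_mod_cast D.blocks_sub b hb) hinj),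
    Set.ncard_coe_finset, D.blocks_card b hb]

/-- lines of blocks are secant -/
lemma lineOf_secant (hinj : Set.InjOn f ↑D.X)
    (hlineOf : ∀ b ∈ D.B, f '' ↑b = Pl.lineSet (lineOf b) ∩ f '' ↑D.X)
    {b : Finset α} (hb : b ∈ D.B) :
    (Pl.lineSet (lineOf b) ∩ f '' ↑D.X).ncard = D.k := by
  rw [← hlineOf b hb, image_block_ncard hinj hb]

end Backward
section Backward2
variable {α : Type} [DecidableEq α] {P L : Type}
variable {D : ArcDesign α} {Pl : ProjPlane P L} {f : α → P} {lineOf : Finset α → L}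

lemma arc_line_secant (hlines : ∀ l : L, (Pl.lineSet l ∩ f '' ↑D.X).ncard = D.k ∨
      (Pl.lineSet l ∩ f '' ↑D.X).ncard = 0)
    {l : L} {x : α} (hx : x ∈ D.X) (hxl : f x ∈ Pl.lineSet l) :
    (Pl.lineSet l ∩ f '' ↑D.X).ncard = D.k := by
  haveI := Pl.finP
  rcases hlines l with h | h
  · exact h
  · exfalso
    have hne : (Pl.lineSet l ∩ f '' ↑D.X).Nonempty := ⟨f x, hxl, x, by exact_mod_cast hx, rfl⟩
    rw [← Set.ncard_pos (Set.toFinite _)] at hne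
    omega

lemma classOf_mem_iff {p : P} {b : Finset α} :
    b ∈ classOf D Pl f lineOf p ↔ b ∈ D.B ∧ Pl.incid p (lineOf b) := by
  classical
  rw [classOf, Finset.mem_filter]

/-- the parallel class of an exterior point is a parallel class -/
lemma classOf_parallel (hk : 2 ≤ D.k) (hinj : Set.InjOn f ↑D.X)
    (hlines : ∀ l : L, (Pl.lineSet l ∩ f '' ↑D.X).ncard = D.k ∨
      (Pl.lineSet l ∩ f '' ↑D.X).ncard = 0)
    (hblocks : ∀ b : Finset α, b ∈ D.B ↔ b ⊆ D.X ∧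
      (f '' ↑b).Nonempty ∧ ∃ l : L, f '' ↑b = Pl.lineSet l ∩ f '' ↑D.X)
    (hlineOf : ∀ b ∈ D.B, f '' ↑b = Pl.lineSet (lineOf b) ∩ f '' ↑D.X)
    {p : P} (hp : p ∉ f '' ↑D.X) :
    IsParallelClass D (classOf D Pl f lineOf p) := by
  constructor
  · intro b hb
    exact (classOf_mem_iff.mp hb).1
  · intro x hx
    have hfx : f x ≠ p := fun h => hp (h ▸ ⟨x, by exact_mod_cast hx, rfl⟩)
    obtain ⟨l, ⟨hxl, hpl⟩, hu⟩ := Pl.join (f x) p hfx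
    have hsec : (Pl.lineSet l ∩ f '' ↑D.X).ncard = D.k := arc_line_secant hlines hx hxl
    have hbB := blockOf_mem hinj hblocks hsec hk
    have hlb := lineOf_blockOf hk hinj hlineOf hblocks hsec
    refine ⟨blockOf D Pl f l, ⟨classOf_mem_iff.mpr ⟨hbB, by rw [hlb]; exact hpl⟩, ?_⟩, ?_⟩
    · classical
      rw [blockOf, Finset.mem_filter]
      exact ⟨hx, hxl⟩
    · rintro b' ⟨hb'c, hxb'⟩
      rw [classOf_mem_iff] at hb'c
      obtain ⟨hb'B, hpb'⟩ := hb'c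
      have hfxb' : f x ∈ Pl.lineSet (lineOf b') := by
        have : f x ∈ f '' ↑b' := ⟨x, by exact_mod_cast hxb', rfl⟩
        rw [hlineOf b' hb'B] at this
        exact this.1
      have : lineOf b' = l := hu (lineOf b') ⟨hfxb', hpb'⟩
      rw [← blockOf_lineOf hinj hlineOf hb'B, this]

/-- distinct exterior points have distinct classes -/
lemma classOf_inj (hs : 2 ≤ D.s) (hk : 2 ≤ D.k) (hinj : Set.InjOn f ↑D.X)
    (hlines : ∀ l : L, (Pl.lineSet l ∩ f '' ↑D.X).ncard = D.k ∨
      (Pl.lineSet l ∩ f '' ↑D.X).ncard = 0)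
    (hblocks : ∀ b : Finset α, b ∈ D.B ↔ b ⊆ D.X ∧
      (f '' ↑b).Nonempty ∧ ∃ l : L, f '' ↑b = Pl.lineSet l ∩ f '' ↑D.X)
    (hlineOf : ∀ b ∈ D.B, f '' ↑b = Pl.lineSet (lineOf b) ∩ f '' ↑D.X)
    {p p' : P} (hp : p ∉ f '' ↑D.X) (hp' : p' ∉ f '' ↑D.X) (hne : p ≠ p')
    (heq : classOf D Pl f lineOf p = classOf D Pl f lineOf p') : False := by
  have hcl := classOf_parallel hk hinj hlines hblocks hlineOf hp
  have hcard := class_card D hk hcl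
  have h3 := m_ge3 hs hk (D := D)
  obtain ⟨b₁, hb₁, b₂, hb₂, hbne⟩ :=
    Finset.one_lt_card.mp (by omega : 1 < (classOf D Pl f lineOf p).card)
  have h₁ := classOf_mem_iff.mp hb₁
  have h₂ := classOf_mem_iff.mp hb₂
  have h₁' := classOf_mem_iff.mp (heq ▸ hb₁)
  have h₂' := classOf_mem_iff.mp (heq ▸ hb₂)
  have hlne : lineOf b₁ ≠ lineOf b₂ := by
    intro h
    apply hbne
    rw [← blockOf_lineOf hinj hlineOf h₁.1, ← blockOf_lineOf hinj hlineOf h₂.1, h]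
  obtain ⟨p₀, _, hu⟩ := Pl.meet (lineOf b₁) (lineOf b₂) hlne
  exact hne ((hu p ⟨h₁.2, h₂.2⟩).trans (hu p' ⟨h₁'.2, h₂'.2⟩).symm)

end Backward2
section Backward3
variable {α : Type} [DecidableEq α] {P L : Type}

open Classical in
/-- the points of a line, as a finset -/
noncomputable def ptsOf (Pl : ProjPlane P L) (l : L) : Finset P :=
  haveI := Pl.finP
  haveI := Fintype.ofFinite P
  Finset.univ.filter (fun p => Pl.incid p l)

lemma ptsOf_mem {Pl : ProjPlane P L} {l : L} {p : P} :
    p ∈ ptsOf Pl l ↔ Pl.incid p l := by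
  classical
  rw [ptsOf, Finset.mem_filter]
  simp

lemma ptsOf_card {Pl : ProjPlane P L} (l : L) : (ptsOf Pl l).card = Pl.q + 1 := by
  have h := Pl.line_deg l
  have hset : {p : P | Pl.incid p l} = ↑(ptsOf Pl l) := by
    ext p
    rw [Finset.mem_coe, ptsOf_mem]
    rfl
  rw [hset, Set.ncard_coe_finset] at h
  exact h

/-- the resolution attached to an exterior line -/
noncomputable def resOf (D : ArcDesign α) (Pl : ProjPlane P L) (f : α → P)
    (lineOf : Finset α → L) (l : L) : Finset (Finset (Finset α)) :=
  (ptsOf Pl l).image (classOf D Pl f lineOf)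

variable {D : ArcDesign α} {Pl : ProjPlane P L} {f : α → P} {lineOf : Finset α → L}

lemma ext_line_pts (hext : Pl.lineSet l ∩ f '' ↑D.X = ∅) {p : P} (hp : p ∈ ptsOf Pl l) :
    p ∉ f '' ↑D.X := by
  intro harc
  have : p ∈ Pl.lineSet l ∩ f '' ↑D.X := ⟨ptsOf_mem.mp hp, harc⟩
  rw [hext] at this
  exact this

lemma resOf_resolution (hk : 2 ≤ D.k) (hinj : Set.InjOn f ↑D.X)
    (hlines : ∀ l : L, (Pl.lineSet l ∩ f '' ↑D.X).ncard = D.k ∨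
      (Pl.lineSet l ∩ f '' ↑D.X).ncard = 0)
    (hblocks : ∀ b : Finset α, b ∈ D.B ↔ b ⊆ D.X ∧
      (f '' ↑b).Nonempty ∧ ∃ l : L, f '' ↑b = Pl.lineSet l ∩ f '' ↑D.X)
    (hlineOf : ∀ b ∈ D.B, f '' ↑b = Pl.lineSet (lineOf b) ∩ f '' ↑D.X)
    {l : L} (hext : Pl.lineSet l ∩ f '' ↑D.X = ∅) :
    IsResolution D (resOf D Pl f lineOf l) := by
  constructor
  · intro C hC
    rw [resOf, Finset.mem_image] at hC
    obtain ⟨p, hp, rfl⟩ := hC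
    exact classOf_parallel hk hinj hlines hblocks hlineOf (ext_line_pts hext hp)
  · intro b hb
    have hbl : f '' ↑b ⊆ Pl.lineSet (lineOf b) := by
      rw [hlineOf b hb]
      exact Set.inter_subset_left
    have hlne : lineOf b ≠ l := by
      intro h
      obtain ⟨x, hx⟩ := block_nonempty D hk hb
      have hfx : f x ∈ Pl.lineSet l ∩ f '' ↑D.X := by
        refine ⟨?_, x, by exact_mod_cast D.blocks_sub b hb hx, rfl⟩
        rw [← h]
        exact hbl ⟨x, by exact_mod_cast hx, rfl⟩
      rw [hext] at hfx
      exact hfx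
    obtain ⟨p₀, ⟨hp₀b, hp₀l⟩, hu⟩ := Pl.meet (lineOf b) l hlne
    refine ⟨classOf D Pl f lineOf p₀,
      ⟨Finset.mem_image.mpr ⟨p₀, ptsOf_mem.mpr hp₀l, rfl⟩,
        classOf_mem_iff.mpr ⟨hb, hp₀b⟩⟩, ?_⟩
    rintro C' ⟨hC', hbC'⟩
    rw [resOf, Finset.mem_image] at hC'
    obtain ⟨p', hp', rfl⟩ := hC'
    have hp'b := (classOf_mem_iff.mp hbC').2
    have : p' = p₀ := hu p' ⟨hp'b, ptsOf_mem.mp hp'⟩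
    rw [this]

lemma resOf_inj (hs : 2 ≤ D.s) (hk : 2 ≤ D.k) (hinj : Set.InjOn f ↑D.X)
    (hq : Pl.q = D.s * D.k)
    (hlines : ∀ l : L, (Pl.lineSet l ∩ f '' ↑D.X).ncard = D.k ∨
      (Pl.lineSet l ∩ f '' ↑D.X).ncard = 0)
    (hblocks : ∀ b : Finset α, b ∈ D.B ↔ b ⊆ D.X ∧
      (f '' ↑b).Nonempty ∧ ∃ l : L, f '' ↑b = Pl.lineSet l ∩ f '' ↑D.X)
    (hlineOf : ∀ b ∈ D.B, f '' ↑b = Pl.lineSet (lineOf b) ∩ f '' ↑D.X)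
    {l l' : L} (hext : Pl.lineSet l ∩ f '' ↑D.X = ∅)
    (hext' : Pl.lineSet l' ∩ f '' ↑D.X = ∅) (hne : l ≠ l')
    (heq : resOf D Pl f lineOf l = resOf D Pl f lineOf l') : False := by
  have hcard : 1 < (ptsOf Pl l).card := by
    rw [ptsOf_card, hq]
    have := hsk D hk
    omega
  obtain ⟨p₁, hp₁, p₂, hp₂, hpne⟩ := Finset.one_lt_card.mp hcard
  have key : ∀ p ∈ ptsOf Pl l, Pl.incid p l' := by
    intro p hp
    have : classOf D Pl f lineOf p ∈ resOf D Pl f lineOf l' := by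
      rw [← heq, resOf]
      exact Finset.mem_image.mpr ⟨p, hp, rfl⟩
    rw [resOf, Finset.mem_image] at this
    obtain ⟨p', hp', hpp'⟩ := this
    have : p' = p := by
      by_contra hne'
      exact classOf_inj hs hk hinj hlines hblocks hlineOf (ext_line_pts hext' hp')
        (ext_line_pts hext hp) hne' hpp'
    rw [← this]
    exact ptsOf_mem.mp hp'
  obtain ⟨p₀, _, hu⟩ := Pl.meet l l' hne
  exact hpne ((hu p₁ ⟨ptsOf_mem.mp hp₁, key p₁ hp₁⟩).trans
    (hu p₂ ⟨ptsOf_mem.mp hp₂, key p₂ hp₂⟩).symm)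

end Backward3
section Backward4
variable {α : Type} [DecidableEq α] {P L : Type}
variable {D : ArcDesign α} {Pl : ProjPlane P L} {f : α → P} {lineOf : Finset α → L}

lemma resOf_compat (hinj : Set.InjOn f ↑D.X)
    (hlineOf : ∀ b ∈ D.B, f '' ↑b = Pl.lineSet (lineOf b) ∩ f '' ↑D.X)
    {l l' : L} (hne : l ≠ l') :
    Compatible D (resOf D Pl f lineOf l) (resOf D Pl f lineOf l') := by
  obtain ⟨p₀, ⟨hp₀l, hp₀l'⟩, hu⟩ := Pl.meet l l' hne
  refine ⟨classOf D Pl f lineOf p₀,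
    Finset.mem_image.mpr ⟨p₀, ptsOf_mem.mpr hp₀l, rfl⟩,
    Finset.mem_image.mpr ⟨p₀, ptsOf_mem.mpr hp₀l', rfl⟩, ?_⟩
  intro C₁ hC₁ C₂ hC₂ hnotboth
  rw [resOf, Finset.mem_image] at hC₁ hC₂
  obtain ⟨p₁, hp₁, rfl⟩ := hC₁
  obtain ⟨p₂, hp₂, rfl⟩ := hC₂
  by_cases hpp : p₁ = p₂
  · exfalso
    subst hpp
    have h0 : p₁ = p₀ := hu p₁ ⟨ptsOf_mem.mp hp₁, ptsOf_mem.mp hp₂⟩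
    exact hnotboth ⟨by rw [h0], by rw [h0]⟩
  · by_contra hgt
    push_neg at hgt
    obtain ⟨b₁, hb₁, b₂, hb₂, hbne⟩ := Finset.one_lt_card.mp hgt
    rw [Finset.mem_inter] at hb₁ hb₂
    have h₁₁ := classOf_mem_iff.mp hb₁.1
    have h₁₂ := classOf_mem_iff.mp hb₁.2
    have h₂₁ := classOf_mem_iff.mp hb₂.1
    have h₂₂ := classOf_mem_iff.mp hb₂.2
    have hlne : lineOf b₁ ≠ lineOf b₂ := by
      intro h
      apply hbne
      rw [← blockOf_lineOf hinj hlineOf h₁₁.1, ← blockOf_lineOf hinj hlineOf h₂₁.1, h]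
    obtain ⟨l₁, _, hu₁⟩ := Pl.join p₁ p₂ hpp
    exact hlne ((hu₁ (lineOf b₁) ⟨h₁₁.2, h₁₂.2⟩).trans (hu₁ (lineOf b₂) ⟨h₂₁.2, h₂₂.2⟩).symm)

open Classical in
/-- lines through a point -/
noncomputable def lnsOf (Pl : ProjPlane P L) (p : P) : Finset L :=
  haveI := Pl.finL
  haveI := Fintype.ofFinite L
  Finset.univ.filter (fun l => Pl.incid p l)

lemma lnsOf_mem {Pl : ProjPlane P L} {p : P} {l : L} :
    l ∈ lnsOf Pl p ↔ Pl.incid p l := by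
  classical
  rw [lnsOf, Finset.mem_filter]
  simp

lemma lnsOf_card {Pl : ProjPlane P L} (p : P) : (lnsOf Pl p).card = Pl.q + 1 := by
  have h := Pl.point_deg p
  have hset : {l : L | Pl.incid p l} = ↑(lnsOf Pl p) := by
    ext l
    rw [Finset.mem_coe, lnsOf_mem]
    rfl
  rw [hset, Set.ncard_coe_finset] at h
  exact h

lemma total_lines (l₀ : L) : Nat.card L = Pl.q * Pl.q + Pl.q + 1 := by
  haveI := Pl.finP
  haveI := Pl.finL
  haveI := Fintype.ofFinite L
  classical
  rw [Nat.card_eq_fintype_card, ← Finset.card_univ]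
  have hcover : (Finset.univ : Finset L)
      = insert l₀ ((ptsOf Pl l₀).biUnion (fun p => (lnsOf Pl p).erase l₀)) := by
    ext l
    simp only [Finset.mem_univ, true_iff, Finset.mem_insert, Finset.mem_biUnion,
      Finset.mem_erase]
    by_cases h : l = l₀
    · exact Or.inl h
    · obtain ⟨p, ⟨hpl, hpl₀⟩, _⟩ := Pl.meet l l₀ h
      exact Or.inr ⟨p, ptsOf_mem.mpr hpl₀, h, lnsOf_mem.mpr hpl⟩
  have hnotin : l₀ ∉ (ptsOf Pl l₀).biUnion (fun p => (lnsOf Pl p).erase l₀) := by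
    simp only [Finset.mem_biUnion, Finset.mem_erase]
    rintro ⟨p, _, hne, _⟩
    exact hne rfl
  have hdisj : ∀ p₁ ∈ ptsOf Pl l₀, ∀ p₂ ∈ ptsOf Pl l₀, p₁ ≠ p₂ →
      Disjoint ((lnsOf Pl p₁).erase l₀) ((lnsOf Pl p₂).erase l₀) := by
    intro p₁ h₁ p₂ h₂ hne
    rw [Finset.disjoint_left]
    intro l hl₁ hl₂
    rw [Finset.mem_erase] at hl₁ hl₂
    obtain ⟨m, _, hu⟩ := Pl.join p₁ p₂ hne
    exact hl₁.1 ((hu l ⟨lnsOf_mem.mp hl₁.2, lnsOf_mem.mp hl₂.2⟩).trans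
      (hu l₀ ⟨ptsOf_mem.mp h₁, ptsOf_mem.mp h₂⟩).symm)
  rw [hcover, Finset.card_insert_of_notMem hnotin, Finset.card_biUnion hdisj]
  have hterm : ∀ p ∈ ptsOf Pl l₀, ((lnsOf Pl p).erase l₀).card = Pl.q := by
    intro p hp
    rw [Finset.card_erase_of_mem (lnsOf_mem.mpr (ptsOf_mem.mp hp)), lnsOf_card]
    omega
  rw [Finset.sum_congr rfl hterm, Finset.sum_const, smul_eq_mul, ptsOf_card]
  ring

end Backward4
section Backward5
variable {α : Type} [DecidableEq α] {P L : Type}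
variable {D : ArcDesign α} {Pl : ProjPlane P L}

lemma backward_dir (hs : 2 ≤ D.s) (hk : 2 ≤ D.k) (hq : Pl.q = D.s * D.k)
    (hE : EmbeddableAsMaxArc D Pl) :
    ∃ S : Finset (Finset (Finset (Finset α))),
      S.card = (D.s * D.k - D.k + 1) * D.s ∧
      (∀ R ∈ S, IsResolution D R) ∧
      (∀ R₁ ∈ S, ∀ R₂ ∈ S, R₁ ≠ R₂ → Compatible D R₁ R₂) := by
  obtain ⟨f, hinj, hlines, hblocks⟩ := hE
  haveI := Pl.finP
  haveI := Pl.finL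
  haveI := Fintype.ofFinite P
  haveI := Fintype.ofFinite L
  classical
  have hXpos : 0 < D.X.card := by
    rw [D.card_X]
    exact Nat.mul_pos (by omega) (by omega)
  obtain ⟨x₀, hx₀⟩ := Finset.card_pos.mp hXpos
  have hl₀ : 0 < (lnsOf Pl (f x₀)).card := by
    rw [lnsOf_card]
    omega
  obtain ⟨l₀, _⟩ := Finset.card_pos.mp hl₀
  have hbl : ∀ b : Finset α, ∃ l : L, b ∈ D.B →
      f '' ↑b = Pl.lineSet l ∩ f '' ↑D.X := by
    intro b
    by_cases hb : b ∈ D.B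
    · obtain ⟨_, _, l, hl⟩ := (hblocks b).mp hb
      exact ⟨l, fun _ => hl⟩
    · exact ⟨l₀, fun h => absurd h hb⟩
  choose lineOf hlineOf using hbl
  set extL : Finset L :=
    Finset.univ.filter (fun l => Pl.lineSet l ∩ f '' ↑D.X = ∅) with hextL
  have hextmem : ∀ l ∈ extL, Pl.lineSet l ∩ f '' ↑D.X = ∅ := by
    intro l hl
    rw [hextL, Finset.mem_filter] at hl
    exact hl.2
  refine ⟨extL.image (resOf D Pl f lineOf), ?_, ?_, ?_⟩
  · -- cardinality
    have hinj2 : Set.InjOn (resOf D Pl f lineOf) ↑extL := by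
      intro l hl l' hl' heq
      by_contra hne
      exact resOf_inj hs hk hinj hq hlines hblocks hlineOf
        (hextmem l (by exact_mod_cast hl)) (hextmem l' (by exact_mod_cast hl')) hne heq
    rw [Finset.card_image_of_injOn hinj2]
    -- count exterior lines
    set secants : Finset L :=
      Finset.univ.filter (fun l => (Pl.lineSet l ∩ f '' ↑D.X).ncard = D.k) with hsecants
    have hsec_eq : secants = D.B.image lineOf := by
      ext l
      rw [hsecants, Finset.mem_filter, Finset.mem_image]
      constructor
      · rintro ⟨_, hsec⟩
        exact ⟨blockOf D Pl f l, blockOf_mem hinj hblocks hsec hk,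
          lineOf_blockOf hk hinj hlineOf hblocks hsec⟩
      · rintro ⟨b, hb, rfl⟩
        exact ⟨Finset.mem_univ _, lineOf_secant hinj hlineOf hb⟩
    have hsec_card : secants.card = D.B.card := by
      rw [hsec_eq]
      apply Finset.card_image_of_injOn
      intro b hb b' hb' heq
      have hbB : b ∈ D.B := by exact_mod_cast hb
      have hbB' : b' ∈ D.B := by exact_mod_cast hb'
      rw [← blockOf_lineOf hinj hlineOf hbB, ← blockOf_lineOf hinj hlineOf hbB', heq]
    have hpart : secants.card + extL.card = (Finset.univ : Finset L).card := by
      rw [hsecants, hextL]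
      have hcongr : Finset.univ.filter (fun l => Pl.lineSet l ∩ f '' ↑D.X = ∅)
          = Finset.univ.filter
            (fun l => ¬ (Pl.lineSet l ∩ f '' ↑D.X).ncard = D.k) := by
        apply Finset.filter_congr
        intro l _
        rcases hlines l with h | h
        · simp only [h, eq_self_iff_true, not_true, iff_false]
          intro hemp
          rw [hemp, Set.ncard_empty] at h
          omega
        · have hemp : Pl.lineSet l ∩ f '' ↑D.X = ∅ :=
            (Set.ncard_eq_zero (Set.toFinite _)).mp h
          simp only [hemp, eq_self_iff_true, true_iff]
          rw [Set.ncard_empty]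
          omega
      rw [hcongr]
      exact Finset.card_filter_add_card_filter_not
        (p := fun l => (Pl.lineSet l ∩ f '' ↑D.X).ncard = D.k)
    have huniv : (Finset.univ : Finset L).card = D.s * D.k * (D.s * D.k) + D.s * D.k + 1 := by
      rw [Finset.card_univ, ← Nat.card_eq_fintype_card, total_lines l₀, hq]
    have hBcard := block_count D hk
    have hkey : (D.s * D.k - D.s + 1) * (D.s * D.k + 1) + (D.s * D.k - D.k + 1) * D.s
        = D.s * D.k * (D.s * D.k) + D.s * D.k + 1 := by
      have e2 := hsk D hk
      have e3 := hks D hs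
      zify [e2, e3]
      ring
    omega
  · -- resolutions
    intro R hR
    rw [Finset.mem_image] at hR
    obtain ⟨l, hl, rfl⟩ := hR
    exact resOf_resolution hk hinj hlines hblocks hlineOf (hextmem l hl)
  · -- compatibility
    intro R₁ h₁ R₂ h₂ hne
    rw [Finset.mem_image] at h₁ h₂
    obtain ⟨l₁, hl₁, rfl⟩ := h₁
    obtain ⟨l₂, hl₂, rfl⟩ := h₂
    have hlne : l₁ ≠ l₂ := by
      rintro rfl
      exact hne rfl
    exact resOf_compat hinj hlineOf hlne

end Backward5

/-- A 2-((sk-s+1)k, k, 1) design admits a set of (sk-k+1)·s pairwise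
compatible resolutions if and only if there is a projective plane of order
q = sk in which it is embeddable as a maximal arc of degree k. -/
theorem compatible_resolutions_iff_embeddable {α : Type} [DecidableEq α]
    (D : ArcDesign α) (hs : 2 ≤ D.s) (hk : 2 ≤ D.k) :
    (∃ S : Finset (Finset (Finset (Finset α))),
        S.card = (D.s * D.k - D.k + 1) * D.s ∧
        (∀ R ∈ S, IsResolution D R) ∧
        (∀ R₁ ∈ S, ∀ R₂ ∈ S, R₁ ≠ R₂ → Compatible D R₁ R₂)) ↔
    (∃ (P L : Type) (Pl : ProjPlane P L), Pl.q = D.s * D.k ∧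
        EmbeddableAsMaxArc D Pl) := by
  constructor
  · rintro ⟨S, h1, h2, h3⟩
    exact forward_dir hs hk h1 h2 h3
  · rintro ⟨P, L, Pl, hq, hE⟩
    exact backward_dir hs hk hq hE
end

section
/- In the Desarguesian projective plane PG(2, 2^m), for every i with 1 ≤ i < m there exists a maximal arc of degree k = 2^i, i.e., a set of (2^m - 2^{m-i} + 1)·2^i points meeting every line in exactly 2^i or 0 points. -/
open Projectivization

set_option linter.unusedSectionVars false
set_option linter.unusedVariables false
set_option maxHeartbeats 1000000

open Finset in
/-- Generic 2-to-1 counting lemma. -/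
lemma two_to_one_count {K : Type*} [Fintype K] [DecidableEq K] [AddGroup K]
    (ψ : K → K) (δ : K) (hδ : δ ≠ 0)
    (hfib : ∀ s t, ψ s = ψ t ↔ s = t ∨ s = t + δ) (T : Set K) :
    {t : K | ψ t ∈ T}.ncard = 2 * (Set.range ψ ∩ T).ncard := by
  classical
  have h1 : {t : K | ψ t ∈ T}.ncard = (univ.filter (fun t => ψ t ∈ T)).card := by
    rw [Set.ncard_eq_toFinset_card']; congr 1; ext t; simp
  have h2 : (Set.range ψ ∩ T).ncard = (univ.filter (fun x => x ∈ Set.range ψ ∧ x ∈ T)).card := by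
    rw [Set.ncard_eq_toFinset_card']; congr 1; ext t; simp
  rw [h1, h2]
  rw [Finset.card_eq_sum_card_fiberwise (f := ψ)
    (t := univ.filter (fun x => x ∈ Set.range ψ ∧ x ∈ T))
    (by intro t ht; simp only [Finset.mem_coe, mem_filter, mem_univ, true_and] at ht ⊢; exact ⟨⟨t, rfl⟩, ht⟩)]
  rw [Finset.sum_congr rfl (g := fun _ => 2), Finset.sum_const, smul_eq_mul, mul_comm]
  intro x hx
  simp only [mem_filter, mem_univ, true_and] at hx
  obtain ⟨⟨t₀, rfl⟩, hxT⟩ := hx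
  have : (univ.filter (fun t => ψ t ∈ T)).filter (fun t => ψ t = ψ t₀) = {t₀, t₀ + δ} := by
    ext t
    simp only [mem_filter, mem_univ, true_and, mem_insert, mem_singleton]
    constructor
    · rintro ⟨-, h⟩; exact (hfib t t₀).1 h
    · rintro (rfl | rfl)
      · exact ⟨hxT, rfl⟩
      · have := (hfib (t₀ + δ) t₀).2 (Or.inr rfl)
        exact ⟨this ▸ hxT, this⟩
  rw [this, Finset.card_insert_of_notMem (by simp [hδ]), Finset.card_singleton]


variable {K : Type*} [Field K] [Fintype K] [CharP K 2]

omit [Fintype K] in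
/-- fibers of `t ↦ a t² + b t` -/
lemma psi_fib {a b : K} (ha : a ≠ 0) (hb : b ≠ 0) (s t : K) :
    a * s ^ 2 + b * s = a * t ^ 2 + b * t ↔ s = t ∨ s = t + b / a := by
  have h2 : (2 : K) = 0 := by exact_mod_cast CharP.cast_eq_zero K 2
  have hd : a * (b / a) = b := by field_simp
  set d := b / a with hdd
  constructor
  · intro h
    have hfact : (s - t) * (a * (s + t) + b) = 0 := by linear_combination h
    rcases mul_eq_zero.1 hfact with h' | h'
    · left; exact sub_eq_zero.1 h'
    · right
      have hT : a * s = a * (t + d) := by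
        linear_combination h' - hd + (-(a*t) - b) * h2
      exact mul_left_cancel₀ ha hT
  · rintro (rfl | rfl)
    · rfl
    · linear_combination (a*t*d + b*d) * h2 + d * hd


variable {K : Type*} [Field K] [Fintype K] [CharP K 2]

lemma char2_two_eq_zero : (2 : K) = 0 := by exact_mod_cast CharP.cast_eq_zero K 2

/-- main counting lemma for a line not through the nucleus -/
lemma keycount {a b : K} (ha : a ≠ 0) (hb : b ≠ 0)
    {H : Set K} (h0H : (0:K) ∈ H) (haddH : ∀ x ∈ H, ∀ y ∈ H, x + y ∈ H)
    {γ : K} (hγ : γ ∉ Set.range (fun t : K => a * t ^ 2 + b * t)) :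
    {t : K | a * t ^ 2 + b * t + γ ∈ H}.ncard = 0 ∨
    {t : K | a * t ^ 2 + b * t + γ ∈ H}.ncard = H.ncard := by
  classical
  have h2 : (2 : K) = 0 := char2_two_eq_zero
  set ψ : K → K := fun t => a * t ^ 2 + b * t with hψ
  have hψadd : ∀ s t, ψ (s + t) = ψ s + ψ t := by
    intro s t; simp only [hψ]; linear_combination (a*s*t) * h2
  set V : Set K := Set.range ψ with hV
  have hVadd : ∀ x ∈ V, ∀ y ∈ V, x + y ∈ V := by
    rintro x ⟨s, rfl⟩ y ⟨t, rfl⟩; exact ⟨s + t, hψadd s t⟩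
  have hδ : b / a ≠ 0 := div_ne_zero hb ha
  have hfib : ∀ s t, ψ s = ψ t ↔ s = t ∨ s = t + b / a := psi_fib ha hb
  -- generic: adding an element of a subgroup-like set
  have hHmem : ∀ h₀ ∈ H, ∀ x : K, x + h₀ ∈ H ↔ x ∈ H := by
    intro h₀ hh₀ x
    constructor
    · intro hx
      have := haddH _ hx _ hh₀
      have hxx : x + h₀ + h₀ = x := by linear_combination h₀ * h2
      rwa [hxx] at this
    · intro hx; exact haddH _ hx _ hh₀
  show {t : K | ψ t + γ ∈ H}.ncard = 0 ∨ {t : K | ψ t + γ ∈ H}.ncard = H.ncard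
  rcases Set.eq_empty_or_nonempty {t : K | ψ t + γ ∈ H} with he | ⟨t₁, ht₁⟩
  · left; rw [he]; simp
  · right
    simp only [Set.mem_setOf_eq] at ht₁
    set h₀ : K := ψ t₁ + γ with hh₀def
    have hh₀H : h₀ ∈ H := ht₁
    have hγh₀ : γ + h₀ = ψ t₁ := by simp only [hh₀def]; linear_combination γ * h2
    have hh₀V : h₀ ∉ V := by
      rintro hmem
      apply hγ
      have : γ = ψ t₁ + h₀ := by
        simp only [hh₀def]; linear_combination (-(a*t₁^2) - b*t₁) * h2
      rw [this]; exact hVadd _ ⟨t₁, rfl⟩ _ hmem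
    -- translate: S = (·+t₁) '' S₀
    have himg : {t : K | ψ t + γ ∈ H} = (fun t => t + t₁) '' {t : K | ψ t ∈ H} := by
      ext t
      simp only [Set.mem_setOf_eq, Set.mem_image]
      constructor
      · intro ht
        refine ⟨t + t₁, ?_, by linear_combination t₁ * h2⟩
        have h1 : ψ (t + t₁) = (ψ t + γ) + h₀ := by
          rw [hψadd]; simp only [hh₀def]; linear_combination (-γ) * h2
        rw [h1]; exact haddH _ ht _ hh₀H
      · rintro ⟨s, hs, rfl⟩
        have h1 : ψ (s + t₁) + γ = ψ s + h₀ := by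
          rw [hψadd]; simp only [hh₀def]; ring
        rw [h1, hHmem _ hh₀H]; exact hs
    have hcard1 : {t : K | ψ t + γ ∈ H}.ncard = {t : K | ψ t ∈ H}.ncard := by
      rw [himg]; exact Set.ncard_image_of_injective _ (add_left_injective t₁)
    -- 2-to-1 counts
    have hcount : {t : K | ψ t ∈ H}.ncard = 2 * (V ∩ H).ncard :=
      two_to_one_count ψ (b / a) hδ hfib H
    have hcountuniv : (Fintype.card K) = 2 * V.ncard := by
      have := two_to_one_count ψ (b / a) hδ hfib Set.univ
      simpa [Set.ncard_univ, Nat.card_eq_fintype_card] using this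
    -- index 2: if x ∉ V, y ∉ V then x + y ∈ V
    have hindex : ∀ x ∉ V, ∀ y ∉ V, x + y ∈ V := by
      intro x hx y hy
      have hdisj : Disjoint V ((fun v => x + v) '' V) := by
        rw [Set.disjoint_left]
        rintro z hz ⟨v, hv, rfl⟩
        exact hx (by have : x = (x + v) + v := by linear_combination (-v) * h2
                     rw [this]; exact hVadd _ hz _ hv)
      have hcardU : (V ∪ (fun v => x + v) '' V).ncard = Fintype.card K := by
        rw [Set.ncard_union_eq hdisj (Set.toFinite _) (Set.toFinite _),
          Set.ncard_image_of_injective _ (add_right_injective x), hcountuniv]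
        ring
      have huniv : V ∪ (fun v => x + v) '' V = Set.univ := by
        apply Set.eq_of_subset_of_ncard_le (Set.subset_univ _)
        rw [hcardU, Set.ncard_univ, Nat.card_eq_fintype_card]
      have hy' : y ∈ V ∪ (fun v => x + v) '' V := huniv ▸ Set.mem_univ y
      rcases hy' with h | ⟨v, hv, hxy⟩
      · exact absurd h hy
      · have : x + y = v := by rw [← hxy]; linear_combination x * h2
        rw [this]; exact hv
    -- bijection V∩H ≃ H\V  via + h₀
    have hbij : (fun z => z + h₀) '' (V ∩ H) = H \ V := by
      ext z
      constructor
      · rintro ⟨w, ⟨hwV, hwH⟩, rfl⟩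
        refine ⟨haddH _ hwH _ hh₀H, fun hzV => hh₀V ?_⟩
        have : h₀ = w + (w + h₀) := by linear_combination (-w) * h2
        rw [this]; exact hVadd _ hwV _ hzV
      · rintro ⟨hzH, hzV⟩
        refine ⟨z + h₀, ⟨hindex _ hzV _ hh₀V, haddH _ hzH _ hh₀H⟩, ?_⟩
        linear_combination h₀ * h2
    have hsplit : (V ∩ H).ncard + (H \ V).ncard = H.ncard := by
      rw [Set.inter_comm]
      rw [← Set.ncard_inter_add_ncard_diff_eq_ncard H V (Set.toFinite _)]
    have hVH : (V ∩ H).ncard = (H \ V).ncard := by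
      rw [← hbij, Set.ncard_image_of_injective _ (add_left_injective h₀)]
    rw [hcard1, hcount, two_mul, hVH]
    nth_rewrite 1 [← hVH]
    exact hsplit

lemma exists_c : ∃ c : K, ∀ t : K, t ^ 2 + t ≠ c := by
  have hni : ¬ Function.Injective (fun t : K => t ^ 2 + t) := by
    intro h
    have h01 : (fun t : K => t ^ 2 + t) 1 = (fun t : K => t ^ 2 + t) 0 := by
      have h2 : (2 : K) = 0 := char2_two_eq_zero
      simp only; linear_combination h2
    exact one_ne_zero (h h01)
  have hns : ¬ Function.Surjective (fun t : K => t ^ 2 + t) := by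
    intro h; exact hni (Finite.injective_iff_surjective.2 h)
  rw [Function.Surjective] at hns
  push_neg at hns
  obtain ⟨c, hc⟩ := hns
  exact ⟨c, fun t ht => hc t ht⟩

lemma sq_surjective : ∀ y : K, ∃ t : K, t ^ 2 = y := by
  have hinj : Function.Injective (fun t : K => t ^ 2) := by
    intro s t h
    simp only at h
    have h2 : (2 : K) = 0 := char2_two_eq_zero
    have : (s + t) ^ 2 = 0 := by linear_combination h + (s * t + t ^ 2) * h2
    have := pow_eq_zero_iff (n := 2) (by norm_num) |>.1 this
    linear_combination this - t * h2
  intro y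
  exact Finite.injective_iff_surjective.1 hinj y

/-- anisotropy of `x² + bxy + y²` given that `t² + t = (b²)⁻¹` has no solution -/
lemma aniso {b c : K} (hb : b ≠ 0) (hbc : b ^ 2 * c = 1) (hc : ∀ t : K, t ^ 2 + t ≠ c)
    {x y : K} (h : x ^ 2 + b * x * y + y ^ 2 = 0) : x = 0 ∧ y = 0 := by
  have h2 : (2 : K) = 0 := char2_two_eq_zero
  by_cases hy : y = 0
  · subst hy
    constructor
    · have : x ^ 2 = 0 := by linear_combination h
      exact pow_eq_zero_iff (n := 2) (by norm_num) |>.1 this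
    · rfl
  · exfalso
    apply hc (x / (b * y))
    have hB : b * y ≠ 0 := mul_ne_zero hb hy
    have e1 : (x / (b * y)) ^ 2 + x / (b * y) = (x ^ 2 + x * (b * y)) / (b * y) ^ 2 := by
      field_simp
    rw [e1, div_eq_iff (pow_ne_zero _ hB)]
    linear_combination h - y ^ 2 * hbc - y ^ 2 * h2

lemma gamma_not_mem {a b c γ A : K} (ha : a ≠ 0) (hb : b ≠ 0) (hbc : b ^ 2 * c = 1)
    (hc : ∀ t : K, t ^ 2 + t ≠ c) (hA : a * γ = A ^ 2 + b * A + 1) :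
    γ ∉ Set.range (fun t : K => a * t ^ 2 + b * t) := by
  rintro ⟨t, ht⟩
  simp only at ht
  have h2 : (2 : K) = 0 := char2_two_eq_zero
  apply hc ((a * t + A) / b)
  have e1 : ((a * t + A) / b) ^ 2 + (a * t + A) / b
      = ((a * t + A) ^ 2 + b * (a * t + A)) / b ^ 2 := by
    field_simp
  rw [e1, div_eq_iff (pow_ne_zero _ hb)]
  linear_combination a * ht + hA - hbc + (a*t*A + A^2 + b*A) * h2

lemma nucleus_count {a : K} (ha : a ≠ 0) (H : Set K) :
    {t : K | a * t ^ 2 ∈ H}.ncard = H.ncard := by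
  have hinj : Function.Injective (fun t : K => a * t ^ 2) := by
    intro s t h
    simp only at h
    have hsq : s ^ 2 = t ^ 2 := mul_left_cancel₀ ha h
    obtain ⟨u, hu⟩ := sq_surjective (K := K) s  -- dummy to use nothing
    clear hu u
    have h2 : (2 : K) = 0 := char2_two_eq_zero
    have : (s + t) ^ 2 = 0 := by linear_combination hsq + (s * t + t ^ 2) * h2
    have := pow_eq_zero_iff (n := 2) (by norm_num) |>.1 this
    linear_combination this - t * h2
  have himg : (fun t : K => a * t ^ 2) '' {t : K | a * t ^ 2 ∈ H} = H := by
    ext y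
    constructor
    · rintro ⟨t, ht, rfl⟩; exact ht
    · intro hy
      obtain ⟨t, ht⟩ := sq_surjective (K := K) (y / a)
      have hat : a * t ^ 2 = y := by rw [ht]; field_simp
      exact ⟨t, by simp only [Set.mem_setOf_eq, hat]; exact hy, hat⟩
  have h := Set.ncard_image_of_injective {t : K | a * t ^ 2 ∈ H} hinj
  rw [himg] at h
  exact h.symm

open Finset in
lemma fiber_card {b c : K} (hb : b ≠ 0) (hbc : b ^ 2 * c = 1) (hc : ∀ t : K, t ^ 2 + t ≠ c)
    {μ : K} (hμ : μ ≠ 0) :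
    {s : K × K | s.1 ^ 2 + b * s.1 * s.2 + s.2 ^ 2 = μ}.ncard = Fintype.card K + 1 := by
  classical
  set Qf : K × K → K := fun s => s.1 ^ 2 + b * s.1 * s.2 + s.2 ^ 2 with hQf
  -- all nonzero fibers are equinumerous
  have hequi : ∀ ν : K, ν ≠ 0 → {s : K × K | Qf s = ν}.ncard = {s : K × K | Qf s = 1}.ncard := by
    intro ν hν
    obtain ⟨r, hr⟩ := sq_surjective (K := K) ν
    have hrne : r ≠ 0 := by rintro rfl; apply hν; rw [← hr]; ring
    have himg : {s : K × K | Qf s = ν} = (fun s : K × K => (r * s.1, r * s.2)) '' {s : K × K | Qf s = 1} := by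
      ext s
      simp only [Set.mem_setOf_eq, Set.mem_image, Prod.ext_iff]
      constructor
      · intro hs
        refine ⟨(s.1 / r, s.2 / r), ?_, by field_simp, by field_simp⟩
        simp only [hQf] at hs ⊢
        have e1 : (s.1 / r) ^ 2 + b * (s.1 / r) * (s.2 / r) + (s.2 / r) ^ 2
            = (s.1 ^ 2 + b * s.1 * s.2 + s.2 ^ 2) / r ^ 2 := by
          field_simp
        rw [e1, hs, hr, div_self hν]
      · rintro ⟨w, hw, h1, h2⟩
        simp only [hQf] at hw ⊢
        rw [← h1, ← h2]
        linear_combination r^2 * hw + hr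
    rw [himg]
    apply Set.ncard_image_of_injective
    intro s t h
    simp only [Prod.ext_iff] at h
    exact Prod.ext (mul_left_cancel₀ hrne h.1) (mul_left_cancel₀ hrne h.2)
  -- sum over all fibers
  have hconv : ∀ T : Set (K × K), T.ncard = (univ.filter (· ∈ T)).card := by
    intro T
    rw [Set.ncard_eq_toFinset_card']; congr 1; ext t; simp
  have hsum : (univ : Finset (K × K)).card
      = ∑ ν ∈ (univ : Finset K), ((univ : Finset (K × K)).filter (fun s => Qf s = ν)).card :=
    Finset.card_eq_sum_card_fiberwise (fun s _ => mem_univ (Qf s))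
  have hzc : ((univ : Finset (K × K)).filter (fun s => Qf s = 0)).card = 1 := by
    have hset : ((univ : Finset (K × K)).filter (fun s => Qf s = 0)) = {((0, 0) : K × K)} := by
      ext s
      simp only [mem_filter, mem_univ, true_and, mem_singleton]
      constructor
      · intro hs
        have := aniso hb hbc hc (x := s.1) (y := s.2) hs
        exact Prod.ext this.1 this.2
      · rintro rfl; simp [hQf]
    rw [hset, Finset.card_singleton]
  set n : ℕ := {s : K × K | Qf s = 1}.ncard with hn
  have hfc : ∀ ν : K, ν ≠ 0 → ((univ : Finset (K × K)).filter (fun s => Qf s = ν)).card = n := by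
    intro ν hν
    rw [← hequi ν hν, hconv {s : K × K | Qf s = ν}]
    congr 1
  have hq2 : Fintype.card (K × K) = ∑ ν ∈ (univ : Finset K), ((univ : Finset (K × K)).filter (fun s => Qf s = ν)).card := by
    rw [← hsum, Finset.card_univ]
  have hsplit : ∑ ν ∈ (univ : Finset K), ((univ : Finset (K × K)).filter (fun s => Qf s = ν)).card
      = (Fintype.card K - 1) * n + 1 := by
    rw [← Finset.sum_erase_add _ _ (mem_univ (0 : K)), hzc]
    have he : ∀ ν ∈ (univ : Finset K).erase 0,
        ((univ : Finset (K × K)).filter (fun s => Qf s = ν)).card = n :=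
      fun ν hν => hfc ν (Finset.mem_erase.1 hν).1
    rw [Finset.sum_congr rfl he, Finset.sum_const, smul_eq_mul,
      Finset.card_erase_of_mem (mem_univ _), Finset.card_univ]
  have hcard2 : Fintype.card (K × K) = Fintype.card K * Fintype.card K := Fintype.card_prod K K
  have hq : 2 ≤ Fintype.card K := Fintype.one_lt_card
  -- (q-1) * n + 1 = q^2  →  n = q + 1
  have key : (Fintype.card K - 1) * n = (Fintype.card K - 1) * (Fintype.card K + 1) := by
    have h1 : (Fintype.card K - 1) * n + 1 = Fintype.card K * Fintype.card K := by
      rw [← hsplit, ← hq2, hcard2]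
    have h2 : (Fintype.card K - 1) * (Fintype.card K + 1) + 1 = Fintype.card K * Fintype.card K := by
      cases' Nat.exists_eq_add_of_le hq with k hk
      have e : 2 + k - 1 = k + 1 := by omega
      rw [hk, e]; ring
    omega
  have hn1 : n = Fintype.card K + 1 := by
    exact Nat.eq_of_mul_eq_mul_left (by omega) key
  rw [show {s : K × K | s.1 ^ 2 + b * s.1 * s.2 + s.2 ^ 2 = μ} = {s : K × K | Qf s = μ} from rfl,
    hequi μ hμ, hn1]

open Finset in
lemma arc_count {b c : K} (hb : b ≠ 0) (hbc : b ^ 2 * c = 1) (hc : ∀ t : K, t ^ 2 + t ≠ c)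
    {H : Set K} (h0H : (0:K) ∈ H) :
    {s : K × K | s.1 ^ 2 + b * s.1 * s.2 + s.2 ^ 2 ∈ H}.ncard
      = 1 + (H.ncard - 1) * (Fintype.card K + 1) := by
  classical
  set Qf : K × K → K := fun s => s.1 ^ 2 + b * s.1 * s.2 + s.2 ^ 2 with hQf
  have hconv : ∀ T : Set (K × K), T.ncard = (univ.filter (· ∈ T)).card := by
    intro T
    rw [Set.ncard_eq_toFinset_card']; congr 1; ext t; simp
  have hconvK : ∀ T : Set K, T.ncard = (univ.filter (· ∈ T)).card := by
    intro T
    rw [Set.ncard_eq_toFinset_card']; congr 1; ext t; simp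
  set Hf : Finset K := univ.filter (· ∈ H) with hHf
  have h0Hf : (0 : K) ∈ Hf := by simp [hHf, h0H]
  set Sf : Finset (K × K) := univ.filter (fun s => Qf s ∈ H) with hSf
  have hmaps : ∀ s ∈ Sf, Qf s ∈ Hf := by
    intro s hs
    simp only [hSf, mem_filter, mem_univ, true_and] at hs
    simp [hHf, hs]
  have hsum : Sf.card = ∑ μ ∈ Hf, (Sf.filter (fun s => Qf s = μ)).card :=
    Finset.card_eq_sum_card_fiberwise hmaps
  have hfib_eq : ∀ μ ∈ Hf, Sf.filter (fun s => Qf s = μ) = univ.filter (fun s => Qf s = μ) := by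
    intro μ hμ
    ext s
    simp only [hSf, mem_filter, mem_univ, true_and]
    constructor
    · rintro ⟨-, h⟩; exact h
    · rintro rfl
      exact ⟨by simpa [hHf] using hμ, rfl⟩
  have hzc : (univ.filter (fun s => Qf s = (0:K))).card = 1 := by
    have hset : (univ.filter (fun s => Qf s = (0:K))) = {((0, 0) : K × K)} := by
      ext s
      simp only [mem_filter, mem_univ, true_and, mem_singleton]
      constructor
      · intro hs
        have := aniso hb hbc hc (x := s.1) (y := s.2) hs
        exact Prod.ext this.1 this.2
      · rintro rfl; simp [hQf]
    rw [hset, Finset.card_singleton]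
  have hfc : ∀ μ : K, μ ≠ 0 → (univ.filter (fun s => Qf s = μ)).card = Fintype.card K + 1 := by
    intro μ hμ
    rw [← fiber_card hb hbc hc hμ, hconv {s : K × K | Qf s = μ}]
    congr 1
  have hHcard : Hf.card = H.ncard := (hconvK H).symm
  calc {s : K × K | Qf s ∈ H}.ncard = Sf.card := by rw [hconv]; congr 1
    _ = ∑ μ ∈ Hf, (Sf.filter (fun s => Qf s = μ)).card := hsum
    _ = ∑ μ ∈ Hf, (univ.filter (fun s => Qf s = μ)).card :=
        Finset.sum_congr rfl (fun μ hμ => by rw [hfib_eq μ hμ])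
    _ = 1 + (H.ncard - 1) * (Fintype.card K + 1) := by
        rw [← Finset.sum_erase_add _ _ h0Hf, hzc]
        have he : ∀ μ ∈ Hf.erase 0,
            (univ.filter (fun s => Qf s = μ)).card = Fintype.card K + 1 :=
          fun μ hμ => hfc μ (Finset.mem_erase.1 hμ).1
        rw [Finset.sum_congr rfl he, Finset.sum_const, smul_eq_mul,
          Finset.card_erase_of_mem h0Hf, hHcard]
        ring

lemma ker_line {u v : K} (huv : ¬(u = 0 ∧ v = 0)) {x y : K} (h : u * x + v * y = 0) :
    ∃ t : K, x = t * v ∧ y = t * u := by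
  have h2 : (2 : K) = 0 := char2_two_eq_zero
  by_cases hu : u = 0
  · subst hu
    have hv : v ≠ 0 := fun hv => huv ⟨rfl, hv⟩
    have hy : y = 0 := by
      have : v * y = 0 := by linear_combination h
      exact (mul_eq_zero.1 this).resolve_left hv
    exact ⟨x / v, by field_simp, by rw [hy]; ring⟩
  · refine ⟨y / u, ?_, by field_simp⟩
    field_simp
    linear_combination h - v * y * h2

open Finset in
lemma line_count {b c : K} (hb : b ≠ 0) (hbc : b ^ 2 * c = 1) (hc : ∀ t : K, t ^ 2 + t ≠ c)
    {H : Set K} (h0H : (0:K) ∈ H) (haddH : ∀ x ∈ H, ∀ y ∈ H, x + y ∈ H)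
    (u v w : K) (huvw : ¬(u = 0 ∧ v = 0 ∧ w = 0)) :
    {s : K × K | s.1 ^ 2 + b * s.1 * s.2 + s.2 ^ 2 ∈ H ∧ u * s.1 + v * s.2 + w = 0}.ncard = H.ncard ∨
    {s : K × K | s.1 ^ 2 + b * s.1 * s.2 + s.2 ^ 2 ∈ H ∧ u * s.1 + v * s.2 + w = 0}.ncard = 0 := by
  classical
  have h2 : (2 : K) = 0 := char2_two_eq_zero
  by_cases huv : u = 0 ∧ v = 0
  · -- the line z = 0 : no points
    right
    obtain ⟨rfl, rfl⟩ := huv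
    have hw : w ≠ 0 := fun hw => huvw ⟨rfl, rfl, hw⟩
    have : {s : K × K | s.1 ^ 2 + b * s.1 * s.2 + s.2 ^ 2 ∈ H ∧ 0 * s.1 + 0 * s.2 + w = 0} = ∅ := by
      ext s; simp only [Set.mem_setOf_eq, Set.mem_empty_iff_false, iff_false, not_and]
      intro _ h; exact hw (by linear_combination h)
    rw [this, Set.ncard_empty]
  · by_cases hw : w = 0
    · -- line through the nucleus
      left
      subst hw
      set a : K := v ^ 2 + b * v * u + u ^ 2 with ha
      have hane : a ≠ 0 := by
        intro h0
        have := aniso hb hbc hc (x := v) (y := u) (by linear_combination h0)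
        exact huv ⟨this.2, this.1⟩
      have himg : {s : K × K | s.1 ^ 2 + b * s.1 * s.2 + s.2 ^ 2 ∈ H ∧ u * s.1 + v * s.2 + 0 = 0}
          = (fun t : K => (t * v, t * u)) '' {t : K | a * t ^ 2 ∈ H} := by
        ext s
        simp only [Set.mem_setOf_eq, Set.mem_image, Prod.ext_iff]
        constructor
        · rintro ⟨hQ, hl⟩
          obtain ⟨t, ht1, ht2⟩ := ker_line huv (x := s.1) (y := s.2) (by linear_combination hl)
          refine ⟨t, ?_, ht1.symm, ht2.symm⟩
          have : a * t ^ 2 = s.1 ^ 2 + b * s.1 * s.2 + s.2 ^ 2 := by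
            rw [ht1, ht2, ha]; ring
          rw [this]; exact hQ
        · rintro ⟨t, ht, h1, h2'⟩
          constructor
          · have : s.1 ^ 2 + b * s.1 * s.2 + s.2 ^ 2 = a * t ^ 2 := by
              rw [← h1, ← h2', ha]; ring
            rw [this]; exact ht
          · rw [← h1, ← h2']; linear_combination t * u * v * h2
      rw [himg, Set.ncard_image_of_injective _ ?_, nucleus_count hane]
      intro s t hst
      simp only [Prod.ext_iff] at hst
      by_cases hu : u = 0
      · have hv : v ≠ 0 := fun hv => huv ⟨hu, hv⟩
        exact mul_right_cancel₀ hv hst.1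
      · exact mul_right_cancel₀ hu hst.2
    · -- line not through the nucleus
      -- normalize to u' x + v' y = 1
      set u' : K := u / w with hu'
      set v' : K := v / w with hv'
      have huv' : ¬(u' = 0 ∧ v' = 0) := by
        rintro ⟨h1', h2'⟩
        rw [hu', div_eq_zero_iff] at h1'
        rw [hv', div_eq_zero_iff] at h2'
        exact huv ⟨h1'.resolve_right hw, h2'.resolve_right hw⟩
      have hseteq : {s : K × K | s.1 ^ 2 + b * s.1 * s.2 + s.2 ^ 2 ∈ H ∧ u * s.1 + v * s.2 + w = 0}
          = {s : K × K | s.1 ^ 2 + b * s.1 * s.2 + s.2 ^ 2 ∈ H ∧ u' * s.1 + v' * s.2 = 1} := by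
        ext s
        simp only [Set.mem_setOf_eq, and_congr_right_iff]
        intro _
        constructor
        · intro h
          rw [hu', hv', div_mul_eq_mul_div, div_mul_eq_mul_div, ← add_div,
            div_eq_one_iff_eq hw]
          linear_combination h - w * h2
        · intro h
          rw [hu', hv', div_mul_eq_mul_div, div_mul_eq_mul_div, ← add_div,
            div_eq_one_iff_eq hw] at h
          linear_combination h + w * h2
      rw [hseteq]
      -- particular solution
      obtain ⟨x₀, y₀, hxy⟩ : ∃ x₀ y₀ : K, u' * x₀ + v' * y₀ = 1 := by
        by_cases hu0 : u' = 0
        · have hv0 : v' ≠ 0 := fun h => huv' ⟨hu0, h⟩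
          exact ⟨0, 1 / v', by field_simp [hu0]; simp⟩
        · exact ⟨1 / u', 0, by field_simp; simp⟩
      set a : K := v' ^ 2 + b * v' * u' + u' ^ 2 with ha
      have hane : a ≠ 0 := by
        intro h0
        have := aniso hb hbc hc (x := v') (y := u') (by linear_combination h0)
        exact huv' ⟨this.2, this.1⟩
      set γ : K := x₀ ^ 2 + b * x₀ * y₀ + y₀ ^ 2 with hγdef
      set A : K := v' * x₀ + u' * y₀ + b * v' * y₀ with hA
      have hAid : a * γ = A ^ 2 + b * A + 1 := by
        rw [ha, hγdef, hA]
        linear_combination ((1:K) + (-3)*v'*y₀ + v'*y₀*b^2 + v'*x₀*b + u'*y₀*b + u'*x₀) * hxy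
          + ((-2)*v'*y₀ + 2*v'^2*y₀^2 + (-1)*v'^2*y₀^2*b^2 + (-1)*v'^2*x₀*y₀*b + (-1)*u'*v'*y₀^2*b) * h2
      have hγV : γ ∉ Set.range (fun t : K => a * t ^ 2 + b * t) :=
        gamma_not_mem hane hb hbc hc hAid
      have himg : {s : K × K | s.1 ^ 2 + b * s.1 * s.2 + s.2 ^ 2 ∈ H ∧ u' * s.1 + v' * s.2 = 1}
          = (fun t : K => (x₀ + t * v', y₀ + t * u')) '' {t : K | a * t ^ 2 + b * t + γ ∈ H} := by
        ext s
        simp only [Set.mem_setOf_eq, Set.mem_image, Prod.ext_iff]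
        constructor
        · rintro ⟨hQ, hl⟩
          have hker : u' * (s.1 + x₀) + v' * (s.2 + y₀) = 0 := by
            linear_combination hl - hxy + (u' * x₀ + v' * y₀) * h2
          obtain ⟨t, ht1, ht2⟩ := ker_line huv' hker
          refine ⟨t, ?_, by linear_combination x₀ * h2 - ht1, by linear_combination y₀ * h2 - ht2⟩
          have hQexp : a * t ^ 2 + b * t + γ
              = s.1 ^ 2 + b * s.1 * s.2 + s.2 ^ 2 := by
            have e1 : s.1 = x₀ + t * v' := by linear_combination ht1 - x₀ * h2
            have e2 : s.2 = y₀ + t * u' := by linear_combination ht2 - y₀ * h2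
            rw [e1, e2, ha, hγdef]
            linear_combination (-(b*t)) * hxy + (-(t*(v'*x₀ + u'*y₀))) * h2
          show a * t ^ 2 + b * t + γ ∈ H
          rw [hQexp]; exact hQ
        · rintro ⟨t, ht, h1', h2'⟩
          constructor
          · have hQexp : s.1 ^ 2 + b * s.1 * s.2 + s.2 ^ 2 = a * t ^ 2 + b * t + γ := by
              rw [← h1', ← h2', ha, hγdef]
              linear_combination (b*t) * hxy + (t*(v'*x₀ + u'*y₀)) * h2
            rw [hQexp]; exact ht
          · rw [← h1', ← h2']
            linear_combination hxy + (t*u'*v') * h2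
      rw [himg, Set.ncard_image_of_injective _ ?_]
      · exact (keycount hane hb h0H haddH hγV).symm
      · intro s t hst
        simp only [Prod.ext_iff, add_right_inj] at hst
        by_cases hu0 : u' = 0
        · have hv0 : v' ≠ 0 := fun h => huv' ⟨hu0, h⟩
          exact mul_right_cancel₀ hv0 hst.1
        · exact mul_right_cancel₀ hu0 hst.2

open Module in
lemma exists_H (m i : ℕ) (hi : i ≤ m) (hm : m ≠ 0) :
    ∃ H : Set (GaloisField 2 m), (0 : GaloisField 2 m) ∈ H ∧
      (∀ x ∈ H, ∀ y ∈ H, x + y ∈ H) ∧ H.ncard = 2 ^ i := by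
  classical
  set K := GaloisField 2 m with hK
  haveI : FiniteDimensional (ZMod 2) K := inferInstance
  have hfr : finrank (ZMod 2) K = m := GaloisField.finrank 2 hm
  let B := Module.finBasis (ZMod 2) K
  have hil : i ≤ finrank (ZMod 2) K := by rw [hfr]; exact hi
  let emb : Fin i → Fin (finrank (ZMod 2) K) := fun j => ⟨j.1, lt_of_lt_of_le j.2 hil⟩
  have hembinj : Function.Injective emb := by
    intro a b h
    simpa [emb, Fin.ext_iff] using h
  let v : Fin i → K := B ∘ emb
  have hli : LinearIndependent (ZMod 2) v := B.linearIndependent.comp emb hembinj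
  set H : Submodule (ZMod 2) K := Submodule.span (ZMod 2) (Set.range v) with hH
  refine ⟨(H : Set K), H.zero_mem, fun x hx y hy => H.add_mem hx hy, ?_⟩
  haveI : Fintype K := Fintype.ofFinite K
  haveI : Fintype H := Fintype.ofFinite H
  have hfrH : finrank (ZMod 2) H = i := by
    rw [hH, finrank_span_eq_card hli, Fintype.card_fin]
  have hcard : Fintype.card H = 2 ^ i := by
    rw [card_eq_pow_finrank (K := ZMod 2) (V := H), hfrH, ZMod.card 2]
  rw [Set.ncard_eq_toFinset_card']
  rw [← hcard]
  rw [Set.toFinset_card]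
  congr 1

/-- In the Desarguesian plane PG(2, 2^m) (points: 1-dimensional subspaces,
lines: 2-dimensional subspaces of GF(2^m)³), for every 1 ≤ i < m there is a
maximal arc of degree 2^i: a set of (2^m - 2^(m-i) + 1)·2^i points meeting
every line in exactly 2^i or 0 points. -/
theorem denniston_maximal_arcs (m i : ℕ) (hi1 : 1 ≤ i) (him : i < m) :
    ∃ A : Set (Projectivization (GaloisField 2 m) (Fin 3 → GaloisField 2 m)),
      A.ncard = (2 ^ m - 2 ^ (m - i) + 1) * 2 ^ i ∧
      ∀ W : Submodule (GaloisField 2 m) (Fin 3 → GaloisField 2 m),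
        Module.finrank (GaloisField 2 m) W = 2 →
        ({p ∈ A | Projectivization.submodule p ≤ W}.ncard = 2 ^ i ∨
         {p ∈ A | Projectivization.submodule p ≤ W}.ncard = 0) := by
  classical
  set K := GaloisField 2 m with hK
  haveI : Fintype K := Fintype.ofFinite K
  have hm0 : m ≠ 0 := by omega
  have hqcard : Fintype.card K = 2 ^ m := by
    rw [← Nat.card_eq_fintype_card]; exact GaloisField.card 2 m hm0
  have h2 : (2 : K) = 0 := char2_two_eq_zero
  -- choose c and b
  obtain ⟨c, hc⟩ := exists_c (K := K)
  have hc0 : c ≠ 0 := by rintro rfl; exact hc 0 (by ring)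
  obtain ⟨b, hbsq⟩ := sq_surjective (K := K) c⁻¹
  have hb : b ≠ 0 := by
    rintro rfl
    apply hc0
    have : c⁻¹ = 0 := by rw [← hbsq]; ring
    simpa using this
  have hbc : b ^ 2 * c = 1 := by rw [hbsq]; exact inv_mul_cancel₀ hc0
  -- the subgroup H
  obtain ⟨H, h0H, haddH, hHcard⟩ := exists_H m i (le_of_lt him) hm0
  -- the arc
  have hnz : ∀ s : K × K, ![s.1, s.2, 1] ≠ (0 : Fin 3 → K) := by
    intro s h
    have := congrFun h 2
    simp at this
  set e : K × K → Projectivization K (Fin 3 → K) :=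
    fun s => Projectivization.mk K ![s.1, s.2, 1] (hnz s) with he
  have heinj : Function.Injective e := by
    intro s t h
    rw [he] at h
    simp only at h
    rw [Projectivization.mk_eq_mk_iff'] at h
    obtain ⟨r, hr⟩ := h
    have h2' := congrFun hr 2
    simp [Pi.smul_apply] at h2'
    have h0' := congrFun hr 0
    have h1' := congrFun hr 1
    simp [Pi.smul_apply, h2'] at h0' h1'
    exact Prod.ext h0'.symm h1'.symm
  set A : Set (Projectivization K (Fin 3 → K)) :=
    e '' {s : K × K | s.1 ^ 2 + b * s.1 * s.2 + s.2 ^ 2 ∈ H} with hA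
  refine ⟨A, ?_, ?_⟩
  · -- cardinality of the arc
    rw [hA, Set.ncard_image_of_injective _ heinj, arc_count hb hbc hc h0H, hHcard, hqcard]
    have hxy : 2 ^ (m - i) * 2 ^ i = 2 ^ m := by
      rw [← pow_add]
      congr 1
      omega
    have hx1 : (1 : ℕ) ≤ 2 ^ i := Nat.one_le_two_pow
    have hyz : 2 ^ (m - i) ≤ 2 ^ m := Nat.pow_le_pow_right (by norm_num) (by omega)
    have hxy' : (2 : ℤ) ^ (m - i) * 2 ^ i = 2 ^ m := by exact_mod_cast hxy
    zify [hx1, hyz]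
    linear_combination hxy'
  · -- lines
    intro W hW2
    -- extract a linear functional with kernel W
    haveI : FiniteDimensional K (Fin 3 → K) := inferInstance
    have hq1 : Module.finrank K ((Fin 3 → K) ⧸ W) = 1 := by
      have h := W.finrank_quotient_add_finrank
      rw [Module.finrank_fin_fun, hW2] at h
      have h' : Module.finrank K ((Fin 3 → K) ⧸ W) + 2 = 3 := h
      omega
    obtain ⟨eqv⟩ := FiniteDimensional.nonempty_linearEquiv_of_finrank_eq
      (by rw [hq1, Module.finrank_self] : Module.finrank K ((Fin 3 → K) ⧸ W) = Module.finrank K K)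
    set φ : (Fin 3 → K) →ₗ[K] K := eqv.toLinearMap.comp W.mkQ with hφ
    have hWiff : ∀ x : Fin 3 → K, x ∈ W ↔ φ x = 0 := by
      intro x
      rw [hφ]
      simp only [LinearMap.comp_apply, LinearEquiv.coe_coe]
      rw [LinearEquiv.map_eq_zero_iff, Submodule.mkQ_apply, Submodule.Quotient.mk_eq_zero]
    -- coefficients of the line
    set u : K := φ (fun j => if 0 = j then 1 else 0) with hu
    set v : K := φ (fun j => if 1 = j then 1 else 0) with hv
    set w : K := φ (fun j => if 2 = j then 1 else 0) with hw
    have hφval : ∀ s : K × K, φ ![s.1, s.2, 1] = u * s.1 + v * s.2 + w := by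
      intro s
      rw [φ.pi_apply_eq_sum_univ, Fin.sum_univ_three]
      simp only [Matrix.cons_val_zero, Matrix.cons_val_one, Matrix.head_cons,
        Matrix.cons_val_two, Matrix.tail_cons, smul_eq_mul, ← hu, ← hv, ← hw]
      ring
    have huvw : ¬(u = 0 ∧ v = 0 ∧ w = 0) := by
      rintro ⟨hu0, hv0, hw0⟩
      have hφ0 : ∀ x : Fin 3 → K, φ x = 0 := by
        intro x
        rw [φ.pi_apply_eq_sum_univ, Fin.sum_univ_three]
        rw [← hu, ← hv, ← hw, hu0, hv0, hw0]
        simp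
      have hWtop : W = ⊤ := by
        rw [Submodule.eq_top_iff']
        intro x
        rw [hWiff]
        exact hφ0 x
      rw [hWtop, finrank_top, Module.finrank_fin_fun] at hW2
      omega
    -- identify the intersection with the image of the affine set
    have hinter : {p | p ∈ A ∧ Projectivization.submodule p ≤ W}
        = e '' {s : K × K | s.1 ^ 2 + b * s.1 * s.2 + s.2 ^ 2 ∈ H ∧ u * s.1 + v * s.2 + w = 0} := by
      ext p
      constructor
      · rintro ⟨⟨s, hs, rfl⟩, hpW⟩
        refine ⟨s, ⟨hs, ?_⟩, rfl⟩
        rw [he] at hpW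
        simp only at hpW
        rw [Projectivization.submodule_mk, Submodule.span_singleton_le_iff_mem, hWiff,
          hφval] at hpW
        exact hpW
      · rintro ⟨s, ⟨hs1, hs2⟩, rfl⟩
        refine ⟨⟨s, hs1, rfl⟩, ?_⟩
        rw [he]
        simp only
        rw [Projectivization.submodule_mk, Submodule.span_singleton_le_iff_mem, hWiff, hφval]
        exact hs2
    have hres := line_count hb hbc hc h0H haddH u v w huvw
    rw [hHcard] at hres
    rw [show {p | p ∈ A ∧ Projectivization.submodule p ≤ W}
        = {p ∈ A | Projectivization.submodule p ≤ W} from rfl] at hinter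
    rw [hinter, Set.ncard_image_of_injective _ heinj]
    exact hres
end
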